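/- arXiv:1809.05739 — 8 statements merged into one kernel-verified Lean document; each statement's English description precedes it below -/
import Mathlib

section
/- Let (Ω, C) be a regular two-graph with parameters (n, a, b), with a ≥ 1. Then for every 2-element subset {α, β} of Ω: (i) twice the number of coherent 4-sets containing {α, β} equals a·b; (ii) twice the number of 4-element subsets containing {α, β} that have exactly two of their 3-element subsets in C equals 3·a·(n − a − 2); (iii) four times the number of incoherent 4-sets containing {α, β} equals (n − a − 2)·(n − 2b − 6). -/
open Finset

set_option linter.unusedSectionVars false
set_option maxHeartbeats 1600000

section TwoGraphAux
variable {Ω : Type*} [Fintype Ω] [DecidableEq Ω]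


lemma dcountA {X Y : Type*} (A : Finset X) (B : Finset Y) (R : X → Y → Prop)
    [∀ x y, Decidable (R x y)] :
    ∑ x ∈ A, (B.filter (fun y => R x y)).card = ∑ y ∈ B, (A.filter (fun x => R x y)).card := by
  simp_rw [card_filter]; exact Finset.sum_comm

lemma csupA (Q p : Finset Ω) (k : ℕ) (hpQ : p ⊆ Q) (hk : p.card ≤ k) :
    ((Q.powersetCard k).filter (fun t => p ⊆ t)).card = (Q.card - p.card).choose (k - p.card) := by
  rw [← card_sdiff_of_subset hpQ, ← card_powersetCard]
  apply card_bij' (fun t _ => t \ p) (fun s _ => s ∪ p)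
  · intro t ht
    simp only [mem_filter, mem_powersetCard] at ht ⊢
    obtain ⟨⟨htQ, htc⟩, hpt⟩ := ht
    refine ⟨sdiff_subset_sdiff htQ (le_refl p), ?_⟩
    rw [card_sdiff_of_subset hpt, htc]
  · intro s hs
    simp only [mem_filter, mem_powersetCard] at hs ⊢
    obtain ⟨hsQ, hsc⟩ := hs
    have hdisj : Disjoint s p := disjoint_of_subset_left hsQ sdiff_disjoint
    refine ⟨⟨union_subset (hsQ.trans sdiff_subset) hpQ, ?_⟩, subset_union_right⟩
    rw [card_union_of_disjoint hdisj, hsc]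
    omega
  · intro t ht
    simp only [mem_filter] at ht
    exact sdiff_union_of_subset ht.2
  · intro s hs
    simp only [mem_powersetCard] at hs
    exact union_sdiff_cancel_right (disjoint_of_subset_left hs.1 sdiff_disjoint)

lemma csup_emptyA (Q p : Finset Ω) (k : ℕ) (hk : k < p.card) :
    ((Q.powersetCard k).filter (fun t => p ⊆ t)) = ∅ := by
  rw [filter_eq_empty_iff]
  intro t ht hpt
  rw [mem_powersetCard] at ht
  have := card_le_card hpt
  omega

lemma sum_ite3A {X : Type*} (s : Finset X) (P1 P2 : X → Prop) [DecidablePred P1] [DecidablePred P2]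
    (hd : ∀ x ∈ s, P1 x → ¬ P2 x) (u v : ℕ) :
    (∑ x ∈ s, if P1 x then u else if P2 x then v else 0)
      = u * (s.filter P1).card + v * (s.filter P2).card := by
  rw [← sum_filter_add_sum_filter_not s P1]
  have h1 : (∑ x ∈ s.filter P1, if P1 x then u else if P2 x then v else 0)
      = u * (s.filter P1).card := by
    rw [sum_congr rfl (fun x hx => if_pos (mem_filter.1 hx).2), sum_const, smul_eq_mul, mul_comm]
  have h2 : (∑ x ∈ s.filter (fun x => ¬ P1 x), if P1 x then u else if P2 x then v else 0)
      = v * (s.filter P2).card := by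
    rw [sum_congr rfl (fun x hx => if_neg (mem_filter.1 hx).2), ← sum_filter, filter_filter]
    have he : s.filter (fun x => ¬ P1 x ∧ P2 x) = s.filter P2 := by
      ext x; simp only [mem_filter]
      exact ⟨fun h => ⟨h.1, h.2.2⟩, fun h => ⟨h.1, fun h1 => hd x h.1 h1 h.2, h.2⟩⟩
    rw [he, sum_const, smul_eq_mul, mul_comm]
  rw [h1, h2]

lemma inter_pair_cardA (t : Finset Ω) (α β : Ω) (hne : α ≠ β) :
    (t ∩ {α, β}).card = (if α ∈ t then 1 else 0) + (if β ∈ t then 1 else 0) := by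
  have h : t ∩ {α, β} = ({α, β} : Finset Ω).filter (· ∈ t) := by
    ext x; simp only [mem_inter, mem_filter]; tauto
  rw [h, filter_insert, filter_singleton]
  by_cases hα : α ∈ t <;> by_cases hβ : β ∈ t <;>
    simp [hα, hβ, hne]

lemma m_casesA (C : Finset (Finset Ω)) (Q : Finset Ω) (hQ4 : Q.card = 4)
    (hev : Even (((Q.powersetCard 3).filter (· ∈ C)).card)) :
    ((Q.powersetCard 3).filter (· ∈ C)).card = 0 ∨
    ((Q.powersetCard 3).filter (· ∈ C)).card = 2 ∨
    ((Q.powersetCard 3).filter (· ∈ C)).card = 4 := by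
  have hle : ((Q.powersetCard 3).filter (· ∈ C)).card ≤ 4 := by
    calc ((Q.powersetCard 3).filter (· ∈ C)).card ≤ (Q.powersetCard 3).card :=
          card_filter_le _ _
      _ = 4 := by rw [card_powersetCard, hQ4]; rfl
  obtain ⟨k, hk⟩ := hev
  omega

lemma coh_iff_m4A (C : Finset (Finset Ω)) (Q : Finset Ω) (hQ4 : Q.card = 4) :
    (∀ t ∈ Q.powersetCard 3, t ∈ C) ↔ ((Q.powersetCard 3).filter (· ∈ C)).card = 4 := by
  constructor
  · intro h
    rw [filter_true_of_mem h, card_powersetCard, hQ4]; rfl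
  · intro h t ht
    have hc : (Q.powersetCard 3).card ≤ ((Q.powersetCard 3).filter (· ∈ C)).card := by
      rw [card_powersetCard, hQ4, h]; norm_num
    have := eq_of_subset_of_card_le (filter_subset (· ∈ C) (Q.powersetCard 3)) hc
    rw [← this] at ht
    exact (mem_filter.1 ht).2

lemma incoh_iff_m0A (C : Finset (Finset Ω)) (Q : Finset Ω) :
    (∀ t ∈ Q.powersetCard 3, t ∉ C) ↔ ((Q.powersetCard 3).filter (· ∈ C)).card = 0 := by
  rw [card_eq_zero, filter_eq_empty_iff]

lemma count_TA (p : Finset Ω) (hp : p.card = 2) :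
    (Fintype.card Ω - 2) * (Fintype.card Ω - 3)
      = 2 * (((univ : Finset Ω).powersetCard 4).filter (fun Q => p ⊆ Q)).card := by
  have h := dcountA (univ \ p) ((univ : Finset Ω).powersetCard 4) (fun x Q => p ⊆ Q ∧ x ∈ Q)
  have hL : ∀ x ∈ univ \ p,
      ((((univ : Finset Ω).powersetCard 4)).filter (fun Q => p ⊆ Q ∧ x ∈ Q)).card
        = Fintype.card Ω - 3 := by
    intro x hx
    have hxp : x ∉ p := (mem_sdiff.1 hx).2
    have hins : (insert x p).card = 3 := by rw [card_insert_of_notMem hxp, hp]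
    have heq : (((univ : Finset Ω).powersetCard 4)).filter (fun Q => p ⊆ Q ∧ x ∈ Q)
        = (((univ : Finset Ω).powersetCard 4)).filter (fun Q => insert x p ⊆ Q) := by
      ext Q; simp only [mem_filter, insert_subset_iff]; tauto
    rw [heq, csupA _ _ _ (subset_univ _) (by omega), hins, card_univ, Nat.choose_one_right]
  have hR : ∀ Q ∈ (univ : Finset Ω).powersetCard 4,
      ((univ \ p).filter (fun x => p ⊆ Q ∧ x ∈ Q)).card = if p ⊆ Q then 2 else 0 := by
    intro Q hQ
    have hQ4 : Q.card = 4 := (mem_powersetCard.1 hQ).2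
    by_cases hpQ : p ⊆ Q
    · rw [if_pos hpQ]
      have he : (univ \ p).filter (fun x => p ⊆ Q ∧ x ∈ Q) = Q \ p := by
        ext x; simp only [mem_filter, mem_sdiff, mem_univ, true_and]; tauto
      rw [he, card_sdiff_of_subset hpQ, hQ4, hp]
    · rw [if_neg hpQ, card_eq_zero, filter_eq_empty_iff]
      intro x _ hx
      exact hpQ hx.1
  rw [sum_congr rfl hL, sum_const, card_sdiff_of_subset (subset_univ p), hp, card_univ, smul_eq_mul,
    sum_congr rfl hR, ← sum_filter, sum_const, smul_eq_mul, mul_comm] at h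
  linarith [h]

lemma count_cohA (C : Finset (Finset Ω)) (a b : ℕ)
    (hC3 : ∀ c ∈ C, c.card = 3)
    (ha : ∀ p : Finset Ω, p.card = 2 → (C.filter fun c => p ⊆ c).card = a)
    (hb : ∀ c ∈ C, (((univ : Finset Ω).powersetCard 4).filter
      (fun Q => c ⊆ Q ∧ ∀ t ∈ Q.powersetCard 3, t ∈ C)).card = b)
    (p : Finset Ω) (hp : p.card = 2) :
    a * b = 2 * (((univ : Finset Ω).powersetCard 4).filter
      (fun Q => p ⊆ Q ∧ ∀ t ∈ Q.powersetCard 3, t ∈ C)).card := by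
  have h := dcountA (C.filter (fun c => p ⊆ c)) ((univ : Finset Ω).powersetCard 4)
      (fun t Q => t ⊆ Q ∧ ∀ t' ∈ Q.powersetCard 3, t' ∈ C)
  have hL : ∀ t ∈ C.filter (fun c => p ⊆ c),
      (((univ : Finset Ω).powersetCard 4).filter
        (fun Q => t ⊆ Q ∧ ∀ t' ∈ Q.powersetCard 3, t' ∈ C)).card = b :=
    fun t ht => hb t (mem_filter.1 ht).1
  have hR : ∀ Q ∈ (univ : Finset Ω).powersetCard 4,
      ((C.filter (fun c => p ⊆ c)).filter
        (fun t => t ⊆ Q ∧ ∀ t' ∈ Q.powersetCard 3, t' ∈ C)).card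
      = if p ⊆ Q ∧ ∀ t' ∈ Q.powersetCard 3, t' ∈ C then 2 else 0 := by
    intro Q hQ
    have hQ4 : Q.card = 4 := (mem_powersetCard.1 hQ).2
    by_cases hcond : p ⊆ Q ∧ ∀ t' ∈ Q.powersetCard 3, t' ∈ C
    · rw [if_pos hcond]
      have heq : (C.filter (fun c => p ⊆ c)).filter
          (fun t => t ⊆ Q ∧ ∀ t' ∈ Q.powersetCard 3, t' ∈ C)
          = (Q.powersetCard 3).filter (fun t => p ⊆ t) := by
        ext t
        simp only [mem_filter, mem_powersetCard]
        constructor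
        · rintro ⟨⟨htC, hpt⟩, htQ, -⟩
          exact ⟨⟨htQ, hC3 t htC⟩, hpt⟩
        · rintro ⟨⟨htQ, ht3⟩, hpt⟩
          exact ⟨⟨hcond.2 t (mem_powersetCard.2 ⟨htQ, ht3⟩), hpt⟩, htQ,
            fun t' ht' => hcond.2 t' (mem_powersetCard.2 ht')⟩
      rw [heq, csupA _ _ _ hcond.1 (by omega), hQ4, hp]
      decide
    · rw [if_neg hcond, card_eq_zero, filter_eq_empty_iff]
      rintro t ht ⟨htQ, hcoh⟩
      exact hcond ⟨((mem_filter.1 ht).2).trans htQ, hcoh⟩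
  rw [sum_congr rfl hL, sum_const, ha p hp, smul_eq_mul,
    sum_congr rfl hR, ← sum_filter, sum_const, smul_eq_mul, mul_comm] at h
  linarith [h]

lemma sum_mA (C : Finset (Finset Ω)) (hC3 : ∀ c ∈ C, c.card = 3) (s : Finset Ω) :
    ∑ t ∈ C, (((univ : Finset Ω).powersetCard 4).filter (fun Q => t ⊆ Q ∧ s ⊆ Q)).card
      = ∑ Q ∈ ((univ : Finset Ω).powersetCard 4).filter (fun Q => s ⊆ Q),
          ((Q.powersetCard 3).filter (· ∈ C)).card := by
  rw [dcountA, sum_filter]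
  apply sum_congr rfl
  intro Q hQ
  by_cases hsQ : s ⊆ Q
  · rw [if_pos hsQ]
    congr 1
    ext t
    simp only [mem_filter, mem_powersetCard]
    constructor
    · rintro ⟨htC, htQ, -⟩
      exact ⟨⟨htQ, hC3 t htC⟩, htC⟩
    · rintro ⟨⟨htQ, -⟩, htC⟩
      exact ⟨htC, htQ, hsQ⟩
  · rw [if_neg hsQ, card_eq_zero, filter_eq_empty_iff]
    rintro t - ⟨-, h⟩
    exact hsQ h

lemma val_tA (t pq : Finset Ω) (ht3 : t.card = 3) (hp : pq.card = 2) :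
    (((univ : Finset Ω).powersetCard 4).filter (fun Q => t ⊆ Q ∧ pq ⊆ Q)).card
      = if pq ⊆ t then Fintype.card Ω - 3 else if (t ∩ pq).card = 1 then 1 else 0 := by
  have hfe : ((univ : Finset Ω).powersetCard 4).filter (fun Q => t ⊆ Q ∧ pq ⊆ Q)
      = ((univ : Finset Ω).powersetCard 4).filter (fun Q => t ∪ pq ⊆ Q) := by
    ext Q; simp only [mem_filter, union_subset_iff]
  rw [hfe]
  have hcu : (t ∪ pq).card + (t ∩ pq).card = 5 := by
    rw [card_union_add_card_inter, ht3, hp]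
  by_cases h2 : pq ⊆ t
  · rw [if_pos h2, union_eq_left.2 h2, csupA _ _ _ (subset_univ _) (by omega), ht3, card_univ,
      Nat.choose_one_right]
  · rw [if_neg h2]
    have hile : (t ∩ pq).card ≤ 2 := hp ▸ card_le_card inter_subset_right
    have hne2 : (t ∩ pq).card ≠ 2 := by
      intro hc
      have heq : t ∩ pq = pq := eq_of_subset_of_card_le inter_subset_right (by omega)
      exact h2 (by rw [← heq]; exact inter_subset_left)
    by_cases h1 : (t ∩ pq).card = 1
    · rw [if_pos h1]
      have hc4 : (t ∪ pq).card = 4 := by omega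
      rw [csupA _ _ _ (subset_univ _) (by omega), hc4, card_univ]
      simp
    · rw [if_neg h1, card_eq_zero]
      exact csup_emptyA _ _ _ (by omega)

lemma val_t3A (t t0 : Finset Ω) (ht3 : t.card = 3) (h03 : t0.card = 3) :
    (((univ : Finset Ω).powersetCard 4).filter (fun Q => t ⊆ Q ∧ t0 ⊆ Q)).card
      = if t = t0 then Fintype.card Ω - 3 else if (t ∩ t0).card = 2 then 1 else 0 := by
  have hfe : ((univ : Finset Ω).powersetCard 4).filter (fun Q => t ⊆ Q ∧ t0 ⊆ Q)
      = ((univ : Finset Ω).powersetCard 4).filter (fun Q => t ∪ t0 ⊆ Q) := by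
    ext Q; simp only [mem_filter, union_subset_iff]
  rw [hfe]
  have hcu : (t ∪ t0).card + (t ∩ t0).card = 6 := by
    rw [card_union_add_card_inter, ht3, h03]
  by_cases h2 : t = t0
  · rw [if_pos h2, h2, union_self, csupA _ _ _ (subset_univ _) (by omega), h03, card_univ,
      Nat.choose_one_right]
  · rw [if_neg h2]
    have hile : (t ∩ t0).card ≤ 3 := ht3 ▸ card_le_card inter_subset_left
    have hne3 : (t ∩ t0).card ≠ 3 := by
      intro hc
      have heq1 : t ∩ t0 = t := eq_of_subset_of_card_le inter_subset_left (by omega)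
      have hsub : t ⊆ t0 := by rw [← heq1]; exact inter_subset_right
      exact h2 (eq_of_subset_of_card_le hsub (by omega))
    by_cases h1 : (t ∩ t0).card = 2
    · rw [if_pos h1]
      have hc4 : (t ∪ t0).card = 4 := by omega
      rw [csupA _ _ _ (subset_univ _) (by omega), hc4, card_univ]
      simp
    · rw [if_neg h1, card_eq_zero]
      exact csup_emptyA _ _ _ (by omega)

lemma count_KA (C : Finset (Finset Ω)) (a : ℕ)
    (hC3 : ∀ c ∈ C, c.card = 3)
    (ha : ∀ p : Finset Ω, p.card = 2 → (C.filter fun c => p ⊆ c).card = a)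
    (t0 : Finset Ω) (ht0 : t0 ∈ C) :
    3 * a = 3 + (C.filter (fun t => (t ∩ t0).card = 2)).card := by
  have h03 : t0.card = 3 := hC3 t0 ht0
  have h := dcountA (t0.powersetCard 2) C (fun q t => q ⊆ t)
  have hL : ∀ q ∈ t0.powersetCard 2, (C.filter (fun t => q ⊆ t)).card = a := by
    intro q hq
    exact ha q (mem_powersetCard.1 hq).2
  have hR : ∀ t ∈ C, ((t0.powersetCard 2).filter (fun q => q ⊆ t)).card
      = if t = t0 then 3 else if (t ∩ t0).card = 2 then 1 else 0 := by
    intro t htC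
    have ht3 : t.card = 3 := hC3 t htC
    have heq : (t0.powersetCard 2).filter (fun q => q ⊆ t) = (t0 ∩ t).powersetCard 2 := by
      ext q
      simp only [mem_filter, mem_powersetCard, subset_inter_iff]
      tauto
    rw [heq, card_powersetCard]
    have hile : (t ∩ t0).card ≤ 3 := ht3 ▸ card_le_card inter_subset_left
    rw [inter_comm]
    by_cases h2 : t = t0
    · rw [if_pos h2, h2, inter_self, h03]
      decide
    · rw [if_neg h2]
      have hne3 : (t ∩ t0).card ≠ 3 := by
        intro hc
        have heq1 : t ∩ t0 = t := eq_of_subset_of_card_le inter_subset_left (by omega)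
        have hsub : t ⊆ t0 := by rw [← heq1]; exact inter_subset_right
        exact h2 (eq_of_subset_of_card_le hsub (by omega))
      by_cases h1 : (t ∩ t0).card = 2
      · rw [if_pos h1, h1]
        decide
      · rw [if_neg h1]
        have : (t ∩ t0).card ≤ 1 := by omega
        interval_cases hc : (t ∩ t0).card <;> simp [hc]
  have hcard2 : (t0.powersetCard 2).card = 3 := by
    rw [card_powersetCard, h03]
    decide
  have hdisj : ∀ t ∈ C, t = t0 → ¬ (t ∩ t0).card = 2 := by
    intro t _ h2 hc
    rw [h2, inter_self, h03] at hc
    omega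
  rw [sum_congr rfl hL, sum_const, hcard2, smul_eq_mul,
    sum_congr rfl hR, sum_ite3A C _ _ hdisj 3 1] at h
  have hft0 : C.filter (fun t => t = t0) = {t0} := by
    rw [filter_eq', if_pos ht0]
  rw [hft0, card_singleton] at h
  omega

lemma count_gammaA (C : Finset (Finset Ω)) (a : ℕ)
    (ha : ∀ p : Finset Ω, p.card = 2 → (C.filter fun c => p ⊆ c).card = a)
    (hC3 : ∀ c ∈ C, c.card = 3)
    (α β : Ω) (hne : α ≠ β) (γ : Ω) (hγ : γ ∈ ({α, β} : Finset Ω)) :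
    (Fintype.card Ω - 2) * a
      = 2 * (C.filter (fun t => γ ∈ t ∧ (t ∩ {α, β}).card = 1)).card + a := by
  have hp2 : ({α, β} : Finset Ω).card = 2 := by
    rw [card_insert_of_notMem (by simp [hne]), card_singleton]
  have h := dcountA (univ \ ({α, β} : Finset Ω)) C (fun x t => γ ∈ t ∧ x ∈ t)
  have hL : ∀ x ∈ univ \ ({α, β} : Finset Ω),
      (C.filter (fun t => γ ∈ t ∧ x ∈ t)).card = a := by
    intro x hx
    have hxp : x ∉ ({α, β} : Finset Ω) := (mem_sdiff.1 hx).2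
    have hgx : γ ≠ x := fun h => hxp (h ▸ hγ)
    have heq : C.filter (fun t => γ ∈ t ∧ x ∈ t) = C.filter (fun t => ({γ, x} : Finset Ω) ⊆ t) := by
      ext t; simp only [mem_filter, insert_subset_iff, singleton_subset_iff]
    rw [heq]
    exact ha _ (by rw [card_insert_of_notMem (by simp [hgx]), card_singleton])
  have hR : ∀ t ∈ C, ((univ \ ({α, β} : Finset Ω)).filter (fun x => γ ∈ t ∧ x ∈ t)).card
      = if γ ∈ t ∧ (t ∩ {α, β}).card = 1 then 2
        else if γ ∈ t ∧ (t ∩ {α, β}).card = 2 then 1 else 0 := by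
    intro t htC
    have ht3 : t.card = 3 := hC3 t htC
    by_cases hγt : γ ∈ t
    · have heq : (univ \ ({α, β} : Finset Ω)).filter (fun x => γ ∈ t ∧ x ∈ t)
          = t \ ({α, β} : Finset Ω) := by
        ext x
        simp only [mem_filter, mem_sdiff, mem_univ, true_and]
        tauto
      have hcs : (t \ ({α, β} : Finset Ω)).card + (t ∩ ({α, β} : Finset Ω)).card = 3 := by
        rw [card_sdiff_add_card_inter, ht3]
      have hge1 : 1 ≤ (t ∩ ({α, β} : Finset Ω)).card :=
        card_pos.2 ⟨γ, mem_inter.2 ⟨hγt, hγ⟩⟩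
      have hle2 : (t ∩ ({α, β} : Finset Ω)).card ≤ 2 := hp2 ▸ card_le_card inter_subset_right
      rw [heq]
      rcases (by omega : (t ∩ ({α, β} : Finset Ω)).card = 1 ∨ (t ∩ ({α, β} : Finset Ω)).card = 2)
        with h1 | h1
      · rw [if_pos ⟨hγt, h1⟩]
        omega
      · rw [if_neg (by simp [h1]), if_pos ⟨hγt, h1⟩]
        omega
    · rw [if_neg (fun hc => hγt hc.1), if_neg (fun hc => hγt hc.1), card_eq_zero,
        filter_eq_empty_iff]
      exact fun x _ hc => hγt hc.1
  have hdisj : ∀ t ∈ C, (γ ∈ t ∧ (t ∩ {α, β}).card = 1) → ¬ (γ ∈ t ∧ (t ∩ {α, β}).card = 2) := by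
    rintro t _ ⟨_, h1⟩ ⟨_, h2⟩
    omega
  rw [sum_congr rfl hL, sum_const, card_sdiff_of_subset (subset_univ _), hp2, card_univ, smul_eq_mul,
    sum_congr rfl hR, sum_ite3A C _ _ hdisj 2 1] at h
  have hP2 : C.filter (fun t => γ ∈ t ∧ (t ∩ {α, β}).card = 2)
      = C.filter (fun t => ({α, β} : Finset Ω) ⊆ t) := by
    ext t
    simp only [mem_filter]
    constructor
    · rintro ⟨htC, -, h2⟩
      have heq : t ∩ ({α, β} : Finset Ω) = ({α, β} : Finset Ω) :=
        eq_of_subset_of_card_le inter_subset_right (by omega)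
      exact ⟨htC, by rw [← heq]; exact inter_subset_left⟩
    · rintro ⟨htC, hsub⟩
      refine ⟨htC, hsub hγ, ?_⟩
      rw [inter_eq_right.2 hsub, hp2]
  rw [hP2, ha _ hp2] at h
  omega

lemma n1_splitA (C : Finset (Finset Ω)) (α β : Ω) (hne : α ≠ β) :
    (C.filter (fun t => (t ∩ {α, β}).card = 1)).card
      = (C.filter (fun t => α ∈ t ∧ (t ∩ {α, β}).card = 1)).card
        + (C.filter (fun t => β ∈ t ∧ (t ∩ {α, β}).card = 1)).card := by
  have h := card_filter_add_card_filter_not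
    (s := C.filter (fun t => (t ∩ {α, β}).card = 1)) (p := fun t => α ∈ t)
  rw [filter_filter, filter_filter] at h
  have h1 : C.filter (fun t => (t ∩ {α, β}).card = 1 ∧ α ∈ t)
      = C.filter (fun t => α ∈ t ∧ (t ∩ {α, β}).card = 1) := by
    ext t; simp only [mem_filter]; tauto
  have h2 : C.filter (fun t => (t ∩ {α, β}).card = 1 ∧ ¬ α ∈ t)
      = C.filter (fun t => β ∈ t ∧ (t ∩ {α, β}).card = 1) := by
    ext t
    simp only [mem_filter]
    have hic := inter_pair_cardA t α β hne
    constructor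
    · rintro ⟨htC, h1c, hna⟩
      refine ⟨htC, ?_, h1c⟩
      by_contra hnb
      rw [if_neg hna, if_neg hnb] at hic
      omega
    · rintro ⟨htC, hb, h1c⟩
      refine ⟨htC, h1c, ?_⟩
      intro hae
      rw [if_pos hae, if_pos hb] at hic
      omega
  rw [h1, h2] at h
  omega

end TwoGraphAux

/-- **Proposition 4.1 (Gillespie).** In a regular two-graph with parameters `(n, a, b)`,
every pair of points lies in exactly `ab/2` coherent 4-sets, in exactly `3a(n-a-2)/2`
4-sets having exactly two 3-subsets in `C`, and in exactly `(n-a-2)(n-2b-6)/4`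
incoherent 4-sets. -/
theorem stmt_3 {Ω : Type*} [Fintype Ω] [DecidableEq Ω]
    (C : Finset (Finset Ω)) (n a b : ℕ) (ha1 : 1 ≤ a)
    (hC3 : ∀ c ∈ C, c.card = 3)
    (heven : ∀ Q : Finset Ω, Q.card = 4 →
      Even (((Q.powersetCard 3).filter (· ∈ C)).card))
    (hn : Fintype.card Ω = n)
    (ha : ∀ p : Finset Ω, p.card = 2 → (C.filter fun c => p ⊆ c).card = a)
    (hb : ∀ c ∈ C, (((univ : Finset Ω).powersetCard 4).filter
      (fun Q => c ⊆ Q ∧ ∀ t ∈ Q.powersetCard 3, t ∈ C)).card = b) :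
    ∀ α β : Ω, α ≠ β →
      (2 * ((((univ : Finset Ω).powersetCard 4).filter
          (fun Q => {α, β} ⊆ Q ∧ ∀ t ∈ Q.powersetCard 3, t ∈ C)).card : ℤ)
        = a * b) ∧
      (2 * ((((univ : Finset Ω).powersetCard 4).filter
          (fun Q => {α, β} ⊆ Q ∧ ((Q.powersetCard 3).filter (· ∈ C)).card = 2)).card : ℤ)
        = 3 * a * ((n : ℤ) - a - 2)) ∧
      (4 * ((((univ : Finset Ω).powersetCard 4).filter
          (fun Q => {α, β} ⊆ Q ∧ ∀ t ∈ Q.powersetCard 3, t ∉ C)).card : ℤ)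
        = ((n : ℤ) - a - 2) * ((n : ℤ) - 2 * b - 6)) := by
  subst hn
  intro α β hne
  have hp2 : ({α, β} : Finset Ω).card = 2 := by
    rw [card_insert_of_notMem (by simp [hne]), card_singleton]
  -- a triple t0 through the pair
  have hCpne : (C.filter fun c => ({α, β} : Finset Ω) ⊆ c).Nonempty := by
    rw [← card_pos, ha {α, β} hp2]; omega
  obtain ⟨t0, ht0m⟩ := hCpne
  have ht0C : t0 ∈ C := (mem_filter.1 ht0m).1
  have h03 : t0.card = 3 := hC3 t0 ht0C
  have hn3 : 3 ≤ Fintype.card Ω := by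
    have := card_le_univ t0
    omega
  have hn2 : 2 ≤ Fintype.card Ω := by omega
  -- abbreviations
  have hQ4S : ∀ Q ∈ ((univ : Finset Ω).powersetCard 4), Q.card = 4 :=
    fun Q hQ => (mem_powersetCard.1 hQ).2
  -- A2
  have hA2 := count_TA (Ω := Ω) {α, β} hp2
  -- A3
  have hA3 := count_cohA C a b hC3 ha hb {α, β} hp2
  -- A4
  have hd4 : ∀ t ∈ C, ({α, β} : Finset Ω) ⊆ t → ¬ (t ∩ {α, β}).card = 1 := by
    intro t _ hsub hc
    rw [inter_eq_right.2 hsub, hp2] at hc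
    omega
  have hLHS4 : ∑ t ∈ C, (((univ : Finset Ω).powersetCard 4).filter
        (fun Q => t ⊆ Q ∧ ({α, β} : Finset Ω) ⊆ Q)).card
      = (Fintype.card Ω - 3) * a
        + 1 * (C.filter (fun t => (t ∩ {α, β}).card = 1)).card := by
    rw [sum_congr rfl (fun t ht => val_tA t {α, β} (hC3 t ht) hp2),
      sum_ite3A C _ _ hd4 (Fintype.card Ω - 3) 1, ha _ hp2]
  have hmval : ∀ Q ∈ ((univ : Finset Ω).powersetCard 4).filter
        (fun Q => ({α, β} : Finset Ω) ⊆ Q),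
      ((Q.powersetCard 3).filter (· ∈ C)).card
        = if (∀ t ∈ Q.powersetCard 3, t ∈ C) then 4
          else if ((Q.powersetCard 3).filter (· ∈ C)).card = 2 then 2 else 0 := by
    intro Q hQ
    have hQ4 : Q.card = 4 := hQ4S Q (mem_filter.1 hQ).1
    have hncoh : ((Q.powersetCard 3).filter (· ∈ C)).card ≠ 4 →
        ¬ (∀ t ∈ Q.powersetCard 3, t ∈ C) := by
      intro hm hcoh
      exact hm ((coh_iff_m4A C Q hQ4).1 hcoh)
    rcases m_casesA C Q hQ4 (heven Q hQ4) with h0 | h0 | h0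
    · rw [if_neg (hncoh (by omega)), if_neg (by omega)]
      exact h0
    · rw [if_neg (hncoh (by omega)), if_pos h0]
      exact h0
    · rw [if_pos ((coh_iff_m4A C Q hQ4).2 h0)]
      exact h0
  have hd4' : ∀ Q ∈ ((univ : Finset Ω).powersetCard 4).filter
        (fun Q => ({α, β} : Finset Ω) ⊆ Q),
      (∀ t ∈ Q.powersetCard 3, t ∈ C) → ¬ ((Q.powersetCard 3).filter (· ∈ C)).card = 2 := by
    intro Q hQ hcoh
    have hQ4 : Q.card = 4 := hQ4S Q (mem_filter.1 hQ).1
    have := (coh_iff_m4A C Q hQ4).1 hcoh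
    omega
  have hRHS4 : ∑ Q ∈ ((univ : Finset Ω).powersetCard 4).filter
        (fun Q => ({α, β} : Finset Ω) ⊆ Q), ((Q.powersetCard 3).filter (· ∈ C)).card
      = 4 * ((((univ : Finset Ω).powersetCard 4).filter
          (fun Q => ({α, β} : Finset Ω) ⊆ Q ∧ ∀ t ∈ Q.powersetCard 3, t ∈ C)).card)
        + 2 * ((((univ : Finset Ω).powersetCard 4).filter
          (fun Q => ({α, β} : Finset Ω) ⊆ Q ∧
            ((Q.powersetCard 3).filter (· ∈ C)).card = 2)).card) := by
    rw [sum_congr rfl hmval, sum_ite3A _ _ _ hd4' 4 2, filter_filter, filter_filter]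
  have hA4 : (Fintype.card Ω - 3) * a
        + 1 * (C.filter (fun t => (t ∩ {α, β}).card = 1)).card
      = 4 * ((((univ : Finset Ω).powersetCard 4).filter
          (fun Q => ({α, β} : Finset Ω) ⊆ Q ∧ ∀ t ∈ Q.powersetCard 3, t ∈ C)).card)
        + 2 * ((((univ : Finset Ω).powersetCard 4).filter
          (fun Q => ({α, β} : Finset Ω) ⊆ Q ∧
            ((Q.powersetCard 3).filter (· ∈ C)).card = 2)).card) := by
    rw [← hLHS4, sum_mA C hC3 {α, β}, hRHS4]
  -- A1 : partition of S
  have hsp1 := card_filter_add_card_filter_not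
    (s := ((univ : Finset Ω).powersetCard 4).filter (fun Q => ({α, β} : Finset Ω) ⊆ Q))
    (p := fun Q => ∀ t ∈ Q.powersetCard 3, t ∈ C)
  have hsp2 := card_filter_add_card_filter_not
    (s := (((univ : Finset Ω).powersetCard 4).filter
      (fun Q => ({α, β} : Finset Ω) ⊆ Q)).filter (fun Q => ¬ ∀ t ∈ Q.powersetCard 3, t ∈ C))
    (p := fun Q => ((Q.powersetCard 3).filter (· ∈ C)).card = 2)
  have hYeq : ((((univ : Finset Ω).powersetCard 4).filter
        (fun Q => ({α, β} : Finset Ω) ⊆ Q)).filter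
        (fun Q => ¬ ∀ t ∈ Q.powersetCard 3, t ∈ C)).filter
        (fun Q => ((Q.powersetCard 3).filter (· ∈ C)).card = 2)
      = ((univ : Finset Ω).powersetCard 4).filter
          (fun Q => ({α, β} : Finset Ω) ⊆ Q ∧
            ((Q.powersetCard 3).filter (· ∈ C)).card = 2) := by
    ext Q
    simp only [mem_filter]
    constructor
    · rintro ⟨⟨⟨hQ, hs⟩, -⟩, h2⟩
      exact ⟨hQ, hs, h2⟩
    · rintro ⟨hQ, hs, h2⟩
      refine ⟨⟨⟨hQ, hs⟩, ?_⟩, h2⟩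

      intro hcoh
      have := (coh_iff_m4A C Q (hQ4S Q hQ)).1 hcoh
      omega
  have hZeq : ((((univ : Finset Ω).powersetCard 4).filter
        (fun Q => ({α, β} : Finset Ω) ⊆ Q)).filter
        (fun Q => ¬ ∀ t ∈ Q.powersetCard 3, t ∈ C)).filter
        (fun Q => ¬ ((Q.powersetCard 3).filter (· ∈ C)).card = 2)
      = ((univ : Finset Ω).powersetCard 4).filter
          (fun Q => ({α, β} : Finset Ω) ⊆ Q ∧ ∀ t ∈ Q.powersetCard 3, t ∉ C) := by
    ext Q
    simp only [mem_filter]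
    constructor
    · rintro ⟨⟨⟨hQ, hs⟩, hncoh⟩, hn2c⟩
      refine ⟨hQ, hs, ?_⟩
      rcases m_casesA C Q (hQ4S Q hQ) (heven Q (hQ4S Q hQ)) with h0 | h0 | h0
      · exact (incoh_iff_m0A C Q).2 h0
      · exact absurd h0 hn2c
      · exact absurd ((coh_iff_m4A C Q (hQ4S Q hQ)).2 h0) hncoh
    · rintro ⟨hQ, hs, hinc⟩
      have h0 := (incoh_iff_m0A C Q).1 hinc
      refine ⟨⟨⟨hQ, hs⟩, ?_⟩, by omega⟩
      intro hcoh
      have := (coh_iff_m4A C Q (hQ4S Q hQ)).1 hcoh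
      omega
  have hXeq : (((univ : Finset Ω).powersetCard 4).filter
        (fun Q => ({α, β} : Finset Ω) ⊆ Q)).filter
        (fun Q => ∀ t ∈ Q.powersetCard 3, t ∈ C)
      = ((univ : Finset Ω).powersetCard 4).filter
          (fun Q => ({α, β} : Finset Ω) ⊆ Q ∧ ∀ t ∈ Q.powersetCard 3, t ∈ C) :=
    filter_filter _ _ _
  rw [hYeq, hZeq] at hsp2
  rw [hXeq] at hsp1
  -- A8, A9
  have hA8 := count_KA C a hC3 ha t0 ht0C
  have hd9 : ∀ t ∈ C, t = t0 → ¬ (t ∩ t0).card = 2 := by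
    rintro t _ rfl hc
    rw [inter_self] at hc
    omega
  have hLHS9 : ∑ t ∈ C, (((univ : Finset Ω).powersetCard 4).filter
        (fun Q => t ⊆ Q ∧ t0 ⊆ Q)).card
      = (Fintype.card Ω - 3) * 1 + 1 * (C.filter (fun t => (t ∩ t0).card = 2)).card := by
    rw [sum_congr rfl (fun t ht => val_t3A t t0 (hC3 t ht) h03),
      sum_ite3A C _ _ hd9 (Fintype.card Ω - 3) 1]
    congr 2
    rw [filter_eq', if_pos ht0C, card_singleton]
  have hmval9 : ∀ Q ∈ ((univ : Finset Ω).powersetCard 4).filter (fun Q => t0 ⊆ Q),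
      ((Q.powersetCard 3).filter (· ∈ C)).card
        = 2 + if (∀ t ∈ Q.powersetCard 3, t ∈ C) then 2 else 0 := by
    intro Q hQ
    have hQ4 : Q.card = 4 := hQ4S Q (mem_filter.1 hQ).1
    have ht0Q : t0 ⊆ Q := (mem_filter.1 hQ).2
    have hpos : 0 < ((Q.powersetCard 3).filter (· ∈ C)).card :=
      card_pos.2 ⟨t0, mem_filter.2 ⟨mem_powersetCard.2 ⟨ht0Q, h03⟩, ht0C⟩⟩
    rcases m_casesA C Q hQ4 (heven Q hQ4) with h0 | h0 | h0
    · omega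
    · rw [if_neg (fun hcoh => by
        have := (coh_iff_m4A C Q hQ4).1 hcoh
        omega), h0]
    · rw [if_pos ((coh_iff_m4A C Q hQ4).2 h0), h0]
  have hS3card : (((univ : Finset Ω).powersetCard 4).filter (fun Q => t0 ⊆ Q)).card
      = Fintype.card Ω - 3 := by
    rw [csupA _ _ _ (subset_univ _) (by omega), h03, card_univ, Nat.choose_one_right]
  have hRHS9 : ∑ Q ∈ ((univ : Finset Ω).powersetCard 4).filter (fun Q => t0 ⊆ Q),
        ((Q.powersetCard 3).filter (· ∈ C)).card
      = 2 * (Fintype.card Ω - 3) + 2 * b := by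
    rw [sum_congr rfl hmval9, sum_add_distrib, sum_const, smul_eq_mul, ← sum_filter,
      sum_const, smul_eq_mul, hS3card, filter_filter]
    rw [hb t0 ht0C, mul_comm (Fintype.card Ω - 3) 2, mul_comm b 2]
  have hA9 : (Fintype.card Ω - 3) * 1 + 1 * (C.filter (fun t => (t ∩ t0).card = 2)).card
      = 2 * (Fintype.card Ω - 3) + 2 * b := by
    rw [← hLHS9, sum_mA C hC3 t0, hRHS9]
  -- gamma counts
  have hAα := count_gammaA C a ha hC3 α β hne α (mem_insert_self α {β})
  have hAβ := count_gammaA C a ha hC3 α β hne β (by simp)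
  have hA7 := n1_splitA C α β hne
  -- abstract all cardinalities, then pass to ℤ
  set nn := Fintype.card Ω with hnn
  set xc := ((((univ : Finset Ω).powersetCard 4).filter
    (fun Q => ({α, β} : Finset Ω) ⊆ Q ∧ ∀ t ∈ Q.powersetCard 3, t ∈ C)).card) with hxc
  set yc := ((((univ : Finset Ω).powersetCard 4).filter
    (fun Q => ({α, β} : Finset Ω) ⊆ Q ∧
      ((Q.powersetCard 3).filter (· ∈ C)).card = 2)).card) with hyc
  set zc := ((((univ : Finset Ω).powersetCard 4).filter
    (fun Q => ({α, β} : Finset Ω) ⊆ Q ∧ ∀ t ∈ Q.powersetCard 3, t ∉ C)).card) with hzc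
  set sc := ((((univ : Finset Ω).powersetCard 4).filter
    (fun Q => ({α, β} : Finset Ω) ⊆ Q)).card) with hsc
  set wc := (((((univ : Finset Ω).powersetCard 4).filter
    (fun Q => ({α, β} : Finset Ω) ⊆ Q)).filter
      (fun Q => ¬ ∀ t ∈ Q.powersetCard 3, t ∈ C)).card) with hwc
  set n1c := ((C.filter (fun t => (t ∩ {α, β}).card = 1)).card) with hn1c
  set c1a := ((C.filter (fun t => α ∈ t ∧ (t ∩ {α, β}).card = 1)).card) with hc1a
  set c1b := ((C.filter (fun t => β ∈ t ∧ (t ∩ {α, β}).card = 1)).card) with hc1b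
  set kc := ((C.filter (fun t => (t ∩ t0).card = 2)).card) with hkc
  zify [hn2, hn3] at hA2 hA3 hA4 hA8 hA9 hAα hAβ hA7 hsp1 hsp2
  have h3a : (nn : ℤ) + 2 * b = 3 * a := by linarith
  have hN1 : (n1c : ℤ) = (nn : ℤ) * a - 3 * a := by linarith
  have g2 : 2 * (yc : ℤ) = 3 * a * ((nn : ℤ) - a - 2) := by
    linear_combination -hA4 + hN1 + 2 * hA3 - (a : ℤ) * h3a
  refine ⟨by linear_combination -hA3, g2, ?_⟩
  linear_combination 4 * hsp1 + 4 * hsp2 - 2 * hA2 - 2 * g2 + 2 * hA3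
    + ((nn : ℤ) - 2 * a - 2) * h3a
end

section
/- Let (Ω, C) be a regular two-graph with parameters (n, a, b), with a ≥ 1, and for α, β ∈ Ω set S_{αβ} = {γ ∈ Ω : {α,β,γ} ∈ C}. Then: (i) for every 2-element subset {α, β} of Ω, twice the number of 2-element subsets {γ, δ} of Ω with α ∈ S_{γδ} and β ∈ S_{γδ} equals a(a−1) (so the sets S_{γδ} form a 2-(n, a, a(a−1)/2) design); (ii) for pairwise distinct α, β, γ ∈ Ω, if {α,β,γ} ∈ C then |S_{αβ} ∩ S_{αγ}| = b, while if no 3-element subset of {α,β,γ} is in C then 2·|S_{αβ} ∩ S_{αγ}| = a. -/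
open Finset

/-- The set `S_{xy} = {z : {x,y,z} ∈ C}` associated to a two-graph `(Ω, C)`. -/
def Sset {Ω : Type*} [Fintype Ω] [DecidableEq Ω] (C : Finset (Finset Ω)) (x y : Ω) :
    Finset Ω :=
  univ.filter fun z => ({x, y, z} : Finset Ω) ∈ C

set_option linter.unusedSectionVars false
set_option maxHeartbeats 1000000

section Helpers
variable {Ω : Type*} [Fintype Ω] [DecidableEq Ω] {C : Finset (Finset Ω)}

lemma mem_Sset {x y z : Ω} : z ∈ Sset C x y ↔ ({x, y, z} : Finset Ω) ∈ C := by
  simp [Sset]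

lemma Sset_comm (x y : Ω) : Sset C x y = Sset C y x := by
  ext z
  rw [mem_Sset, mem_Sset, show ({x,y,z} : Finset Ω) = {y,x,z} from by ext w; simp; tauto]

lemma Sset_ne (hC3 : ∀ c ∈ C, c.card = 3) {x y z : Ω} (h : z ∈ Sset C x y) :
    x ≠ y ∧ z ≠ x ∧ z ≠ y := by
  rw [mem_Sset] at h
  have h3 := hC3 _ h
  refine ⟨?_, ?_, ?_⟩ <;> rintro rfl
  · have : ({x, x, z} : Finset Ω).card ≤ 2 := by
      refine le_trans (card_le_card ?_) (card_insert_le x {z})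
      intro w hw; simp at hw ⊢; tauto
    omega
  · have : ({z, y, z} : Finset Ω).card ≤ 2 := by
      refine le_trans (card_le_card (show ({z,y,z}:Finset Ω) ⊆ {z,y} by
        intro w hw; simp at hw ⊢; tauto)) (le_trans (card_insert_le z {y}) (by simp))
    omega
  · have : ({x, z, z} : Finset Ω).card ≤ 2 := by
      refine le_trans (card_le_card (show ({x,z,z}:Finset Ω) ⊆ {x,z} by
        intro w hw; simp at hw ⊢; tauto)) (le_trans (card_insert_le x {z}) (by simp))
    omega

lemma card_triple {x y z : Ω} (h1 : x ≠ y) (h2 : x ≠ z) (h3 : y ≠ z) :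
    ({x, y, z} : Finset Ω).card = 3 := by
  rw [card_insert_of_notMem (by simp [h1, h2]),
    card_insert_of_notMem (by simp [h3]), card_singleton]

lemma card_quad {α β γ δ : Ω} (h1 : α ≠ β) (h2 : α ≠ γ) (h3 : α ≠ δ) (h4 : β ≠ γ)
    (h5 : β ≠ δ) (h6 : γ ≠ δ) : ({α, β, γ, δ} : Finset Ω).card = 4 := by
  rw [card_insert_of_notMem (by simp [h1, h2, h3]),
    card_insert_of_notMem (by simp [h4, h5]), card_insert_of_notMem (by simp [h6]),
    card_singleton]

lemma powersetCard_eq_image_erase {Q : Finset Ω} (h : Q.card = 4) :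
    Q.powersetCard 3 = Q.image Q.erase := by
  ext t
  simp only [mem_powersetCard, mem_image]
  constructor
  · rintro ⟨hsub, hcard⟩
    have h1 : (Q \ t).card = 1 := by rw [card_sdiff_of_subset hsub]; omega
    obtain ⟨x, hx⟩ := card_eq_one.mp h1
    have hxQ : x ∈ Q := by
      have : x ∈ Q \ t := hx ▸ mem_singleton_self x
      exact (mem_sdiff.mp this).1
    refine ⟨x, hxQ, ?_⟩
    apply Finset.Subset.antisymm
    · intro w hw
      rw [mem_erase] at hw
      by_contra hwt
      have : w ∈ Q \ t := mem_sdiff.mpr ⟨hw.2, hwt⟩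
      rw [hx, mem_singleton] at this
      exact hw.1 this
    · intro w hw
      rw [mem_erase]
      refine ⟨?_, hsub hw⟩
      rintro rfl
      have : w ∈ Q \ t := hx ▸ mem_singleton_self w
      exact (mem_sdiff.mp this).2 hw
  · rintro ⟨x, hx, rfl⟩
    exact ⟨erase_subset _ _, by rw [card_erase_of_mem hx, h]⟩

lemma parity4
    (heven : ∀ Q : Finset Ω, Q.card = 4 →
      Even (((Q.powersetCard 3).filter (· ∈ C)).card))
    {α β γ δ : Ω}
    (h1 : α ≠ β) (h2 : α ≠ γ) (h3 : α ≠ δ) (h4 : β ≠ γ) (h5 : β ≠ δ) (h6 : γ ≠ δ) :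
    Even ((if ({β, γ, δ} : Finset Ω) ∈ C then 1 else 0)
      + ((if ({α, γ, δ} : Finset Ω) ∈ C then 1 else 0)
      + ((if ({α, β, δ} : Finset Ω) ∈ C then 1 else 0)
      + (if ({α, β, γ} : Finset Ω) ∈ C then 1 else 0)))) := by
  have hQcard : ({α, β, γ, δ} : Finset Ω).card = 4 := card_quad h1 h2 h3 h4 h5 h6
  have hE := heven {α, β, γ, δ} hQcard
  rw [powersetCard_eq_image_erase hQcard] at hE
  set Q : Finset Ω := {α, β, γ, δ} with hQ
  have hinj : Set.InjOn Q.erase Q := by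
    intro x hx y hy hxy
    by_contra hne
    have : x ∈ Q.erase y := mem_erase.mpr ⟨hne, hx⟩
    rw [← hxy] at this
    exact (notMem_erase x Q) this
  have himg : (Q.image Q.erase).filter (· ∈ C)
      = (Q.filter (fun x => Q.erase x ∈ C)).image Q.erase := by
    rw [Finset.filter_image]
  rw [himg, card_image_of_injOn (hinj.mono (filter_subset _ _))] at hE
  rw [card_filter] at hE
  have e1 : Q.erase α = {β, γ, δ} := by
    rw [hQ]; exact erase_insert (by simp [h1, h2, h3])
  have e2 : Q.erase β = {α, γ, δ} := by
    rw [hQ, erase_insert_of_ne h1, erase_insert (by simp [h4, h5])]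
  have e3 : Q.erase γ = {α, β, δ} := by
    rw [hQ, erase_insert_of_ne h2, erase_insert_of_ne h4,
      erase_insert (by simp [h6])]
  have e4 : Q.erase δ = {α, β, γ} := by
    rw [hQ, erase_insert_of_ne h3, erase_insert_of_ne h5, erase_insert_of_ne h6]
    simp
  rw [hQ] at hE
  rw [sum_insert (by simp [h1, h2, h3]), sum_insert (by simp [h4, h5]),
    sum_insert (by simp [h6]), sum_singleton] at hE
  rw [← hQ, e1, e2, e3, e4] at hE
  exact hE

lemma card_Sset {a : ℕ} (hC3 : ∀ c ∈ C, c.card = 3)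
    (ha : ∀ p : Finset Ω, p.card = 2 → (C.filter fun c => p ⊆ c).card = a)
    {α β : Ω} (hab : α ≠ β) : (Sset C α β).card = a := by
  rw [← ha {α, β} (by rw [card_insert_of_notMem (by simp [hab]), card_singleton])]
  apply card_bij (fun z _ => ({α, β, z} : Finset Ω))
  · intro z hz
    rw [mem_filter]
    refine ⟨mem_Sset.mp hz, ?_⟩
    intro w hw; simp at hw ⊢; tauto
  · intro z1 hz1 z2 hz2 heq
    obtain ⟨-, h1, h2⟩ := Sset_ne hC3 hz1
    have : z1 ∈ ({α, β, z2} : Finset Ω) := by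
      rw [← heq]; simp
    simp at this
    tauto
  · intro c hc
    rw [mem_filter] at hc
    obtain ⟨hcC, hsub⟩ := hc
    have h3 : c.card = 3 := hC3 _ hcC
    have hp2 : ({α, β} : Finset Ω).card = 2 := by
      rw [card_insert_of_notMem (by simp [hab]), card_singleton]
    have h1 : (c \ {α, β}).card = 1 := by rw [card_sdiff_of_subset hsub, h3, hp2]
    obtain ⟨z, hz⟩ := card_eq_one.mp h1
    have hceq : ({α, β, z} : Finset Ω) = c := by
      have : ({α, β} : Finset Ω) ∪ (c \ {α, β}) = c := union_sdiff_of_subset hsub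
      rw [hz] at this
      rw [← this]
      ext w; simp; try tauto
    exact ⟨z, mem_Sset.mpr (hceq ▸ hcC), hceq⟩

end Helpers

section Main
variable {Ω : Type*} [Fintype Ω] [DecidableEq Ω] {C : Finset (Finset Ω)} {a b : ℕ}

lemma incoh (hC3 : ∀ c ∈ C, c.card = 3)
    (heven : ∀ Q : Finset Ω, Q.card = 4 →
      Even (((Q.powersetCard 3).filter (· ∈ C)).card))
    (ha : ∀ p : Finset Ω, p.card = 2 → (C.filter fun c => p ⊆ c).card = a)
    {α β γ : Ω} (hab : α ≠ β) (hac : α ≠ γ) (hbc : β ≠ γ)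
    (hnc : ({α, β, γ} : Finset Ω) ∉ C) :
    2 * (Sset C α β ∩ Sset C α γ).card = a := by
  have e1 : (Sset C α β).card = a := card_Sset hC3 ha hab
  have e2 : (Sset C α γ).card = a := card_Sset hC3 ha hac
  have e3 : (Sset C β γ).card = a := card_Sset hC3 ha hbc
  set X := Sset C α β ∩ Sset C α γ with hX
  set Y := Sset C α β ∩ Sset C β γ with hY
  set Z := Sset C α γ ∩ Sset C β γ with hZ
  have hderiv : ∀ δ : Ω, δ ∈ Sset C α β ∨ δ ∈ Sset C α γ ∨ δ ∈ Sset C β γ →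
      (δ ≠ α ∧ δ ≠ β ∧ δ ≠ γ) := by
    intro δ h
    rcases h with h|h|h
    · obtain ⟨-, h1, h2⟩ := Sset_ne hC3 h
      refine ⟨h1, h2, ?_⟩
      intro he; apply hnc
      have hm := mem_Sset.mp h
      rwa [he] at hm
    · obtain ⟨-, h1, h2⟩ := Sset_ne hC3 h
      refine ⟨h1, ?_, h2⟩
      intro he; apply hnc
      have hm := mem_Sset.mp h
      rw [he] at hm
      rwa [show ({α,γ,β}:Finset Ω) = {α,β,γ} from by ext w; simp; tauto] at hm
    · obtain ⟨-, h1, h2⟩ := Sset_ne hC3 h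
      refine ⟨?_, h1, h2⟩
      intro he; apply hnc
      have hm := mem_Sset.mp h
      rw [he] at hm
      rwa [show ({β,γ,α}:Finset Ω) = {α,β,γ} from by ext w; simp; tauto] at hm
  have parity : ∀ δ : Ω, δ ≠ α → δ ≠ β → δ ≠ γ →
      Even ((if ({β, γ, δ} : Finset Ω) ∈ C then 1 else 0)
        + ((if ({α, γ, δ} : Finset Ω) ∈ C then 1 else 0)
        + ((if ({α, β, δ} : Finset Ω) ∈ C then 1 else 0) + 0))) := by
    intro δ h1 h2 h3
    have hp := parity4 heven hab hac h1.symm hbc h2.symm h3.symm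
    rwa [if_neg hnc] at hp
  have s1 : Sset C α β = X ∪ Y := by
    ext δ
    simp only [hX, hY, mem_union, mem_inter]
    constructor
    · intro h
      obtain ⟨hda, hdb, hdc⟩ := hderiv δ (Or.inl h)
      have hp := parity δ hda hdb hdc
      rw [if_pos (mem_Sset.mp h)] at hp
      by_cases h2 : ({α, γ, δ} : Finset Ω) ∈ C
      · exact Or.inl ⟨h, mem_Sset.mpr h2⟩
      · by_cases h3 : ({β, γ, δ} : Finset Ω) ∈ C
        · exact Or.inr ⟨h, mem_Sset.mpr h3⟩
        · rw [if_neg h2, if_neg h3, Nat.even_iff] at hp; omega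
    · rintro (⟨h,-⟩|⟨h,-⟩) <;> exact h
  have d1 : Disjoint X Y := by
    rw [disjoint_left]
    intro δ hdX hdY
    simp only [hX, hY, mem_inter] at hdX hdY
    obtain ⟨hda, hdb, hdc⟩ := hderiv δ (Or.inl hdX.1)
    have hp := parity δ hda hdb hdc
    rw [if_pos (mem_Sset.mp hdX.1), if_pos (mem_Sset.mp hdX.2),
      if_pos (mem_Sset.mp hdY.2), Nat.even_iff] at hp
    omega
  have s2 : Sset C α γ = X ∪ Z := by
    ext δ
    simp only [hX, hZ, mem_union, mem_inter]
    constructor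
    · intro h
      obtain ⟨hda, hdb, hdc⟩ := hderiv δ (Or.inr (Or.inl h))
      have hp := parity δ hda hdb hdc
      rw [if_pos (mem_Sset.mp h)] at hp
      by_cases h1 : ({α, β, δ} : Finset Ω) ∈ C
      · exact Or.inl ⟨mem_Sset.mpr h1, h⟩
      · by_cases h3 : ({β, γ, δ} : Finset Ω) ∈ C
        · exact Or.inr ⟨h, mem_Sset.mpr h3⟩
        · rw [if_neg h1, if_neg h3, Nat.even_iff] at hp; omega
    · rintro (⟨-,h⟩|⟨h,-⟩) <;> exact h
  have d2 : Disjoint X Z := by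
    rw [disjoint_left]
    intro δ hdX hdZ
    simp only [hX, hZ, mem_inter] at hdX hdZ
    obtain ⟨hda, hdb, hdc⟩ := hderiv δ (Or.inl hdX.1)
    have hp := parity δ hda hdb hdc
    rw [if_pos (mem_Sset.mp hdX.1), if_pos (mem_Sset.mp hdX.2),
      if_pos (mem_Sset.mp hdZ.2), Nat.even_iff] at hp
    omega
  have s3 : Sset C β γ = Y ∪ Z := by
    ext δ
    simp only [hY, hZ, mem_union, mem_inter]
    constructor
    · intro h
      obtain ⟨hda, hdb, hdc⟩ := hderiv δ (Or.inr (Or.inr h))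
      have hp := parity δ hda hdb hdc
      rw [if_pos (mem_Sset.mp h)] at hp
      by_cases h1 : ({α, β, δ} : Finset Ω) ∈ C
      · exact Or.inl ⟨mem_Sset.mpr h1, h⟩
      · by_cases h2 : ({α, γ, δ} : Finset Ω) ∈ C
        · exact Or.inr ⟨mem_Sset.mpr h2, h⟩
        · rw [if_neg h1, if_neg h2, Nat.even_iff] at hp; omega
    · rintro (⟨-,h⟩|⟨-,h⟩) <;> exact h
  have d3 : Disjoint Y Z := by
    rw [disjoint_left]
    intro δ hdY hdZ
    simp only [hY, hZ, mem_inter] at hdY hdZ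
    obtain ⟨hda, hdb, hdc⟩ := hderiv δ (Or.inl hdY.1)
    have hp := parity δ hda hdb hdc
    rw [if_pos (mem_Sset.mp hdY.1), if_pos (mem_Sset.mp hdZ.1),
      if_pos (mem_Sset.mp hdY.2), Nat.even_iff] at hp
    omega
  have c1 : a = X.card + Y.card := by rw [← e1, s1, card_union_of_disjoint d1]
  have c2 : a = X.card + Z.card := by rw [← e2, s2, card_union_of_disjoint d2]
  have c3 : a = Y.card + Z.card := by rw [← e3, s3, card_union_of_disjoint d3]
  omega

lemma coh (hC3 : ∀ c ∈ C, c.card = 3)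
    (heven : ∀ Q : Finset Ω, Q.card = 4 →
      Even (((Q.powersetCard 3).filter (· ∈ C)).card))
    (hb : ∀ c ∈ C, (((univ : Finset Ω).powersetCard 4).filter
      (fun Q => c ⊆ Q ∧ ∀ t ∈ Q.powersetCard 3, t ∈ C)).card = b)
    {α β γ : Ω} (hab : α ≠ β) (hac : α ≠ γ) (hbc : β ≠ γ)
    (hco : ({α, β, γ} : Finset Ω) ∈ C) :
    (Sset C α β ∩ Sset C α γ).card = b := by
  rw [← hb {α, β, γ} hco]
  apply card_bij (fun δ _ => insert δ ({α, β, γ} : Finset Ω))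
  · intro δ hδ
    rw [mem_inter] at hδ
    obtain ⟨hd1, hd2⟩ := hδ
    obtain ⟨-, hda, hdb⟩ := Sset_ne hC3 hd1
    obtain ⟨-, -, hdc⟩ := Sset_ne hC3 hd2
    rw [mem_Sset] at hd1 hd2
    have hQcard : (insert δ ({α, β, γ} : Finset Ω)).card = 4 :=
      card_quad hda hdb hdc hab hac hbc
    have hbgd : ({β, γ, δ} : Finset Ω) ∈ C := by
      have hp := parity4 heven hab hac hda.symm hbc hdb.symm hdc.symm
      rw [if_pos hco, if_pos hd1, if_pos hd2] at hp
      by_contra hv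
      rw [if_neg hv, Nat.even_iff] at hp
      omega
    rw [mem_filter]
    refine ⟨mem_powersetCard.mpr ⟨subset_univ _, hQcard⟩, subset_insert _ _, ?_⟩
    intro t ht
    rw [powersetCard_eq_image_erase hQcard, mem_image] at ht
    obtain ⟨x, hx, rfl⟩ := ht
    simp only [mem_insert, mem_singleton] at hx
    rcases hx with rfl|rfl|rfl|rfl
    · rwa [erase_insert (by simp [hda, hdb, hdc])]
    · rw [erase_insert_of_ne hda,
        show ({x, β, γ} : Finset Ω).erase x = {β, γ} from
          erase_insert (by simp [hab, hac]),
        show insert δ ({β, γ} : Finset Ω) = {β, γ, δ} from by ext w; simp; tauto]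
      exact hbgd
    · rw [erase_insert_of_ne hdb,
        show ({α, x, γ} : Finset Ω).erase x = {α, γ} from by
          rw [erase_insert_of_ne hab, erase_insert (by simp [hbc])],
        show insert δ ({α, γ} : Finset Ω) = {α, γ, δ} from by ext w; simp; tauto]
      exact hd2
    · rw [erase_insert_of_ne hdc,
        show ({α, β, x} : Finset Ω).erase x = {α, β} from by
          rw [erase_insert_of_ne hac, erase_insert_of_ne hbc]; simp,
        show insert δ ({α, β} : Finset Ω) = {α, β, δ} from by ext w; simp; tauto]
      exact hd1
  · intro δ1 h1 δ2 h2 heq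
    rw [mem_inter] at h1 h2
    obtain ⟨-, h1a, h1b⟩ := Sset_ne hC3 h1.1
    obtain ⟨-, -, h1c⟩ := Sset_ne hC3 h1.2
    have : δ1 ∈ insert δ2 ({α, β, γ} : Finset Ω) := by
      rw [← heq]; exact mem_insert_self _ _
    simp only [mem_insert, mem_singleton] at this
    tauto
  · intro Q hQ
    rw [mem_filter, mem_powersetCard] at hQ
    obtain ⟨⟨-, hQ4⟩, hTQ, hall⟩ := hQ
    have hT3 : ({α, β, γ} : Finset Ω).card = 3 := card_triple hab hac hbc
    have h1 : (Q \ {α, β, γ}).card = 1 := by rw [card_sdiff_of_subset hTQ, hQ4, hT3]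
    obtain ⟨δ, hδ⟩ := card_eq_one.mp h1
    have hδQ : δ ∈ Q ∧ δ ∉ ({α, β, γ} : Finset Ω) := by
      have : δ ∈ Q \ {α, β, γ} := hδ ▸ mem_singleton_self δ
      exact mem_sdiff.mp this
    have hne : δ ≠ α ∧ δ ≠ β ∧ δ ≠ γ := by
      have := hδQ.2
      simp only [mem_insert, mem_singleton] at this
      push_neg at this
      exact this
    have hQeq : insert δ ({α, β, γ} : Finset Ω) = Q := by
      have hu : ({α, β, γ} : Finset Ω) ∪ (Q \ {α, β, γ}) = Q := union_sdiff_of_subset hTQ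
      rw [hδ] at hu
      rw [← hu]
      ext w; simp; tauto
    have hαQ : α ∈ Q := hTQ (by simp)
    have hβQ : β ∈ Q := hTQ (by simp)
    have hγQ : γ ∈ Q := hTQ (by simp)
    refine ⟨δ, ?_, hQeq⟩
    rw [mem_inter, mem_Sset, mem_Sset]
    constructor
    · apply hall
      rw [mem_powersetCard]
      refine ⟨?_, card_triple hab hne.1.symm hne.2.1.symm⟩
      intro w hw; simp at hw
      rcases hw with rfl|rfl|rfl
      exacts [hαQ, hβQ, hδQ.1]
    · apply hall
      rw [mem_powersetCard]
      refine ⟨?_, card_triple hac hne.1.symm hne.2.2.symm⟩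
      intro w hw; simp at hw
      rcases hw with rfl|rfl|rfl
      exacts [hαQ, hγQ, hδQ.1]

lemma rel (hC3 : ∀ c ∈ C, c.card = 3)
    (heven : ∀ Q : Finset Ω, Q.card = 4 →
      Even (((Q.powersetCard 3).filter (· ∈ C)).card))
    (ha1 : 1 ≤ a)
    (ha : ∀ p : Finset Ω, p.card = 2 → (C.filter fun c => p ⊆ c).card = a)
    (hb : ∀ c ∈ C, (((univ : Finset Ω).powersetCard 4).filter
      (fun Q => c ⊆ Q ∧ ∀ t ∈ Q.powersetCard 3, t ∈ C)).card = b)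
    {α β : Ω} (hab : α ≠ β) :
    Fintype.card Ω + 2 * b = 3 * a := by
  have hS : (Sset C α β).card = a := card_Sset hC3 ha hab
  obtain ⟨γ, hγ⟩ := card_pos.mp (show 0 < (Sset C α β).card by omega)
  obtain ⟨-, hga, hgb⟩ := Sset_ne hC3 hγ
  have hac : α ≠ γ := hga.symm
  have hbc : β ≠ γ := hgb.symm
  have hco : ({α, β, γ} : Finset Ω) ∈ C := mem_Sset.mp hγ
  set T : Finset Ω := {α, β, γ} with hT
  set U : Finset Ω := univ \ T with hU
  set W := Sset C α β ∩ Sset C α γ with hW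
  have hWb : W.card = b := coh hC3 heven hb hab hac hbc hco
  have hWU : W ⊆ U := by
    intro δ hδ
    rw [hW, mem_inter] at hδ
    obtain ⟨-, hd1, hd2⟩ := Sset_ne hC3 hδ.1
    obtain ⟨-, -, hd3⟩ := Sset_ne hC3 hδ.2
    rw [hU, mem_sdiff]
    exact ⟨mem_univ _, by simp [hT, hd1, hd2, hd3]⟩
  have hβS : β ∈ Sset C α γ := by
    rw [mem_Sset, show ({α,γ,β}:Finset Ω) = {α,β,γ} from by ext w; simp; tauto]
    exact hco
  have hαS : α ∈ Sset C β γ := by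
    rw [mem_Sset, show ({β,γ,α}:Finset Ω) = {α,β,γ} from by ext w; simp; tauto]
    exact hco
  -- pointwise identity
  have hsum : ∑ δ ∈ U, ((if ({α, β, δ} : Finset Ω) ∈ C then 1 else 0)
      + ((if ({α, γ, δ} : Finset Ω) ∈ C then 1 else 0)
      + (if ({β, γ, δ} : Finset Ω) ∈ C then 1 else 0)))
      = ∑ δ ∈ U, (if δ ∈ W then 3 else 1) := by
    apply sum_congr rfl
    intro δ hδ
    rw [hU, mem_sdiff] at hδ
    have hd : δ ≠ α ∧ δ ≠ β ∧ δ ≠ γ := by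
      have := hδ.2
      simp only [hT, mem_insert, mem_singleton] at this
      push_neg at this
      exact this
    have hp := parity4 heven hab hac hd.1.symm hbc hd.2.1.symm hd.2.2.symm
    rw [if_pos hco] at hp
    have hWmem : δ ∈ W ↔ (({α, β, δ} : Finset Ω) ∈ C ∧ ({α, γ, δ} : Finset Ω) ∈ C) := by
      rw [hW, mem_inter, mem_Sset, mem_Sset]
    by_cases hw : δ ∈ W
    · rw [if_pos hw]
      obtain ⟨h1, h2⟩ := hWmem.mp hw
      have h3 : ({β, γ, δ} : Finset Ω) ∈ C := by
        by_contra h3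
        rw [if_pos h1, if_pos h2, if_neg h3, Nat.even_iff] at hp
        omega
      rw [if_pos h1, if_pos h2, if_pos h3]
    · rw [if_neg hw]
      have hnot : ¬(({α, β, δ} : Finset Ω) ∈ C ∧ ({α, γ, δ} : Finset Ω) ∈ C) :=
        fun h => hw (hWmem.mpr h)
      by_cases h1 : ({α, β, δ} : Finset Ω) ∈ C <;>
        by_cases h2 : ({α, γ, δ} : Finset Ω) ∈ C <;>
        by_cases h3 : ({β, γ, δ} : Finset Ω) ∈ C
      · exact absurd ⟨h1, h2⟩ hnot
      · exact absurd ⟨h1, h2⟩ hnot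
      · exfalso; rw [if_pos h3, if_neg h2, if_pos h1, Nat.even_iff] at hp; omega
      · rw [if_pos h1, if_neg h2, if_neg h3]
      · exfalso; rw [if_pos h3, if_pos h2, if_neg h1, Nat.even_iff] at hp; omega
      · rw [if_neg h1, if_pos h2, if_neg h3]
      · rw [if_neg h1, if_neg h2, if_pos h3]
      · exfalso; rw [if_neg h3, if_neg h2, if_neg h1, Nat.even_iff] at hp; omega
  -- left side
  have hf1 : U.filter (fun δ => ({α, β, δ} : Finset Ω) ∈ C) = (Sset C α β).erase γ := by
    ext δ
    rw [mem_filter, mem_erase, mem_Sset, hU, mem_sdiff]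
    constructor
    · rintro ⟨⟨-, hnT⟩, hc⟩
      simp only [hT, mem_insert, mem_singleton] at hnT
      push_neg at hnT
      exact ⟨hnT.2.2, hc⟩
    · rintro ⟨hne, hc⟩
      obtain ⟨-, hd1, hd2⟩ := Sset_ne hC3 (mem_Sset.mpr hc)
      exact ⟨⟨mem_univ _, by simp [hT, hd1, hd2, hne]⟩, hc⟩
  have hf2 : U.filter (fun δ => ({α, γ, δ} : Finset Ω) ∈ C) = (Sset C α γ).erase β := by
    ext δ
    rw [mem_filter, mem_erase, mem_Sset, hU, mem_sdiff]
    constructor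
    · rintro ⟨⟨-, hnT⟩, hc⟩
      simp only [hT, mem_insert, mem_singleton] at hnT
      push_neg at hnT
      exact ⟨hnT.2.1, hc⟩
    · rintro ⟨hne, hc⟩
      obtain ⟨-, hd1, hd2⟩ := Sset_ne hC3 (mem_Sset.mpr hc)
      exact ⟨⟨mem_univ _, by simp [hT, hd1, hd2, hne]⟩, hc⟩
  have hf3 : U.filter (fun δ => ({β, γ, δ} : Finset Ω) ∈ C) = (Sset C β γ).erase α := by
    ext δ
    rw [mem_filter, mem_erase, mem_Sset, hU, mem_sdiff]
    constructor
    · rintro ⟨⟨-, hnT⟩, hc⟩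
      simp only [hT, mem_insert, mem_singleton] at hnT
      push_neg at hnT
      exact ⟨hnT.1, hc⟩
    · rintro ⟨hne, hc⟩
      obtain ⟨-, hd1, hd2⟩ := Sset_ne hC3 (mem_Sset.mpr hc)
      exact ⟨⟨mem_univ _, by simp [hT, hd1, hd2, hne]⟩, hc⟩
  have hLHS : ∑ δ ∈ U, ((if ({α, β, δ} : Finset Ω) ∈ C then 1 else 0)
      + ((if ({α, γ, δ} : Finset Ω) ∈ C then 1 else 0)
      + (if ({β, γ, δ} : Finset Ω) ∈ C then 1 else 0)))
      = (a - 1) + ((a - 1) + (a - 1)) := by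
    rw [sum_add_distrib, sum_add_distrib, ← card_filter, ← card_filter, ← card_filter,
      hf1, hf2, hf3, card_erase_of_mem hγ, card_erase_of_mem hβS, card_erase_of_mem hαS,
      hS, card_Sset hC3 ha hac, card_Sset hC3 ha hbc]
  -- right side
  have hUW : U.filter (fun δ => δ ∈ W) = W := by
    ext δ
    rw [mem_filter]
    exact ⟨fun h => h.2, fun h => ⟨hWU h, h⟩⟩
  have hRHS : ∑ δ ∈ U, (if δ ∈ W then 3 else 1)
      = 2 * b + U.card := by
    have : ∀ δ ∈ U, (if δ ∈ W then 3 else 1) = 2 * (if δ ∈ W then 1 else 0) + 1 := by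
      intro δ _
      by_cases h : δ ∈ W <;> simp [h]
    rw [sum_congr rfl this, sum_add_distrib, ← mul_sum, ← card_filter, hUW, hWb,
      sum_const, smul_eq_mul, mul_one]
  have hT3 : T.card = 3 := card_triple hab hac hbc
  have hUcard : U.card = Fintype.card Ω - 3 := by
    rw [hU, card_sdiff_of_subset (subset_univ _), card_univ, hT3]
  have hn3 : 3 ≤ Fintype.card Ω := by
    have := card_le_card (subset_univ T)
    rw [hT3] at this
    rwa [card_univ] at this
  rw [hsum, hRHS, hUcard] at hLHS
  omega

end Main

/-- **Theorem 4.2 (Gillespie).** In a regular two-graph with parameters `(n, a, b)`, the sets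
`S_{γδ}` form a `2-(n, a, a(a-1)/2)` design, and `|S_{αβ} ∩ S_{αγ}|` equals `b` on coherent
triples and `a/2` on incoherent triples. -/
theorem stmt_4 {Ω : Type*} [Fintype Ω] [DecidableEq Ω]
    (C : Finset (Finset Ω)) (n a b : ℕ) (ha1 : 1 ≤ a)
    (hC3 : ∀ c ∈ C, c.card = 3)
    (heven : ∀ Q : Finset Ω, Q.card = 4 →
      Even (((Q.powersetCard 3).filter (· ∈ C)).card))
    (hn : Fintype.card Ω = n)
    (ha : ∀ p : Finset Ω, p.card = 2 → (C.filter fun c => p ⊆ c).card = a)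
    (hb : ∀ c ∈ C, (((univ : Finset Ω).powersetCard 4).filter
      (fun Q => c ⊆ Q ∧ ∀ t ∈ Q.powersetCard 3, t ∈ C)).card = b) :
    (∀ α β : Ω, α ≠ β →
      2 * (((univ : Finset Ω).powersetCard 2).filter
          (fun p => insert α p ∈ C ∧ insert β p ∈ C)).card = a * (a - 1)) ∧
    (∀ α β γ : Ω, α ≠ β → α ≠ γ → β ≠ γ →
      (({α, β, γ} : Finset Ω) ∈ C → (Sset C α β ∩ Sset C α γ).card = b) ∧
      (({α, β, γ} : Finset Ω) ∉ C → 2 * (Sset C α β ∩ Sset C α γ).card = a)) := by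
  constructor
  · intro α β hab
    set P := ((univ : Finset Ω).powersetCard 2).filter
      (fun p => insert α p ∈ C ∧ insert β p ∈ C) with hP
    -- Step A: fiber cardinalities
    have hA : ∀ γ : Ω, (P.filter (fun p => γ ∈ p)).card
        = (Sset C α γ ∩ Sset C β γ).card := by
      intro γ
      symm
      apply card_bij (fun δ _ => insert γ ({δ} : Finset Ω))
      · intro δ hδ
        rw [mem_inter] at hδ
        obtain ⟨-, -, hdg⟩ := Sset_ne hC3 hδ.1
        simp only [mem_Sset] at hδ
        rw [mem_filter, hP, mem_filter, mem_powersetCard]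
        refine ⟨⟨⟨subset_univ _, ?_⟩, hδ.1, hδ.2⟩, mem_insert_self _ _⟩
        rw [card_insert_of_notMem (by simp only [mem_singleton]; exact fun h => hdg h.symm),
          card_singleton]
      · intro δ1 h1 δ2 h2 heq
        rw [mem_inter] at h1 h2
        obtain ⟨-, -, h1g⟩ := Sset_ne hC3 h1.1
        have : δ1 ∈ insert γ ({δ2} : Finset Ω) := by
          rw [← heq]; simp
        simp at this
        tauto
      · intro p hp
        rw [mem_filter] at hp
        obtain ⟨hpP, hγp⟩ := hp
        have hp2 : p.card = 2 := by
          rw [hP, mem_filter, mem_powersetCard] at hpP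
          exact hpP.1.2
        have hCp := (mem_filter.mp (hP ▸ hpP)).2
        have h1 : (p.erase γ).card = 1 := by rw [card_erase_of_mem hγp, hp2]
        obtain ⟨δ, hδ⟩ := card_eq_one.mp h1
        have hpeq : insert γ ({δ} : Finset Ω) = p := by
          rw [← hδ]
          exact insert_erase hγp
        refine ⟨δ, ?_, hpeq⟩
        rw [mem_inter, mem_Sset, mem_Sset]
        constructor
        · have : insert α p ∈ C := hCp.1
          rwa [← hpeq] at this
        · have : insert β p ∈ C := hCp.2
          rwa [← hpeq] at this
    -- Step B: double counting
    have hB : ∑ γ : Ω, (P.filter (fun p => γ ∈ p)).card = 2 * P.card := by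
      have h1 : ∀ γ : Ω, (P.filter (fun p => γ ∈ p)).card
          = ∑ p ∈ P, (if γ ∈ p then 1 else 0) := fun γ => card_filter _ _
      calc ∑ γ : Ω, (P.filter (fun p => γ ∈ p)).card
          = ∑ γ : Ω, ∑ p ∈ P, (if γ ∈ p then 1 else 0) := by
            exact sum_congr rfl (fun γ _ => h1 γ)
        _ = ∑ p ∈ P, ∑ γ : Ω, (if γ ∈ p then 1 else 0) := sum_comm
        _ = ∑ p ∈ P, p.card := by
            apply sum_congr rfl
            intro p _
            rw [← card_filter]
            congr 1
            ext w; simp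
        _ = ∑ p ∈ P, 2 := by
            apply sum_congr rfl
            intro p hp
            rw [hP, mem_filter, mem_powersetCard] at hp
            exact hp.1.2
        _ = 2 * P.card := by rw [sum_const, smul_eq_mul, mul_comm]
    -- Step C: evaluate the sum
    set S := Sset C α β with hSdef
    have hScard : S.card = a := card_Sset hC3 ha hab
    have hβS : β ∉ S := fun h => (Sset_ne hC3 h).2.2 rfl
    have hαins : α ∉ insert β S := by
      simp only [mem_insert]
      push_neg
      exact ⟨hab, fun h => (Sset_ne hC3 h).2.1 rfl⟩
    set M : Finset Ω := insert α (insert β S) with hM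
    have hMcard : M.card = a + 2 := by
      rw [hM, card_insert_of_notMem hαins, card_insert_of_notMem hβS, hScard]
    have hMn : a + 2 ≤ Fintype.card Ω := by
      rw [← hMcard, ← card_univ]
      exact card_le_card (subset_univ M)
    have hRcard : ((univ : Finset Ω) \ M).card = Fintype.card Ω - (a + 2) := by
      rw [card_sdiff_of_subset (subset_univ M), card_univ, hMcard]
    have hSaa : Sset C α α = ∅ := eq_empty_of_forall_notMem fun z hz => (Sset_ne hC3 hz).1 rfl
    have hSbb : Sset C β β = ∅ := eq_empty_of_forall_notMem fun z hz => (Sset_ne hC3 hz).1 rfl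
    have hCsum : 2 * ∑ γ : Ω, (Sset C α γ ∩ Sset C β γ).card
        = a * (2 * b) + (Fintype.card Ω - (a + 2)) * a := by
      rw [mul_sum]
      have hUsplit : (univ : Finset Ω) = M ∪ (univ \ M) :=
        (union_sdiff_of_subset (subset_univ M)).symm
      rw [show ∑ γ : Ω, 2 * (Sset C α γ ∩ Sset C β γ).card
          = ∑ γ ∈ M ∪ (univ \ M), 2 * (Sset C α γ ∩ Sset C β γ).card from by rw [← hUsplit]]
      rw [sum_union sdiff_disjoint.symm]
      have hMsum : ∑ γ ∈ M, 2 * (Sset C α γ ∩ Sset C β γ).card = a * (2 * b) := by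
        rw [hM, sum_insert hαins, sum_insert hβS]
        rw [hSaa, empty_inter, card_empty, mul_zero]
        rw [show Sset C β β = ∅ from hSbb, inter_empty, card_empty, mul_zero]
        have : ∀ γ ∈ S, 2 * (Sset C α γ ∩ Sset C β γ).card = 2 * b := by
          intro γ hγ
          obtain ⟨-, hga, hgb⟩ := Sset_ne hC3 hγ
          have hco : ({γ, α, β} : Finset Ω) ∈ C := by
            rw [show ({γ,α,β}:Finset Ω) = {α,β,γ} from by ext w; simp; tauto]
            exact mem_Sset.mp hγ
          have := coh hC3 heven hb hga hgb hab hco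
          rw [Sset_comm α γ, Sset_comm β γ, this]
        rw [sum_congr rfl this, sum_const, smul_eq_mul, hScard]
        ring
      have hRsum : ∑ γ ∈ (univ : Finset Ω) \ M, 2 * (Sset C α γ ∩ Sset C β γ).card
          = (Fintype.card Ω - (a + 2)) * a := by
        have : ∀ γ ∈ (univ : Finset Ω) \ M, 2 * (Sset C α γ ∩ Sset C β γ).card = a := by
          intro γ hγ
          rw [mem_sdiff, hM] at hγ
          have hne : γ ≠ α ∧ γ ≠ β ∧ γ ∉ S := by
            have := hγ.2
            simp only [mem_insert] at this
            push_neg at this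
            exact this
          have hnc : ({γ, α, β} : Finset Ω) ∉ C := by
            rw [show ({γ,α,β}:Finset Ω) = {α,β,γ} from by ext w; simp; tauto]
            exact fun h => hne.2.2 (mem_Sset.mpr h)
          have := incoh hC3 heven ha hne.1 hne.2.1 hab hnc
          rw [Sset_comm α γ, Sset_comm β γ]
          exact this
        rw [sum_congr rfl this, sum_const, smul_eq_mul, hRcard]
      rw [hMsum, hRsum]
    -- combine
    have hTot : ∑ γ : Ω, (Sset C α γ ∩ Sset C β γ).card = 2 * P.card := by
      rw [← hB]
      exact sum_congr rfl (fun γ _ => (hA γ).symm)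
    have hrel := rel hC3 heven ha1 ha hb hab
    set nn := Fintype.card Ω with hnn
    obtain ⟨c, hc⟩ : ∃ c, nn = a + 2 + c := ⟨nn - (a + 2), by omega⟩
    have h2b : 2 * b + c = 2 * (a - 1) := by omega
    have hfin : 2 * (2 * P.card) = 2 * (a * (a - 1)) := by
      calc 2 * (2 * P.card) = 2 * ∑ γ : Ω, (Sset C α γ ∩ Sset C β γ).card := by rw [hTot]
        _ = a * (2 * b) + (nn - (a + 2)) * a := hCsum
        _ = a * (2 * b) + c * a := by rw [hc]; congr 2; omega
        _ = a * (2 * b + c) := by ring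
        _ = a * (2 * (a - 1)) := by rw [h2b]
        _ = 2 * (a * (a - 1)) := by ring
    exact Nat.eq_of_mul_eq_mul_left two_pos hfin
  · intro α β γ hab hac hbc
    exact ⟨fun hco => coh hC3 heven hb hab hac hbc hco,
      fun hnc => incoh hC3 heven ha hab hac hbc hnc⟩
end

section
/- Let 0 < κ < 1 and let v : Ω → EuclideanSpace ℝ (Fin d) be a finite family of unit vectors such that |⟪v i, v j⟫| = κ for all i ≠ j and ⟪v i, v j⟫ · ⟪v i, v k⟫ · ⟪v j, v k⟫ > 0 for all pairwise distinct i, j, k (an incoherent family of equiangular lines). Then the family v is linearly independent over ℝ; in particular |Ω| ≤ d. -/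
open scoped RealInnerProductSpace

/-- **Lemma 4.3 (Gillespie).** An incoherent family of equiangular lines in `ℝ^d` is linearly
independent; in particular it has at most `d` members. -/
theorem stmt_5 {Ω : Type*} [Fintype Ω] (d : ℕ) (κ : ℝ) (hκ0 : 0 < κ) (hκ1 : κ < 1)
    (v : Ω → EuclideanSpace ℝ (Fin d))
    (hunit : ∀ i, ‖v i‖ = 1)
    (hangle : ∀ i j : Ω, i ≠ j → |⟪v i, v j⟫| = κ)
    (hinc : ∀ i j k : Ω, i ≠ j → i ≠ k → j ≠ k →
      0 < ⟪v i, v j⟫ * ⟪v i, v k⟫ * ⟪v j, v k⟫) :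
    LinearIndependent ℝ v ∧ Fintype.card Ω ≤ d := by
  classical
  have hii : ∀ i, ⟪v i, v i⟫ = 1 := by
    intro i
    rw [real_inner_self_eq_norm_sq, hunit]
    norm_num
  rcases isEmpty_or_nonempty Ω with hE | hN
  · refine ⟨linearIndependent_empty_type, ?_⟩
    simp [Fintype.card_eq_zero]
  obtain ⟨i0⟩ := hN
  set ε : Ω → ℝ := fun i => if i = i0 then 1 else if 0 < ⟪v i0, v i⟫ then 1 else -1 with hε
  have hεpm : ∀ i, ε i = 1 ∨ ε i = -1 := by
    intro i; simp only [hε]; split_ifs <;> simp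
  have hεsq : ∀ i, ε i * ε i = 1 := by
    intro i; rcases hεpm i with h | h <;> rw [h] <;> norm_num
  have hε0 : ∀ i, i ≠ i0 → ε i * ⟪v i0, v i⟫ = κ := by
    intro i hi
    have habs := hangle i0 i (Ne.symm hi)
    simp only [hε, if_neg hi]
    split_ifs with h
    · rw [one_mul, ← habs, abs_of_pos h]
    · push_neg at h
      have hne : ⟪v i0, v i⟫ ≠ 0 := by
        intro h0; rw [h0] at habs; simp at habs; linarith
      have hlt : ⟪v i0, v i⟫ < 0 := lt_of_le_of_ne h hne
      rw [← habs, abs_of_neg hlt]; ring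
  have hval : ∀ i, i ≠ i0 → ⟪v i0, v i⟫ = ε i * κ := by
    intro i hi
    have h := hε0 i hi
    have hs := hεsq i
    linear_combination ε i * h - ⟪v i0, v i⟫ * hs
  have key : ∀ i j, i ≠ j → ⟪v i, v j⟫ = ε i * ε j * κ := by
    intro i j hij
    by_cases hi : i = i0
    · subst hi
      have h1 : ε i = 1 := by simp [hε]
      have h2 := hval j (Ne.symm hij)
      rw [h1, one_mul, h2]
    by_cases hj : j = i0
    · subst hj
      have h1 : ε j = 1 := by simp [hε]
      have h2 := hval i hij
      rw [h1, mul_one, real_inner_comm, h2]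
    have hpos := hinc i0 i j (Ne.symm hi) (Ne.symm hj) hij
    have habs := hangle i j hij
    rw [hval i hi, hval j hj] at hpos
    rcases hεpm i with hi1 | hi1 <;> rcases hεpm j with hj1 | hj1 <;>
      rw [hi1, hj1] at hpos ⊢ <;>
        rcases (abs_eq hκ0.le).mp habs with hX | hX <;> rw [hX] at hpos ⊢ <;>
          first
            | (norm_num; done)
            | (exfalso; nlinarith [mul_pos (mul_pos hκ0 hκ0) hκ0])
  have hli : LinearIndependent ℝ v := by
    rw [Fintype.linearIndependent_iff]
    intro c hc i
    have h0 : ∑ i, ∑ j, c i * c j * ⟪v i, v j⟫ = 0 := by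
      have h : ⟪∑ i, c i • v i, ∑ j, c j • v j⟫ = (0 : ℝ) := by
        rw [hc, inner_zero_right]
      rw [sum_inner] at h
      rw [← h]
      refine Finset.sum_congr rfl fun i _ => ?_
      rw [inner_sum]
      refine Finset.sum_congr rfl fun j _ => ?_
      rw [real_inner_smul_left, real_inner_smul_right]; ring
    have hterm : ∀ i j : Ω, c i * c j * ⟪v i, v j⟫ =
        (if i = j then (1 - κ) * (c i)^2 else 0) + κ * (c i * ε i) * (c j * ε j) := by
      intro i j
      by_cases h : i = j
      · subst h
        rw [hii i, if_pos rfl]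
        linear_combination (-(κ * (c i)^2)) * hεsq i
      · rw [if_neg h, key i j h]; ring
    have hsplit : ∑ i, ∑ j, c i * c j * ⟪v i, v j⟫ =
        (1 - κ) * ∑ i, (c i)^2 + κ * (∑ i, c i * ε i)^2 := by
      calc ∑ i, ∑ j, c i * c j * ⟪v i, v j⟫
          = ∑ i, ∑ j, ((if i = j then (1 - κ) * (c i)^2 else 0)
              + κ * (c i * ε i) * (c j * ε j)) :=
            Finset.sum_congr rfl fun i _ => Finset.sum_congr rfl fun j _ => hterm i j
        _ = (∑ i, ∑ j, (if i = j then (1 - κ) * (c i)^2 else 0))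
              + ∑ i, ∑ j, κ * (c i * ε i) * (c j * ε j) := by
            rw [← Finset.sum_add_distrib]
            exact Finset.sum_congr rfl fun i _ => by rw [← Finset.sum_add_distrib]
        _ = (1 - κ) * ∑ i, (c i)^2 + κ * (∑ i, c i * ε i)^2 := by
            congr 1
            · rw [Finset.mul_sum]
              refine Finset.sum_congr rfl fun i _ => ?_
              simp
            · rw [sq, Finset.sum_mul_sum, Finset.mul_sum]
              refine Finset.sum_congr rfl fun i _ => ?_
              rw [Finset.mul_sum]
              exact Finset.sum_congr rfl fun j _ => by ring
    rw [hsplit] at h0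
    have hs1 : 0 ≤ ∑ i, (c i)^2 := Finset.sum_nonneg fun i _ => sq_nonneg _
    have hs2 : 0 ≤ (∑ i, c i * ε i)^2 := sq_nonneg _
    have hz : ∑ i, (c i)^2 = 0 := by nlinarith
    have hci := (Finset.sum_eq_zero_iff_of_nonneg
      (fun i _ => sq_nonneg (c i))).mp hz i (Finset.mem_univ i)
    exact pow_eq_zero_iff (by norm_num) |>.mp hci
  refine ⟨hli, ?_⟩
  have h := hli.fintype_card_le_finrank
  simpa using h
end

section
/- Let (Ω, C) be a two-graph, Γ ⊆ Ω a maximal incoherent subset, γ ∈ Ω∖Γ, and α₁, α₂ ∈ Γ with {γ, α₁, α₂} ∈ C. For i = 1, 2 define Γᵢ(γ) = {δ ∈ Γ : {γ, αᵢ, δ} ∈ C}. Then Γ₁(γ) and Γ₂(γ) are disjoint, their union is Γ, and for all distinct α, β ∈ Γ: {γ, α, β} ∉ C if and only if α and β both lie in Γ₁(γ) or both lie in Γ₂(γ). -/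
open Finset

theorem four {Ω : Type*} [DecidableEq Ω] (C : Finset (Finset Ω))
    (heven : ∀ Q : Finset Ω, Q.card = 4 →
      Even (((Q.powersetCard 3).filter (· ∈ C)).card))
    (a b c d : Ω) (hab : a ≠ b) (hac : a ≠ c) (had : a ≠ d)
    (hbc : b ≠ c) (hbd : b ≠ d) (hcd : c ≠ d) :
    (({a,b,c} : Finset Ω) ∈ C ↔ (({a,b,d} : Finset Ω) ∈ C ↔
      (({a,c,d} : Finset Ω) ∈ C ↔ ({b,c,d} : Finset Ω) ∈ C))) := by
  have hQ4 : ({a,b,c,d} : Finset Ω).card = 4 := by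
    rw [card_insert_of_notMem (by simp [hab, hac, had]),
      card_insert_of_notMem (by simp [hbc, hbd]),
      card_insert_of_notMem (by simp [hcd]), card_singleton]
  have hps : ({a,b,c,d} : Finset Ω).powersetCard 3 =
      ({{a,b,c},{a,b,d},{a,c,d},{b,c,d}} : Finset (Finset Ω)) := by
    have h1 : a ∉ ({b,c,d} : Finset Ω) := by simp [hab, hac, had]
    have h2 : b ∉ ({c,d} : Finset Ω) := by simp [hbc, hbd]
    have h3 : c ∉ ({d} : Finset Ω) := by simp [hcd]
    have e2 : Finset.powersetCard 2 ({d} : Finset Ω) = ∅ := by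
      rw [Finset.powersetCard_eq_empty]; simp
    have e3 : Finset.powersetCard 3 ({d} : Finset Ω) = ∅ := by
      rw [Finset.powersetCard_eq_empty]; simp
    rw [show ((3:ℕ)) = 2 + 1 from rfl]
    rw [Finset.powersetCard_succ_insert h1, Finset.powersetCard_succ_insert h2,
      Finset.powersetCard_succ_insert h3]
    simp [Finset.powersetCard_succ_insert, h2, h3, Finset.powersetCard_one, e2, e3]
    ext t
    simp [Finset.image_union]
    tauto
  have n12 : ({a,b,c} : Finset Ω) ≠ {a,b,d} := by
    intro h
    have hd : d ∈ ({a,b,c} : Finset Ω) := by rw [h]; simp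
    simp at hd
    rcases hd with h|h|h
    exacts [had h.symm, hbd h.symm, hcd h.symm]
  have n13 : ({a,b,c} : Finset Ω) ≠ {a,c,d} := by
    intro h
    have hd : d ∈ ({a,b,c} : Finset Ω) := by rw [h]; simp
    simp at hd
    rcases hd with h|h|h
    exacts [had h.symm, hbd h.symm, hcd h.symm]
  have n14 : ({a,b,c} : Finset Ω) ≠ {b,c,d} := by
    intro h
    have hd : d ∈ ({a,b,c} : Finset Ω) := by rw [h]; simp
    simp at hd
    rcases hd with h|h|h
    exacts [had h.symm, hbd h.symm, hcd h.symm]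
  have n23 : ({a,b,d} : Finset Ω) ≠ {a,c,d} := by
    intro h
    have hd : c ∈ ({a,b,d} : Finset Ω) := by rw [h]; simp
    simp at hd
    rcases hd with h|h|h
    exacts [hac h.symm, hbc h.symm, hcd h]
  have n24 : ({a,b,d} : Finset Ω) ≠ {b,c,d} := by
    intro h
    have hd : c ∈ ({a,b,d} : Finset Ω) := by rw [h]; simp
    simp at hd
    rcases hd with h|h|h
    exacts [hac h.symm, hbc h.symm, hcd h]
  have n34 : ({a,c,d} : Finset Ω) ≠ {b,c,d} := by
    intro h
    have hb : b ∈ ({a,c,d} : Finset Ω) := by rw [h]; simp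
    simp at hb
    rcases hb with h|h|h
    exacts [hab h.symm, hbc h, hbd h]
  have h := heven _ hQ4
  rw [hps, card_filter] at h
  rw [Finset.sum_insert (by simp [n12, n13, n14]),
    Finset.sum_insert (by simp [n23, n24]),
    Finset.sum_insert (by simp [n34]), Finset.sum_singleton] at h
  by_cases p1 : ({a,b,c} : Finset Ω) ∈ C <;>
  by_cases p2 : ({a,b,d} : Finset Ω) ∈ C <;>
  by_cases p3 : ({a,c,d} : Finset Ω) ∈ C <;>
  by_cases p4 : ({b,c,d} : Finset Ω) ∈ C <;>
  simp [p1, p2, p3, p4, Nat.even_iff] at h ⊢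



/-- **Lemma 4.5 (Gillespie).** Let `Γ` be a maximal incoherent subset of a two-graph `(Ω, C)`,
`γ ∉ Γ` and `{γ, α₁, α₂} ∈ C` with `α₁, α₂ ∈ Γ`. Then the sets
`Γᵢ(γ) = {δ ∈ Γ : {γ, αᵢ, δ} ∈ C}` partition `Γ`, and for distinct `α, β ∈ Γ` the triple
`{γ, α, β}` is not in `C` iff `α, β` lie in the same part. -/
theorem stmt_6 {Ω : Type*} [Fintype Ω] [DecidableEq Ω]
    (C : Finset (Finset Ω))
    (hC3 : ∀ c ∈ C, c.card = 3)
    (heven : ∀ Q : Finset Ω, Q.card = 4 →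
      Even (((Q.powersetCard 3).filter (· ∈ C)).card))
    (Γ : Finset Ω)
    (hinc : ∀ t ⊆ Γ, t.card = 3 → t ∉ C)
    (hmax : ∀ γ : Ω, γ ∉ Γ → ∃ α ∈ Γ, ∃ β ∈ Γ, ({γ, α, β} : Finset Ω) ∈ C)
    (γ : Ω) (hγ : γ ∉ Γ)
    (α₁ α₂ : Ω) (hα₁ : α₁ ∈ Γ) (hα₂ : α₂ ∈ Γ)
    (hcoh : ({γ, α₁, α₂} : Finset Ω) ∈ C) :
    Disjoint (Γ.filter fun δ => ({γ, α₁, δ} : Finset Ω) ∈ C)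
        (Γ.filter fun δ => ({γ, α₂, δ} : Finset Ω) ∈ C) ∧
    (Γ.filter fun δ => ({γ, α₁, δ} : Finset Ω) ∈ C) ∪
        (Γ.filter fun δ => ({γ, α₂, δ} : Finset Ω) ∈ C) = Γ ∧
    ∀ α ∈ Γ, ∀ β ∈ Γ, α ≠ β →
      (({γ, α, β} : Finset Ω) ∉ C ↔
        ((α ∈ Γ.filter fun δ => ({γ, α₁, δ} : Finset Ω) ∈ C) ∧
          (β ∈ Γ.filter fun δ => ({γ, α₁, δ} : Finset Ω) ∈ C)) ∨
        ((α ∈ Γ.filter fun δ => ({γ, α₂, δ} : Finset Ω) ∈ C) ∧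
          (β ∈ Γ.filter fun δ => ({γ, α₂, δ} : Finset Ω) ∈ C))) := by
  have hγΓ : ∀ x ∈ Γ, γ ≠ x := fun x hx h => hγ (h ▸ hx)
  have hγ1 : γ ≠ α₁ := hγΓ _ hα₁
  have hγ2 : γ ≠ α₂ := hγΓ _ hα₂
  have swap : ∀ x y z : Ω, ({x,y,z} : Finset Ω) = {x,z,y} := by
    intro x y z; ext w; simp; tauto
  have notself : ∀ x y : Ω, ({x,y,y} : Finset Ω) ∉ C := by
    intro x y h
    have h3 := hC3 _ h
    have e : ({x,y,y} : Finset Ω) = {x,y} := by ext z; simp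
    rw [e] at h3
    have h2 : ({x,y} : Finset Ω).card ≤ 2 :=
      (Finset.card_insert_le _ _).trans (by simp)
    omega
  have incoh : ∀ x ∈ Γ, ∀ y ∈ Γ, ∀ z ∈ Γ, ({x,y,z} : Finset Ω) ∉ C := by
    intro x hx y hy z hz h
    refine hinc _ ?_ (hC3 _ h) h
    intro w hw
    simp at hw
    rcases hw with rfl|rfl|rfl <;> assumption
  have h12 : α₁ ≠ α₂ := by
    intro h
    subst h
    exact notself _ _ hcoh
  have hP2α₁ : ({γ,α₂,α₁} : Finset Ω) ∈ C := by rw [swap]; exact hcoh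
  have hxor : ∀ δ ∈ Γ, δ ≠ α₁ → δ ≠ α₂ →
      (({γ,α₁,δ} : Finset Ω) ∈ C ↔ ({γ,α₂,δ} : Finset Ω) ∉ C) := by
    intro δ hδ hδ1 hδ2
    have h4 := four C heven γ α₁ α₂ δ hγ1 hγ2 (hγΓ δ hδ) h12
      (fun h => hδ1 h.symm) (fun h => hδ2 h.symm)
    have hi := incoh α₁ hα₁ α₂ hα₂ δ hδ
    tauto
  have hsame : ∀ μ ∈ Γ, ∀ x ∈ Γ, ∀ y ∈ Γ, x ≠ y →
      ({γ,μ,x} : Finset Ω) ∈ C → ({γ,μ,y} : Finset Ω) ∈ C →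
      ({γ,x,y} : Finset Ω) ∉ C := by
    intro μ hμ x hx y hy hxy hcx hcy
    have hμx : μ ≠ x := by intro h; subst h; exact notself _ _ hcx
    have hμy : μ ≠ y := by intro h; subst h; exact notself _ _ hcy
    have h4 := four C heven γ μ x y (hγΓ μ hμ) (hγΓ x hx) (hγΓ y hy) hμx hμy hxy
    have hi := incoh μ hμ x hx y hy
    tauto
  have hdiff : ∀ x ∈ Γ, ∀ y ∈ Γ, x ≠ y →
      ({γ,α₁,x} : Finset Ω) ∈ C → ({γ,α₁,y} : Finset Ω) ∉ C →
      ({γ,x,y} : Finset Ω) ∈ C := by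
    intro x hx y hy hxy hcx hcy
    have h1x : α₁ ≠ x := by intro h; subst h; exact notself _ _ hcx
    by_cases hy1 : y = α₁
    · subst hy1
      rw [swap]
      exact hcx
    have h4 := four C heven γ α₁ x y hγ1 (hγΓ x hx) (hγΓ y hy) h1x
      (fun h => hy1 h.symm) hxy
    have hi := incoh α₁ hα₁ x hx y hy
    tauto
  refine ⟨?_, ?_, ?_⟩
  · rw [Finset.disjoint_left]
    intro δ h1 h2
    rw [mem_filter] at h1 h2
    by_cases hδ1 : δ = α₁
    · subst hδ1; exact notself _ _ h1.2
    by_cases hδ2 : δ = α₂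
    · subst hδ2; exact notself _ _ h2.2
    exact (hxor δ h1.1 hδ1 hδ2).mp h1.2 h2.2
  · ext δ
    simp only [mem_union, mem_filter]
    constructor
    · rintro (⟨h, _⟩|⟨h, _⟩) <;> exact h
    · intro hδ
      by_cases hδ1 : δ = α₁
      · subst hδ1; exact Or.inr ⟨hδ, hP2α₁⟩
      by_cases hδ2 : δ = α₂
      · subst hδ2; exact Or.inl ⟨hδ, hcoh⟩
      by_cases hp : ({γ,α₁,δ} : Finset Ω) ∈ C
      · exact Or.inl ⟨hδ, hp⟩
      · refine Or.inr ⟨hδ, ?_⟩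
        by_contra hn
        exact hp ((hxor δ hδ hδ1 hδ2).mpr hn)
  · intro α hα β hβ hne
    simp only [mem_filter]
    constructor
    · intro hnc
      by_cases qa : ({γ,α₁,α} : Finset Ω) ∈ C <;>
        by_cases qb : ({γ,α₁,β} : Finset Ω) ∈ C
      · exact Or.inl ⟨⟨hα, qa⟩, ⟨hβ, qb⟩⟩
      · exact absurd (hdiff α hα β hβ hne qa qb) hnc
      · exact absurd ((swap γ β α) ▸ hdiff β hβ α hα hne.symm qb qa) hnc
      · have pα : ({γ,α₂,α} : Finset Ω) ∈ C := by
          by_cases h1 : α = α₁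
          · subst h1; exact hP2α₁
          by_cases h2 : α = α₂
          · subst h2; exact absurd hcoh qa
          by_contra hn
          exact qa ((hxor α hα h1 h2).mpr hn)
        have pβ : ({γ,α₂,β} : Finset Ω) ∈ C := by
          by_cases h1 : β = α₁
          · subst h1; exact hP2α₁
          by_cases h2 : β = α₂
          · subst h2; exact absurd hcoh qb
          by_contra hn
          exact qb ((hxor β hβ h1 h2).mpr hn)
        exact Or.inr ⟨⟨hα, pα⟩, ⟨hβ, pβ⟩⟩
    · rintro (⟨⟨_, qa⟩, ⟨_, qb⟩⟩|⟨⟨_, qa⟩, ⟨_, qb⟩⟩)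
      · exact hsame α₁ hα₁ α hα β hβ hne qa qb
      · exact hsame α₂ hα₂ α hα β hβ hne qa qb
end

section
/- Let (Ω, C) be a regular two-graph with parameters (n, a, b), let Γ ⊆ Ω be a maximal incoherent subset with |Γ| = g, and fix α ∈ Γ. Writing S_{γα} = {δ ∈ Ω : {γ, α, δ} ∈ C}, the following identities hold: (1) Σ_{γ ∈ Ω∖Γ} |Γ ∖ S_{γα}| = (n − g − a)·g + a; (2) Σ_{γ ∈ Ω∖Γ} |Γ ∩ S_{γα}| = a·(g − 1); (3) 2·Σ_{γ ∈ Ω∖Γ} |Γ ∖ S_{γα}|² = (2(n − g) − 3a)·g² + 3a·g; (4) 2·Σ_{γ ∈ Ω∖Γ} |Γ ∩ S_{γα}|² = a·g·(g − 1); and moreover for any β ∈ Γ with β ≠ α: (5) 2·Σ_{γ ∈ S_{αβ}} |Γ ∖ S_{γα}| = a·g and 2·Σ_{γ ∈ S_{αβ}} |Γ ∩ S_{γα}| = a·g; (6) Σ_{γ ∈ Ω∖(Γ ∪ S_{αβ})} |Γ ∖ S_{γα}| = (n − g − 3a/2)·g + a, i.e. 2·Σ_{γ ∈ Ω∖(Γ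 ∪ S_{αβ})} |Γ ∖ S_{γα}| = (2(n − g) − 3a)·g + 2a; (7) 2·Σ_{γ ∈ Ω∖(Γ ∪ S_{αβ})} |Γ ∩ S_{γα}| = a·(g − 2). -/
open Finset

namespace TG
set_option linter.unusedSectionVars false

variable {Ω : Type*} [Fintype Ω] [DecidableEq Ω]

lemma mem_Sset (C : Finset (Finset Ω)) {x y z : Ω} :
    z ∈ Sset C x y ↔ ({x, y, z} : Finset Ω) ∈ C := by simp [Sset]

lemma rot3 (x y z : Ω) : ({x, y, z} : Finset Ω) = {y, z, x} := by ext w; simp; tauto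

lemma swap23 (x y z : Ω) : ({x, y, z} : Finset Ω) = {x, z, y} := by ext w; simp; tauto

lemma card_pair_le (x y : Ω) : ({x, y} : Finset Ω).card ≤ 2 :=
  le_trans (card_insert_le _ _) (by simp)

lemma tri_ne {C : Finset (Finset Ω)} (hC3 : ∀ c ∈ C, c.card = 3)
    {x y z : Ω} (h : ({x, y, z} : Finset Ω) ∈ C) : x ≠ y ∧ x ≠ z ∧ y ≠ z := by
  have h3 := hC3 _ h
  refine ⟨?_, ?_, ?_⟩ <;> rintro rfl
  · have h1 : ({x, x, z} : Finset Ω) ⊆ {x, z} := by intro w hw; simp at hw ⊢; tauto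
    have h2 := card_le_card h1; have := card_pair_le x z; omega
  · have h1 : ({x, y, x} : Finset Ω) ⊆ {x, y} := by intro w hw; simp at hw ⊢; tauto
    have h2 := card_le_card h1; have := card_pair_le x y; omega
  · have h1 : ({x, y, y} : Finset Ω) ⊆ {x, y} := by intro w hw; simp at hw ⊢; tauto
    have h2 := card_le_card h1; have := card_pair_le x y; omega

lemma card3 {x y z : Ω} (hxy : x ≠ y) (hxz : x ≠ z) (hyz : y ≠ z) :
    ({x, y, z} : Finset Ω).card = 3 := by
  rw [card_insert_of_notMem (by simp [hxy, hxz]), card_pair hyz]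

lemma card_Sset {C : Finset (Finset Ω)} {a : ℕ} (hC3 : ∀ c ∈ C, c.card = 3)
    (ha : ∀ p : Finset Ω, p.card = 2 → (C.filter fun c => p ⊆ c).card = a)
    {x y : Ω} (hxy : x ≠ y) : (Sset C x y).card = a := by
  rw [← ha {x, y} (card_pair hxy)]
  apply card_bij (fun γ _ => ({x, y, γ} : Finset Ω))
  · intro γ hγ
    rw [mem_Sset] at hγ
    simp only [mem_filter]
    exact ⟨hγ, by intro w hw; simp at hw ⊢; tauto⟩
  · intro γ1 h1 γ2 h2 he
    rw [mem_Sset] at h1 h2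
    obtain ⟨-, hxg, hyg⟩ := tri_ne hC3 h1
    have : γ1 ∈ ({x, y, γ2} : Finset Ω) := he ▸ (by simp)
    simp at this; tauto
  · intro c hc
    simp only [mem_filter] at hc
    obtain ⟨hcC, hsub⟩ := hc
    have h3 := hC3 _ hcC
    have hxc : x ∈ c := hsub (by simp)
    have hyc : y ∈ c := hsub (by simp)
    have h1 : (c \ {x, y}).card = 1 := by
      rw [card_sdiff_of_subset hsub, h3, card_pair hxy]
    obtain ⟨γ, hγ⟩ := card_eq_one.1 h1
    have hγc : γ ∈ c ∧ (γ ≠ x ∧ γ ≠ y) := by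
      have : γ ∈ c \ ({x, y} : Finset Ω) := hγ ▸ mem_singleton_self γ
      simpa using this
    have hceq : ({x, y, γ} : Finset Ω) = c := by
      apply eq_of_subset_of_card_le
      · intro w hw; simp at hw; rcases hw with rfl | rfl | rfl
        exacts [hxc, hyc, hγc.1]
      · rw [h3, card3 hxy (Ne.symm hγc.2.1) (Ne.symm hγc.2.2)]
    exact ⟨γ, (mem_Sset C).2 (hceq ▸ hcC), hceq⟩

lemma pow3_eq {p q r s : Ω} (hpq : p ≠ q) (hpr : p ≠ r) (hps : p ≠ s)
    (hqr : q ≠ r) (hqs : q ≠ s) (hrs : r ≠ s) :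
    ({p, q, r, s} : Finset Ω).powersetCard 3 =
      ({{p, q, r}, {p, q, s}, {p, r, s}, {q, r, s}} : Finset (Finset Ω)) := by
  have hQ : ({p, q, r, s} : Finset Ω).card = 4 := by
    rw [card_insert_of_notMem (by simp [hpq, hpr, hps]),
        card_insert_of_notMem (by simp [hqr, hqs]), card_pair hrs]
  ext t
  simp only [mem_powersetCard, mem_insert, mem_singleton]
  constructor
  · rintro ⟨hsub, hcard⟩
    have h1 : (({p, q, r, s} : Finset Ω) \ t).card = 1 := by
      rw [card_sdiff_of_subset hsub, hQ, hcard]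
    obtain ⟨x, hx⟩ := card_eq_one.1 h1
    have hxm : x ∈ ({p, q, r, s} : Finset Ω) ∧ x ∉ t := by
      have : x ∈ ({p, q, r, s} : Finset Ω) \ t := hx ▸ mem_singleton_self x
      simpa using this
    have ht : t = ({p, q, r, s} : Finset Ω).erase x := by
      apply eq_of_subset_of_card_le
      · intro w hw; exact mem_erase.2 ⟨fun h => hxm.2 (h ▸ hw), hsub hw⟩
      · rw [card_erase_of_mem hxm.1, hQ, hcard]
    have hxc := hxm.1
    simp only [mem_insert, mem_singleton] at hxc
    rcases hxc with rfl | rfl | rfl | rfl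
    · right; right; right
      rw [ht]; ext w
      simp only [mem_erase, mem_insert, mem_singleton]
      constructor
      · rintro ⟨h1, rfl | rfl | rfl | rfl⟩ <;> tauto
      · rintro (rfl | rfl | rfl)
        exacts [⟨Ne.symm hpq, by tauto⟩, ⟨Ne.symm hpr, by tauto⟩, ⟨Ne.symm hps, by tauto⟩]
    · right; right; left
      rw [ht]; ext w
      simp only [mem_erase, mem_insert, mem_singleton]
      constructor
      · rintro ⟨h1, rfl | rfl | rfl | rfl⟩ <;> tauto
      · rintro (rfl | rfl | rfl)
        exacts [⟨hpq, by tauto⟩, ⟨Ne.symm hqr, by tauto⟩, ⟨Ne.symm hqs, by tauto⟩]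
    · right; left
      rw [ht]; ext w
      simp only [mem_erase, mem_insert, mem_singleton]
      constructor
      · rintro ⟨h1, rfl | rfl | rfl | rfl⟩ <;> tauto
      · rintro (rfl | rfl | rfl)
        exacts [⟨hpr, by tauto⟩, ⟨hqr, by tauto⟩, ⟨Ne.symm hrs, by tauto⟩]
    · left
      rw [ht]; ext w
      simp only [mem_erase, mem_insert, mem_singleton]
      constructor
      · rintro ⟨h1, rfl | rfl | rfl | rfl⟩ <;> tauto
      · rintro (rfl | rfl | rfl)
        exacts [⟨hps, by tauto⟩, ⟨hqs, by tauto⟩, ⟨hrs, by tauto⟩]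
  · rintro (rfl | rfl | rfl | rfl) <;>
      refine ⟨by intro w hw; simp at hw ⊢; tauto, ?_⟩
    exacts [card3 hpq hpr hqr, card3 hpq hps hqs, card3 hpr hps hrs, card3 hqr hqs hrs]

lemma parity4 {C : Finset (Finset Ω)}
    (heven : ∀ Q : Finset Ω, Q.card = 4 →
      Even (((Q.powersetCard 3).filter (· ∈ C)).card))
    {p q r s : Ω} (hpq : p ≠ q) (hpr : p ≠ r) (hps : p ≠ s)
    (hqr : q ≠ r) (hqs : q ≠ s) (hrs : r ≠ s) :
    ((({p, q, r} : Finset Ω) ∈ C) ↔ (({p, q, s} : Finset Ω) ∈ C)) ↔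
      ((({p, r, s} : Finset Ω) ∈ C) ↔ (({q, r, s} : Finset Ω) ∈ C)) := by
  have hQ : ({p, q, r, s} : Finset Ω).card = 4 := by
    rw [card_insert_of_notMem (by simp [hpq, hpr, hps]),
        card_insert_of_notMem (by simp [hqr, hqs]), card_pair hrs]
  have hev := heven _ hQ
  rw [pow3_eq hpq hpr hps hqr hqs hrs] at hev
  have d12 : ({p, q, r} : Finset Ω) ≠ {p, q, s} := by
    intro h
    have hs : s ∈ ({p, q, s} : Finset Ω) := by simp
    rw [← h] at hs; simp at hs
    rcases hs with rfl | rfl | rfl; exacts [hps rfl, hqs rfl, hrs rfl]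
  have d13 : ({p, q, r} : Finset Ω) ≠ {p, r, s} := by
    intro h
    have hs : s ∈ ({p, r, s} : Finset Ω) := by simp
    rw [← h] at hs; simp at hs
    rcases hs with rfl | rfl | rfl; exacts [hps rfl, hqs rfl, hrs rfl]
  have d14 : ({p, q, r} : Finset Ω) ≠ {q, r, s} := by
    intro h
    have hs : s ∈ ({q, r, s} : Finset Ω) := by simp
    rw [← h] at hs; simp at hs
    rcases hs with rfl | rfl | rfl; exacts [hps rfl, hqs rfl, hrs rfl]
  have d23 : ({p, q, s} : Finset Ω) ≠ {p, r, s} := by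
    intro h
    have hs : r ∈ ({p, r, s} : Finset Ω) := by simp
    rw [← h] at hs; simp at hs
    rcases hs with rfl | rfl | rfl; exacts [hpr rfl, hqr rfl, hrs rfl]
  have d24 : ({p, q, s} : Finset Ω) ≠ {q, r, s} := by
    intro h
    have hs : r ∈ ({q, r, s} : Finset Ω) := by simp
    rw [← h] at hs; simp at hs
    rcases hs with rfl | rfl | rfl; exacts [hpr rfl, hqr rfl, hrs rfl]
  have d34 : ({p, r, s} : Finset Ω) ≠ {q, r, s} := by
    intro h
    have hs : q ∈ ({q, r, s} : Finset Ω) := by simp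
    rw [← h] at hs; simp at hs
    rcases hs with rfl | rfl | rfl; exacts [hpq rfl, hqr rfl, hqs rfl]
  rw [card_filter, sum_insert (by simp [d12, d13, d14]),
      sum_insert (by simp [d23, d24]), sum_insert (by simp [d34]), sum_singleton] at hev
  by_cases h1 : ({p, q, r} : Finset Ω) ∈ C <;>
    by_cases h2 : ({p, q, s} : Finset Ω) ∈ C <;>
    by_cases h3 : ({p, r, s} : Finset Ω) ∈ C <;>
    by_cases h4 : ({q, r, s} : Finset Ω) ∈ C <;>
    simp [h1, h2, h3, h4, Nat.even_iff] at hev ⊢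

lemma halving {C : Finset (Finset Ω)} {a : ℕ}
    (hC3 : ∀ c ∈ C, c.card = 3)
    (heven : ∀ Q : Finset Ω, Q.card = 4 →
      Even (((Q.powersetCard 3).filter (· ∈ C)).card))
    (ha : ∀ p : Finset Ω, p.card = 2 → (C.filter fun c => p ⊆ c).card = a)
    {x y z : Ω} (hxy : x ≠ y) (hxz : x ≠ z) (hyz : y ≠ z)
    (hnot : ({x, y, z} : Finset Ω) ∉ C) :
    2 * (Sset C x y ∩ Sset C x z).card = a := by
  have hA : ∀ γ ∈ Sset C x y, γ ≠ x ∧ γ ≠ y ∧ γ ≠ z := by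
    intro γ hγ
    rw [mem_Sset] at hγ
    obtain ⟨-, h1, h2⟩ := tri_ne hC3 hγ
    refine ⟨Ne.symm h1, Ne.symm h2, ?_⟩
    rintro rfl; exact hnot hγ
  have hB : ∀ γ ∈ Sset C x z, γ ≠ x ∧ γ ≠ y ∧ γ ≠ z := by
    intro γ hγ
    rw [mem_Sset] at hγ
    obtain ⟨-, h1, h2⟩ := tri_ne hC3 hγ
    refine ⟨Ne.symm h1, ?_, Ne.symm h2⟩
    rintro rfl; rw [swap23] at hγ; exact hnot hγ
  have hD : ∀ γ ∈ Sset C y z, γ ≠ x ∧ γ ≠ y ∧ γ ≠ z := by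
    intro γ hγ
    rw [mem_Sset] at hγ
    obtain ⟨-, h1, h2⟩ := tri_ne hC3 hγ
    refine ⟨?_, Ne.symm h1, Ne.symm h2⟩
    rintro rfl; rw [show ({y, z, γ} : Finset Ω) = {γ, y, z} from (rot3 γ y z).symm] at hγ
    exact hnot hγ
  have key : ∀ γ : Ω, γ ≠ x → γ ≠ y → γ ≠ z →
      (γ ∉ Sset C x y ↔ (γ ∈ Sset C x z ↔ γ ∈ Sset C y z)) := by
    intro γ h1 h2 h3
    have hp := parity4 heven hxy hxz (Ne.symm h1) hyz (Ne.symm h2) (Ne.symm h3)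
    rw [mem_Sset, mem_Sset, mem_Sset]
    simp only [hnot, false_iff] at hp
    tauto
  have e1 : (Sset C x y).card =
      (Sset C x y ∩ Sset C x z).card + (Sset C x y ∩ Sset C y z).card := by
    have hu : Sset C x y = (Sset C x y ∩ Sset C x z) ∪ (Sset C x y ∩ Sset C y z) := by
      ext γ
      simp only [mem_union, mem_inter]
      constructor
      · intro hγ
        obtain ⟨h1, h2, h3⟩ := hA γ hγ
        have hk := key γ h1 h2 h3
        tauto
      · tauto
    have hd : Disjoint (Sset C x y ∩ Sset C x z) (Sset C x y ∩ Sset C y z) := by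
      rw [disjoint_left]
      intro γ hγ1 hγ2
      simp only [mem_inter] at hγ1 hγ2
      obtain ⟨h1, h2, h3⟩ := hA γ hγ1.1
      have hk := key γ h1 h2 h3
      tauto
    conv_lhs => rw [hu]
    rw [card_union_of_disjoint hd]
  have e2 : (Sset C x z).card =
      (Sset C x y ∩ Sset C x z).card + (Sset C x z ∩ Sset C y z).card := by
    have hu : Sset C x z = (Sset C x y ∩ Sset C x z) ∪ (Sset C x z ∩ Sset C y z) := by
      ext γ
      simp only [mem_union, mem_inter]
      constructor
      · intro hγ
        obtain ⟨h1, h2, h3⟩ := hB γ hγ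
        have hk := key γ h1 h2 h3
        tauto
      · tauto
    have hd : Disjoint (Sset C x y ∩ Sset C x z) (Sset C x z ∩ Sset C y z) := by
      rw [disjoint_left]
      intro γ hγ1 hγ2
      simp only [mem_inter] at hγ1 hγ2
      obtain ⟨h1, h2, h3⟩ := hB γ hγ1.2
      have hk := key γ h1 h2 h3
      tauto
    conv_lhs => rw [hu]
    rw [card_union_of_disjoint hd]
  have e3 : (Sset C y z).card =
      (Sset C x y ∩ Sset C y z).card + (Sset C x z ∩ Sset C y z).card := by
    have hu : Sset C y z = (Sset C x y ∩ Sset C y z) ∪ (Sset C x z ∩ Sset C y z) := by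
      ext γ
      simp only [mem_union, mem_inter]
      constructor
      · intro hγ
        obtain ⟨h1, h2, h3⟩ := hD γ hγ
        have hk := key γ h1 h2 h3
        tauto
      · tauto
    have hd : Disjoint (Sset C x y ∩ Sset C y z) (Sset C x z ∩ Sset C y z) := by
      rw [disjoint_left]
      intro γ hγ1 hγ2
      simp only [mem_inter] at hγ1 hγ2
      obtain ⟨h1, h2, h3⟩ := hD γ hγ1.2
      have hk := key γ h1 h2 h3
      tauto
    conv_lhs => rw [hu]
    rw [card_union_of_disjoint hd]
  have c1 : (Sset C x y).card = a := card_Sset hC3 ha hxy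
  have c2 : (Sset C x z).card = a := card_Sset hC3 ha hxz
  have c3 : (Sset C y z).card = a := card_Sset hC3 ha hyz
  omega

lemma inter_filter (C : Finset (Finset Ω)) (Γ : Finset Ω) (α γ : Ω) :
    Γ ∩ Sset C γ α = Γ.filter (fun β => γ ∈ Sset C α β) := by
  ext β
  simp only [mem_inter, mem_filter, mem_Sset]
  rw [rot3 γ α β]

lemma sumA (C : Finset (Finset Ω)) (Γ : Finset Ω) (α : Ω) (T : Finset Ω) :
    ∑ γ ∈ T, (Γ ∩ Sset C γ α).card = ∑ β ∈ Γ, (T ∩ Sset C α β).card := by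
  calc ∑ γ ∈ T, (Γ ∩ Sset C γ α).card
      = ∑ γ ∈ T, ∑ β ∈ Γ, if γ ∈ Sset C α β then 1 else 0 := by
        refine sum_congr rfl fun γ _ => ?_
        rw [inter_filter, card_filter]
    _ = ∑ β ∈ Γ, ∑ γ ∈ T, if γ ∈ Sset C α β then 1 else 0 := sum_comm
    _ = ∑ β ∈ Γ, (T ∩ Sset C α β).card := by
        refine sum_congr rfl fun β _ => ?_
        rw [← card_filter]
        congr 1

lemma sumA2 (C : Finset (Finset Ω)) (Γ : Finset Ω) (α : Ω) (T : Finset Ω) :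
    ∑ γ ∈ T, (Γ ∩ Sset C γ α).card ^ 2
      = ∑ β ∈ Γ, ∑ β' ∈ Γ, (T ∩ (Sset C α β ∩ Sset C α β')).card := by
  calc ∑ γ ∈ T, (Γ ∩ Sset C γ α).card ^ 2
      = ∑ γ ∈ T, ∑ β ∈ Γ, ∑ β' ∈ Γ,
          (if γ ∈ Sset C α β ∧ γ ∈ Sset C α β' then 1 else 0) := by
        refine sum_congr rfl fun γ _ => ?_
        rw [inter_filter, card_filter, sq, sum_mul_sum]
        refine sum_congr rfl fun β _ => sum_congr rfl fun β' _ => ?_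
        by_cases h1 : γ ∈ Sset C α β <;> by_cases h2 : γ ∈ Sset C α β' <;>
          simp [h1, h2]
    _ = ∑ β ∈ Γ, ∑ β' ∈ Γ, ∑ γ ∈ T,
          (if γ ∈ Sset C α β ∧ γ ∈ Sset C α β' then 1 else 0) := by
        rw [sum_comm]
        exact sum_congr rfl fun β _ => sum_comm
    _ = ∑ β ∈ Γ, ∑ β' ∈ Γ, (T ∩ (Sset C α β ∩ Sset C α β')).card := by
        refine sum_congr rfl fun β _ => sum_congr rfl fun β' _ => ?_
        rw [← card_filter]
        congr 1
        ext γ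
        simp only [mem_filter, mem_inter]

end TG

/-- **Lemma 4.8 (Gillespie).** Counting identities for a maximal incoherent subset `Γ` of size
`g` in a regular two-graph with parameters `(n, a, b)`. -/
theorem stmt_7 {Ω : Type*} [Fintype Ω] [DecidableEq Ω]
    (C : Finset (Finset Ω)) (n a b : ℕ)
    (hC3 : ∀ c ∈ C, c.card = 3)
    (heven : ∀ Q : Finset Ω, Q.card = 4 →
      Even (((Q.powersetCard 3).filter (· ∈ C)).card))
    (hn : Fintype.card Ω = n)
    (ha : ∀ p : Finset Ω, p.card = 2 → (C.filter fun c => p ⊆ c).card = a)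
    (hb : ∀ c ∈ C, (((univ : Finset Ω).powersetCard 4).filter
      (fun Q => c ⊆ Q ∧ ∀ t ∈ Q.powersetCard 3, t ∈ C)).card = b)
    (Γ : Finset Ω) (g : ℕ) (hg : Γ.card = g)
    (hinc : ∀ t ⊆ Γ, t.card = 3 → t ∉ C)
    (hmax : ∀ γ : Ω, γ ∉ Γ → ∃ α ∈ Γ, ∃ β ∈ Γ, ({γ, α, β} : Finset Ω) ∈ C)
    (α : Ω) (hα : α ∈ Γ) :
    (∑ γ ∈ univ \ Γ, ((Γ \ Sset C γ α).card : ℤ) = ((n : ℤ) - g - a) * g + a) ∧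
    (∑ γ ∈ univ \ Γ, ((Γ ∩ Sset C γ α).card : ℤ) = a * ((g : ℤ) - 1)) ∧
    (2 * ∑ γ ∈ univ \ Γ, ((Γ \ Sset C γ α).card : ℤ) ^ 2
      = (2 * ((n : ℤ) - g) - 3 * a) * g ^ 2 + 3 * a * g) ∧
    (2 * ∑ γ ∈ univ \ Γ, ((Γ ∩ Sset C γ α).card : ℤ) ^ 2 = a * g * ((g : ℤ) - 1)) ∧
    (∀ β ∈ Γ, β ≠ α →
      (2 * ∑ γ ∈ Sset C α β, ((Γ \ Sset C γ α).card : ℤ) = a * g) ∧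
      (2 * ∑ γ ∈ Sset C α β, ((Γ ∩ Sset C γ α).card : ℤ) = a * g) ∧
      (2 * ∑ γ ∈ univ \ (Γ ∪ Sset C α β), ((Γ \ Sset C γ α).card : ℤ)
        = (2 * ((n : ℤ) - g) - 3 * a) * g + 2 * a) ∧
      (2 * ∑ γ ∈ univ \ (Γ ∪ Sset C α β), ((Γ ∩ Sset C γ α).card : ℤ)
        = a * ((g : ℤ) - 2))) := by
  classical
  have htriΓ : ∀ x ∈ Γ, ∀ y ∈ Γ, ∀ z ∈ Γ, ({x, y, z} : Finset Ω) ∉ C := by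
    intro x hx y hy z hz h
    refine hinc _ ?_ (hC3 _ h) h
    intro w hw; simp at hw; rcases hw with rfl | rfl | rfl <;> assumption
  have hSα : Sset C α α = ∅ := by
    rw [eq_empty_iff_forall_notMem]
    intro γ hγ
    exact (TG.tri_ne hC3 ((TG.mem_Sset C).1 hγ)).1 rfl
  have hSsub : ∀ β ∈ Γ, Sset C α β ⊆ univ \ Γ := by
    intro β hβ γ hγ
    rw [mem_sdiff]
    exact ⟨mem_univ _, fun hγΓ => htriΓ α hα β hβ γ hγΓ ((TG.mem_Sset C).1 hγ)⟩
  have hg1 : 1 ≤ g := hg ▸ card_pos.2 ⟨α, hα⟩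
  have hXg : (univ \ Γ).card + g = n := by
    rw [← hg, ← hn, ← Finset.card_univ]
    exact Finset.card_sdiff_add_card_eq_card (subset_univ Γ)
  have hgerase : (Γ.erase α).card = g - 1 := by rw [card_erase_of_mem hα, hg]
  -- evaluation of 2 * |S_{αβ} ∩ S_{αβ'}|
  have key2 : ∀ β ∈ Γ, ∀ β' ∈ Γ, 2 * ((Sset C α β) ∩ (Sset C α β')).card =
      if β = α then 0 else if β' = α then 0 else if β' = β then 2 * a else a := by
    intro β hβ β' hβ'
    by_cases h1 : β = α
    · subst h1; rw [hSα]; simp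
    by_cases h2 : β' = α
    · subst h2; rw [hSα]; simp [h1]
    by_cases h3 : β' = β
    · subst h3
      rw [inter_self, TG.card_Sset hC3 ha (Ne.symm h1), if_neg h1, if_neg h2, if_pos rfl]
    · rw [if_neg h1, if_neg h2, if_neg h3]
      exact TG.halving hC3 heven ha (Ne.symm h1) (Ne.symm h2) (Ne.symm h3)
        (htriΓ α hα β hβ β' hβ')
  -- inner row sum
  have inner : ∀ β ∈ Γ, β ≠ α →
      ∑ β' ∈ Γ, 2 * ((Sset C α β) ∩ (Sset C α β')).card = a * g := by
    intro β hβ hne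
    have h0 : ∑ β' ∈ Γ, 2 * ((Sset C α β) ∩ (Sset C α β')).card
        = ∑ β' ∈ Γ, (if β' = α then 0 else if β' = β then 2 * a else a) := by
      refine sum_congr rfl fun β' hβ' => ?_
      rw [key2 β hβ β' hβ', if_neg hne]
    rw [h0, ← Finset.insert_erase hα, sum_insert (notMem_erase α Γ), if_pos rfl]
    have h2 : ∑ β' ∈ Γ.erase α, (if β' = α then 0 else if β' = β then 2 * a else a)
        = ∑ β' ∈ Γ.erase α, ((if β' = β then a else 0) + a) := by
      refine sum_congr rfl fun β' hβ' => ?_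
      rw [if_neg (ne_of_mem_erase hβ')]
      by_cases h : β' = β <;> simp [h] <;> omega
    rw [h2, sum_add_distrib, sum_const, Finset.sum_ite_eq' (Γ.erase α) β (fun _ => a),
      if_pos (mem_erase.2 ⟨hne, hβ⟩), hgerase, smul_eq_mul]
    have hgg : (g - 1) + 1 = g := by omega
    calc 0 + (a + (g - 1) * a) = ((g - 1) + 1) * a := by ring
      _ = a * g := by rw [hgg]; ring
  -- first power sum (ℕ)
  have S1 : ∑ γ ∈ univ \ Γ, (Γ ∩ Sset C γ α).card = (g - 1) * a := by
    rw [TG.sumA]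
    have h0 : ∀ β ∈ Γ, ((univ \ Γ) ∩ Sset C α β).card = if β = α then 0 else a := by
      intro β hβ
      by_cases h : β = α
      · subst h; rw [hSα]; simp
      · rw [if_neg h, inter_eq_right.2 (hSsub β hβ)]
        exact TG.card_Sset hC3 ha (Ne.symm h)
    rw [sum_congr rfl h0, ← Finset.insert_erase hα, sum_insert (notMem_erase α Γ),
      if_pos rfl, sum_congr rfl (fun β hβ => if_neg (ne_of_mem_erase hβ)),
      sum_const, hgerase, smul_eq_mul, zero_add]
  -- second power sum (ℕ)
  have S2 : 2 * ∑ γ ∈ univ \ Γ, (Γ ∩ Sset C γ α).card ^ 2 = (g - 1) * (a * g) := by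
    rw [TG.sumA2, Finset.mul_sum]
    have hrow : ∀ β ∈ Γ, 2 * ∑ β' ∈ Γ, ((univ \ Γ) ∩ (Sset C α β ∩ Sset C α β')).card
        = if β = α then 0 else a * g := by
      intro β hβ
      by_cases h : β = α
      · subst h; rw [if_pos rfl]
        rw [Finset.sum_congr rfl (fun β' _ => by rw [hSα, empty_inter, inter_empty, card_empty])]
        simp
      · rw [if_neg h, Finset.mul_sum,
          Finset.sum_congr rfl (fun β' hβ' => by
            rw [inter_eq_right.2 (fun γ hγ => hSsub β hβ ((mem_inter.1 hγ).1))])]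
        exact inner β hβ h
    rw [sum_congr rfl hrow, ← Finset.insert_erase hα, sum_insert (notMem_erase α Γ),
      if_pos rfl, sum_congr rfl (fun β hβ => if_neg (ne_of_mem_erase hβ)),
      sum_const, hgerase, smul_eq_mul, zero_add]
  -- integer versions
  have Z1 : (∑ γ ∈ univ \ Γ, ((Γ ∩ Sset C γ α).card : ℤ)) = ((g : ℤ) - 1) * a := by
    have h := S1
    have hc : (∑ γ ∈ univ \ Γ, ((Γ ∩ Sset C γ α).card : ℤ))
        = ((∑ γ ∈ univ \ Γ, (Γ ∩ Sset C γ α).card : ℕ) : ℤ) := by push_cast; ring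
    rw [hc, h, Nat.cast_mul, Nat.cast_sub hg1]
    push_cast; ring
  have Z2 : 2 * (∑ γ ∈ univ \ Γ, ((Γ ∩ Sset C γ α).card : ℤ) ^ 2)
      = ((g : ℤ) - 1) * (a * g) := by
    have hc : 2 * (∑ γ ∈ univ \ Γ, ((Γ ∩ Sset C γ α).card : ℤ) ^ 2)
        = ((2 * ∑ γ ∈ univ \ Γ, (Γ ∩ Sset C γ α).card ^ 2 : ℕ) : ℤ) := by
      push_cast; ring
    rw [hc, S2, Nat.cast_mul, Nat.cast_sub hg1]
    push_cast; ring
  have hc : ∀ γ : Ω, ((Γ \ Sset C γ α).card : ℤ) = (g : ℤ) - (Γ ∩ Sset C γ α).card := by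
    intro γ
    have h := Finset.card_sdiff_add_card_inter Γ (Sset C γ α)
    rw [hg] at h
    omega
  have hXc : ((univ \ Γ).card : ℤ) = (n : ℤ) - g := by omega
  -- conclusion 1
  have G1 : ∑ γ ∈ univ \ Γ, ((Γ \ Sset C γ α).card : ℤ) = ((n : ℤ) - g - a) * g + a := by
    rw [sum_congr rfl (fun γ _ => hc γ), sum_sub_distrib, sum_const, nsmul_eq_mul, hXc]
    linear_combination -Z1
  have G2 : ∑ γ ∈ univ \ Γ, ((Γ ∩ Sset C γ α).card : ℤ) = a * ((g : ℤ) - 1) := by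
    linear_combination Z1
  have G3 : 2 * ∑ γ ∈ univ \ Γ, ((Γ \ Sset C γ α).card : ℤ) ^ 2
      = (2 * ((n : ℤ) - g) - 3 * a) * g ^ 2 + 3 * a * g := by
    have e : ∑ γ ∈ univ \ Γ, ((Γ \ Sset C γ α).card : ℤ) ^ 2
        = ∑ γ ∈ univ \ Γ, ((g : ℤ) ^ 2 - 2 * g * (Γ ∩ Sset C γ α).card
            + ((Γ ∩ Sset C γ α).card : ℤ) ^ 2) := by
      refine sum_congr rfl fun γ _ => ?_
      rw [hc γ]; ring
    rw [e, sum_add_distrib, sum_sub_distrib, sum_const, nsmul_eq_mul, hXc, ← mul_sum]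
    linear_combination (-4 * (g : ℤ)) * Z1 + Z2
  have G4 : 2 * ∑ γ ∈ univ \ Γ, ((Γ ∩ Sset C γ α).card : ℤ) ^ 2
      = a * g * ((g : ℤ) - 1) := by
    linear_combination Z2
  refine ⟨G1, G2, G3, G4, ?_⟩
  intro β hβ hne
  have hTc : (Sset C α β).card = a := TG.card_Sset hC3 ha (Ne.symm hne)
  have T1 : 2 * ∑ γ ∈ Sset C α β, (Γ ∩ Sset C γ α).card = a * g := by
    rw [TG.sumA, Finset.mul_sum]
    exact inner β hβ hne
  have ZT1 : 2 * ∑ γ ∈ Sset C α β, ((Γ ∩ Sset C γ α).card : ℤ) = a * g := by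
    have hcast : 2 * ∑ γ ∈ Sset C α β, ((Γ ∩ Sset C γ α).card : ℤ)
        = ((2 * ∑ γ ∈ Sset C α β, (Γ ∩ Sset C γ α).card : ℕ) : ℤ) := by push_cast; ring
    rw [hcast, T1]; push_cast; ring
  have ZT2 : 2 * ∑ γ ∈ Sset C α β, ((Γ \ Sset C γ α).card : ℤ) = a * g := by
    rw [sum_congr rfl (fun γ _ => hc γ), sum_sub_distrib, sum_const, nsmul_eq_mul, hTc]
    linear_combination -ZT1
  have hsd : (univ \ Γ) \ Sset C α β = univ \ (Γ ∪ Sset C α β) := by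
    ext w
    simp only [mem_sdiff, mem_union, mem_univ, true_and]
    tauto
  have E1 : (∑ γ ∈ univ \ (Γ ∪ Sset C α β), ((Γ \ Sset C γ α).card : ℤ))
      + ∑ γ ∈ Sset C α β, ((Γ \ Sset C γ α).card : ℤ)
      = ∑ γ ∈ univ \ Γ, ((Γ \ Sset C γ α).card : ℤ) := by
    rw [← hsd]
    exact sum_sdiff (hSsub β hβ)
  have E2 : (∑ γ ∈ univ \ (Γ ∪ Sset C α β), ((Γ ∩ Sset C γ α).card : ℤ))
      + ∑ γ ∈ Sset C α β, ((Γ ∩ Sset C γ α).card : ℤ)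
      = ∑ γ ∈ univ \ Γ, ((Γ ∩ Sset C γ α).card : ℤ) := by
    rw [← hsd]
    exact sum_sdiff (hSsub β hβ)
  refine ⟨ZT2, ZT1, ?_, ?_⟩
  · linear_combination 2 * E1 + 2 * G1 - ZT2
  · linear_combination 2 * E2 + 2 * G2 - ZT1
end

section
/- Let (Ω, C) be a regular two-graph with parameters (n, a, b) and let Γ ⊆ Ω be a maximal incoherent subset with |Γ| = g. Suppose there is a natural number g₁ such that for every γ ∈ Ω∖Γ and every α ∈ Γ, |Γ ∩ S_{γα}| = g₁ or |Γ ∩ S_{γα}| = g − g₁. If 2g₁ ≠ g, then for all distinct α, β ∈ Γ: 2(g − g₁) · #{γ ∈ Ω∖Γ : β ∉ S_{γα} and |Γ ∖ S_{γα}| = g₁} = a(g₁ − 1), and 2g₁ · #{γ ∈ Ω∖Γ : β ∉ S_{γα} and |Γ ∖ S_{γα}| = g − g₁} = a(g − g₁ − 1). If 2g₁ = g, then for all distinct α, β ∈ Γ: #{γ ∈ Ω∖Γ : β ∉ S_{γα}} = n − g − a. -/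
open Finset

lemma mem_Sset_s8 {Ω : Type*} [Fintype Ω] [DecidableEq Ω] (C : Finset (Finset Ω)) {γ α δ : Ω} :
    δ ∈ Sset C γ α ↔ ({γ, α, δ} : Finset Ω) ∈ C := by
  simp [Sset]

lemma not_self_mem_Sset {Ω : Type*} [Fintype Ω] [DecidableEq Ω] (C : Finset (Finset Ω))
    (hC3 : ∀ c ∈ C, c.card = 3) (γ α : Ω) : α ∉ Sset C γ α := by
  rw [mem_Sset_s8]
  intro h
  have h3 := hC3 _ h
  have he : ({γ, α, α} : Finset Ω) = {γ, α} := by ext w; simp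
  rw [he] at h3
  have : ({γ, α} : Finset Ω).card ≤ 2 :=
    (card_insert_le _ _).trans (by simp)
  omega

lemma Sset_symm {Ω : Type*} [Fintype Ω] [DecidableEq Ω] (C : Finset (Finset Ω)) (γ α β : Ω) :
    β ∈ Sset C γ α ↔ α ∈ Sset C γ β := by
  rw [mem_Sset_s8, mem_Sset_s8]
  have : ({γ, α, β} : Finset Ω) = {γ, β, α} := by ext w; simp; tauto
  rw [this]

lemma triple_card' {Ω : Type*} [DecidableEq Ω] {x y z : Ω}
    (hxy : x ≠ y) (hxz : x ≠ z) (hyz : y ≠ z) : ({x, y, z} : Finset Ω).card = 3 := by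
  rw [card_insert_of_notMem (by simp [hxy, hxz]), card_insert_of_notMem (by simp [hyz]),
    card_singleton]

lemma count_a {Ω : Type*} [Fintype Ω] [DecidableEq Ω] (C : Finset (Finset Ω)) (a : ℕ)
    (hC3 : ∀ c ∈ C, c.card = 3)
    (ha : ∀ p : Finset Ω, p.card = 2 → (C.filter fun c => p ⊆ c).card = a)
    (Γ : Finset Ω) (hinc : ∀ t ⊆ Γ, t.card = 3 → t ∉ C)
    {α β : Ω} (hα : α ∈ Γ) (hβ : β ∈ Γ) (hne : α ≠ β) :
    ((univ \ Γ).filter fun γ => β ∈ Sset C γ α).card = a := by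
  have hpair : ({α, β} : Finset Ω).card = 2 := by
    rw [card_insert_of_notMem (by simp [hne]), card_singleton]
  rw [← ha {α, β} hpair]
  apply card_bij (fun γ _ => ({α, β, γ} : Finset Ω))
  · intro γ hγ
    rw [mem_filter, mem_sdiff] at hγ
    obtain ⟨⟨-, hγΓ⟩, hS⟩ := hγ
    rw [mem_Sset_s8] at hS
    rw [mem_filter]
    constructor
    · have : ({α, β, γ} : Finset Ω) = {γ, α, β} := by ext w; simp; tauto
      rw [this]; exact hS
    · intro w hw; simp at hw ⊢; tauto
  · intro γ₁ h₁ γ₂ h₂ heq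
    rw [mem_filter, mem_sdiff] at h₁ h₂
    have hm : γ₁ ∈ ({α, β, γ₂} : Finset Ω) := by
      rw [← heq]; simp
    simp only [mem_insert, mem_singleton] at hm
    rcases hm with h | h | h
    · exact absurd (h ▸ hα) h₁.1.2
    · exact absurd (h ▸ hβ) h₁.1.2
    · exact h
  · intro c hc
    rw [mem_filter] at hc
    obtain ⟨hcC, hsub⟩ := hc
    have hc3 : c.card = 3 := hC3 c hcC
    have hss : ({α, β} : Finset Ω) ⊂ c := by
      rw [Finset.ssubset_iff_subset_ne]
      refine ⟨hsub, fun h => by rw [← h] at hc3; omega⟩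
    obtain ⟨γ, hγc, hγp⟩ := exists_of_ssubset hss
    simp only [mem_insert, mem_singleton, not_or] at hγp
    obtain ⟨hγα, hγβ⟩ := hγp
    have hceq : ({α, β, γ} : Finset Ω) = c := by
      apply eq_of_subset_of_card_le
      · intro w hw
        simp only [mem_insert, mem_singleton] at hw
        rcases hw with h | h | h
        · exact h ▸ hsub (by simp)
        · exact h ▸ hsub (by simp)
        · exact h ▸ hγc
      · rw [hc3, triple_card' hne (Ne.symm hγα) (Ne.symm hγβ)]
    have hγΓ : γ ∉ Γ := by
      intro h
      exact hinc c (by rw [← hceq]; intro w hw; simp at hw; rcases hw with h'|h'|h' <;>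
        [exact h' ▸ hα; exact h' ▸ hβ; exact h' ▸ h]) hc3 hcC
    refine ⟨γ, ?_, hceq⟩
    rw [mem_filter, mem_sdiff]
    refine ⟨⟨mem_univ _, hγΓ⟩, ?_⟩
    rw [mem_Sset_s8]
    have : ({γ, α, β} : Finset Ω) = {α, β, γ} := by ext w; simp; tauto
    rw [this, hceq]
    exact hcC

lemma four_parity {Ω : Type*} [Fintype Ω] [DecidableEq Ω] (C : Finset (Finset Ω))
    (heven : ∀ Q : Finset Ω, Q.card = 4 →
      Even (((Q.powersetCard 3).filter (· ∈ C)).card))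
    {γ α δ ε : Ω} (hga : γ ≠ α) (hgd : γ ≠ δ) (hge : γ ≠ ε)
    (had : α ≠ δ) (hae : α ≠ ε) (hde : δ ≠ ε)
    (hout : ({α, δ, ε} : Finset Ω) ∉ C) :
    (({γ, δ, ε} : Finset Ω) ∈ C ↔
      ¬(({γ, α, δ} : Finset Ω) ∈ C ↔ ({γ, α, ε} : Finset Ω) ∈ C)) := by
  set Q : Finset Ω := {γ, α, δ, ε} with hQdef
  have hQcard : Q.card = 4 := by
    rw [hQdef, card_insert_of_notMem (by simp [hga, hgd, hge]),
      card_insert_of_notMem (by simp [had, hae]),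
      card_insert_of_notMem (by simp [hde]), card_singleton]
  have hpow : Q.powersetCard 3 =
      ({{α, δ, ε}, {γ, δ, ε}, {γ, α, ε}, {γ, α, δ}} : Finset (Finset Ω)) := by
    ext t
    simp only [mem_powersetCard, mem_insert, mem_singleton]
    constructor
    · rintro ⟨hsub, hcard⟩
      have h1 : (Q \ t).card = 1 := by rw [card_sdiff_of_subset hsub, hQcard, hcard]
      obtain ⟨x, hx⟩ := card_eq_one.mp h1
      have hxQ : x ∈ Q := by
        have : x ∈ Q \ t := by rw [hx]; exact mem_singleton_self x
        exact (mem_sdiff.mp this).1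
      have ht : t = Q \ {x} := by
        rw [← hx]; exact (Finset.sdiff_sdiff_eq_self hsub).symm
      rw [hQdef] at hxQ
      simp only [mem_insert, mem_singleton] at hxQ
      rcases hxQ with h | h | h | h <;> subst h
      · left
        rw [ht, hQdef]; ext w
        simp only [mem_sdiff, mem_insert, mem_singleton]
        constructor
        · rintro ⟨h, hw⟩; tauto
        · intro h
          exact ⟨by tauto, by rintro rfl; tauto⟩
      · right; left
        rw [ht, hQdef]; ext w
        simp only [mem_sdiff, mem_insert, mem_singleton]
        constructor
        · rintro ⟨h, hw⟩; tauto
        · intro h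
          exact ⟨by tauto, by rintro rfl; tauto⟩
      · right; right; left
        rw [ht, hQdef]; ext w
        simp only [mem_sdiff, mem_insert, mem_singleton]
        constructor
        · rintro ⟨h, hw⟩; tauto
        · intro h
          exact ⟨by tauto, by rintro rfl; tauto⟩
      · right; right; right
        rw [ht, hQdef]; ext w
        simp only [mem_sdiff, mem_insert, mem_singleton]
        constructor
        · rintro ⟨h, hw⟩; tauto
        · intro h
          exact ⟨by tauto, by rintro rfl; tauto⟩
    · rintro (h | h | h | h) <;> subst h <;>
        refine ⟨?_, triple_card' (by tauto) (by tauto) (by tauto)⟩ <;>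
        · intro y hy
          rw [hQdef]
          simp only [mem_insert, mem_singleton] at hy ⊢
          tauto
  have hev := heven Q hQcard
  rw [hpow] at hev
  have hne1 : ({α, δ, ε} : Finset Ω) ≠ {γ, δ, ε} := by
    intro h
    have : γ ∈ ({α, δ, ε} : Finset Ω) := by rw [h]; simp
    simp only [mem_insert, mem_singleton] at this
    rcases this with h' | h' | h'
    exacts [hga h', hgd h', hge h']
  have hne2 : ({α, δ, ε} : Finset Ω) ≠ {γ, α, ε} := by
    intro h
    have : γ ∈ ({α, δ, ε} : Finset Ω) := by rw [h]; simp
    simp only [mem_insert, mem_singleton] at this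
    rcases this with h' | h' | h'
    exacts [hga h', hgd h', hge h']
  have hne3 : ({α, δ, ε} : Finset Ω) ≠ {γ, α, δ} := by
    intro h
    have : γ ∈ ({α, δ, ε} : Finset Ω) := by rw [h]; simp
    simp only [mem_insert, mem_singleton] at this
    rcases this with h' | h' | h'
    exacts [hga h', hgd h', hge h']
  have hne4 : ({γ, δ, ε} : Finset Ω) ≠ {γ, α, ε} := by
    intro h
    have : δ ∈ ({γ, α, ε} : Finset Ω) := by rw [← h]; simp
    simp only [mem_insert, mem_singleton] at this
    rcases this with h' | h' | h'
    exacts [hgd h'.symm, had h'.symm, hde h']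
  have hne5 : ({γ, δ, ε} : Finset Ω) ≠ {γ, α, δ} := by
    intro h
    have : ε ∈ ({γ, α, δ} : Finset Ω) := by rw [← h]; simp
    simp only [mem_insert, mem_singleton] at this
    rcases this with h' | h' | h'
    exacts [hge h'.symm, hae h'.symm, hde h'.symm]
  have hne6 : ({γ, α, ε} : Finset Ω) ≠ {γ, α, δ} := by
    intro h
    have : ε ∈ ({γ, α, δ} : Finset Ω) := by rw [← h]; simp
    simp only [mem_insert, mem_singleton] at this
    rcases this with h' | h' | h'
    exacts [hge h'.symm, hae h'.symm, hde h'.symm]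
  rw [card_filter] at hev
  rw [sum_insert (by simp [hne1, hne2, hne3]), sum_insert (by simp [hne4, hne5]),
    sum_insert (by simp [hne6]), sum_singleton] at hev
  rw [if_neg hout] at hev
  by_cases h1 : ({γ, δ, ε} : Finset Ω) ∈ C <;>
    by_cases h2 : ({γ, α, ε} : Finset Ω) ∈ C <;>
    by_cases h3 : ({γ, α, δ} : Finset Ω) ∈ C <;>
    simp [h1, h2, h3] at hev ⊢ <;> tauto


lemma Sset_xor {Ω : Type*} [Fintype Ω] [DecidableEq Ω] (C : Finset (Finset Ω))
    (heven : ∀ Q : Finset Ω, Q.card = 4 →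
      Even (((Q.powersetCard 3).filter (· ∈ C)).card))
    (Γ : Finset Ω) (hinc : ∀ t ⊆ Γ, t.card = 3 → t ∉ C)
    {γ α δ ε : Ω} (hγ : γ ∉ Γ) (hα : α ∈ Γ) (hδ : δ ∈ Γ) (hε : ε ∈ Γ)
    (had : α ≠ δ) (hae : α ≠ ε) (hde : δ ≠ ε) :
    (ε ∈ Sset C γ δ ↔ ¬(δ ∈ Sset C γ α ↔ ε ∈ Sset C γ α)) := by
  have hga : γ ≠ α := fun h => hγ (h ▸ hα)
  have hgd : γ ≠ δ := fun h => hγ (h ▸ hδ)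
  have hge : γ ≠ ε := fun h => hγ (h ▸ hε)
  have hout : ({α, δ, ε} : Finset Ω) ∉ C :=
    hinc _ (by intro w hw; simp at hw; rcases hw with h|h|h <;>
      [exact h ▸ hα; exact h ▸ hδ; exact h ▸ hε]) (triple_card' had hae hde)
  rw [mem_Sset_s8, mem_Sset_s8, mem_Sset_s8]
  exact four_parity C heven hga hgd hge had hae hde hout

lemma count_pair {Ω : Type*} [Fintype Ω] [DecidableEq Ω] (C : Finset (Finset Ω)) (a : ℕ)
    (hC3 : ∀ c ∈ C, c.card = 3)
    (heven : ∀ Q : Finset Ω, Q.card = 4 →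
      Even (((Q.powersetCard 3).filter (· ∈ C)).card))
    (ha : ∀ p : Finset Ω, p.card = 2 → (C.filter fun c => p ⊆ c).card = a)
    (Γ : Finset Ω) (hinc : ∀ t ⊆ Γ, t.card = 3 → t ∉ C)
    {α δ ε : Ω} (hα : α ∈ Γ) (hδ : δ ∈ Γ) (hε : ε ∈ Γ)
    (had : α ≠ δ) (hae : α ≠ ε) (hde : δ ≠ ε) :
    2 * ((univ \ Γ).filter fun γ => δ ∈ Sset C γ α ∧ ε ∈ Sset C γ α).card = a := by
  set D := (univ \ Γ : Finset Ω) with hD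
  have h1 : ((D.filter fun γ => δ ∈ Sset C γ α).filter fun γ => ε ∈ Sset C γ α).card
      + ((D.filter fun γ => δ ∈ Sset C γ α).filter fun γ => ¬ ε ∈ Sset C γ α).card = a := by
    rw [card_filter_add_card_filter_not]
    exact count_a C a hC3 ha Γ hinc hα hδ had
  have h2 : ((D.filter fun γ => ε ∈ Sset C γ α).filter fun γ => δ ∈ Sset C γ α).card
      + ((D.filter fun γ => ε ∈ Sset C γ α).filter fun γ => ¬ δ ∈ Sset C γ α).card = a := by
    rw [card_filter_add_card_filter_not]
    exact count_a C a hC3 ha Γ hinc hα hε hae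
  have heq12 : ((D.filter fun γ => ε ∈ Sset C γ α).filter fun γ => δ ∈ Sset C γ α)
      = ((D.filter fun γ => δ ∈ Sset C γ α).filter fun γ => ε ∈ Sset C γ α) := by
    rw [filter_filter, filter_filter]
    exact filter_congr fun γ _ => by tauto
  have h3 : (D.filter fun γ => ε ∈ Sset C γ δ).card = a :=
    count_a C a hC3 ha Γ hinc hδ hε hde
  have h4 : (D.filter fun γ => ε ∈ Sset C γ δ)
      = ((D.filter fun γ => δ ∈ Sset C γ α).filter fun γ => ¬ ε ∈ Sset C γ α)
        ∪ ((D.filter fun γ => ε ∈ Sset C γ α).filter fun γ => ¬ δ ∈ Sset C γ α) := by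
    rw [filter_filter, filter_filter, ← filter_or]
    apply filter_congr
    intro γ hγD
    have hγ : γ ∉ Γ := (mem_sdiff.mp hγD).2
    have := Sset_xor C heven Γ hinc hγ hα hδ hε had hae hde
    rw [this]
    tauto
  have h5 : Disjoint ((D.filter fun γ => δ ∈ Sset C γ α).filter fun γ => ¬ ε ∈ Sset C γ α)
      ((D.filter fun γ => ε ∈ Sset C γ α).filter fun γ => ¬ δ ∈ Sset C γ α) := by
    rw [filter_filter, filter_filter]
    rw [disjoint_filter]
    intro γ _ h h'
    tauto
  have h6 : (D.filter fun γ => ε ∈ Sset C γ δ).card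
      = ((D.filter fun γ => δ ∈ Sset C γ α).filter fun γ => ¬ ε ∈ Sset C γ α).card
        + ((D.filter fun γ => ε ∈ Sset C γ α).filter fun γ => ¬ δ ∈ Sset C γ α).card := by
    rw [h4, card_union_of_disjoint h5]
  rw [heq12] at h2
  rw [h3] at h6
  simp only [filter_filter] at h1 h2 h6
  omega

lemma my_ite_mul_ite (p q : Prop) [Decidable p] [Decidable q] :
    (if p then (1:ℕ) else 0) * (if q then (1:ℕ) else 0) = if p ∧ q then 1 else 0 := by
  by_cases hp : p <;> by_cases hq : q <;> simp [hp, hq]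

lemma card_inter_as_sum {Ω : Type*} [Fintype Ω] [DecidableEq Ω] (Γ S : Finset Ω) :
    (Γ ∩ S).card = ∑ δ ∈ Γ, if δ ∈ S then 1 else 0 := by
  rw [← filter_mem_eq_inter, card_filter]

lemma sum_E1 {Ω : Type*} [Fintype Ω] [DecidableEq Ω] (C : Finset (Finset Ω)) (a : ℕ)
    (hC3 : ∀ c ∈ C, c.card = 3)
    (ha : ∀ p : Finset Ω, p.card = 2 → (C.filter fun c => p ⊆ c).card = a)
    (Γ : Finset Ω) (hinc : ∀ t ⊆ Γ, t.card = 3 → t ∉ C)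
    {α : Ω} (hα : α ∈ Γ) :
    ∑ γ ∈ univ \ Γ, (Γ ∩ Sset C γ α).card = (Γ.card - 1) * a := by
  have step1 : ∑ γ ∈ univ \ Γ, (Γ ∩ Sset C γ α).card
      = ∑ δ ∈ Γ, ((univ \ Γ).filter fun γ => δ ∈ Sset C γ α).card := by
    simp_rw [card_inter_as_sum, card_filter]
    exact sum_comm
  rw [step1, ← Finset.add_sum_erase _ _ hα]
  have hz : ((univ \ Γ).filter fun γ => α ∈ Sset C γ α).card = 0 := by
    rw [card_eq_zero, filter_eq_empty_iff]
    exact fun γ _ => not_self_mem_Sset C hC3 γ α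
  rw [hz, zero_add]
  rw [sum_congr rfl fun δ hδ => count_a C a hC3 ha Γ hinc hα (mem_of_mem_erase hδ)
    (fun h => (mem_erase.mp hδ).1 h.symm)]
  rw [sum_const, card_erase_of_mem hα, smul_eq_mul]

lemma sum_E2 {Ω : Type*} [Fintype Ω] [DecidableEq Ω] (C : Finset (Finset Ω)) (a : ℕ)
    (hC3 : ∀ c ∈ C, c.card = 3)
    (heven : ∀ Q : Finset Ω, Q.card = 4 →
      Even (((Q.powersetCard 3).filter (· ∈ C)).card))
    (ha : ∀ p : Finset Ω, p.card = 2 → (C.filter fun c => p ⊆ c).card = a)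
    (Γ : Finset Ω) (hinc : ∀ t ⊆ Γ, t.card = 3 → t ∉ C)
    {α : Ω} (hα : α ∈ Γ) :
    2 * ∑ γ ∈ univ \ Γ, (Γ ∩ Sset C γ α).card * (Γ ∩ Sset C γ α).card
      = (Γ.card - 1) * (Γ.card * a) := by
  have step1 : ∑ γ ∈ univ \ Γ, (Γ ∩ Sset C γ α).card * (Γ ∩ Sset C γ α).card
      = ∑ δ ∈ Γ, ∑ ε ∈ Γ,
          ((univ \ Γ).filter fun γ => δ ∈ Sset C γ α ∧ ε ∈ Sset C γ α).card := by
    have h1 : ∀ γ : Ω, (Γ ∩ Sset C γ α).card * (Γ ∩ Sset C γ α).card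
        = ∑ δ ∈ Γ, ∑ ε ∈ Γ, if δ ∈ Sset C γ α ∧ ε ∈ Sset C γ α then 1 else 0 := by
      intro γ
      rw [card_inter_as_sum, sum_mul_sum]
      exact sum_congr rfl fun δ _ => sum_congr rfl fun ε _ => my_ite_mul_ite _ _
    simp_rw [h1, card_filter]
    rw [sum_comm]
    exact sum_congr rfl fun δ _ => sum_comm
  rw [step1]
  -- inner sums
  have inner : ∀ δ ∈ Γ.erase α, 2 * ∑ ε ∈ Γ,
      ((univ \ Γ).filter fun γ => δ ∈ Sset C γ α ∧ ε ∈ Sset C γ α).card = Γ.card * a := by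
    intro δ hδ
    obtain ⟨hδα, hδΓ⟩ := mem_erase.mp hδ
    rw [← Finset.add_sum_erase _ _ hα]
    have hz : ((univ \ Γ).filter fun γ => δ ∈ Sset C γ α ∧ α ∈ Sset C γ α).card = 0 := by
      rw [card_eq_zero, filter_eq_empty_iff]
      exact fun γ _ h => not_self_mem_Sset C hC3 γ α h.2
    rw [hz, zero_add, ← Finset.add_sum_erase _ _ (mem_erase.mpr ⟨hδα, hδΓ⟩), mul_add]
    have hd : ((univ \ Γ).filter fun γ => δ ∈ Sset C γ α ∧ δ ∈ Sset C γ α).card = a := by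
      rw [show ((univ \ Γ).filter fun γ => δ ∈ Sset C γ α ∧ δ ∈ Sset C γ α)
          = ((univ \ Γ).filter fun γ => δ ∈ Sset C γ α) from filter_congr fun γ _ => by tauto]
      exact count_a C a hC3 ha Γ hinc hα hδΓ (fun h => hδα h.symm)
    rw [hd]
    have hrest : ∀ ε ∈ (Γ.erase α).erase δ,
        2 * ((univ \ Γ).filter fun γ => δ ∈ Sset C γ α ∧ ε ∈ Sset C γ α).card = a := by
      intro ε hε
      have hεδ : ε ≠ δ := (mem_erase.mp hε).1
      have hεα : ε ≠ α := (mem_erase.mp (mem_of_mem_erase hε)).1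
      have hεΓ : ε ∈ Γ := mem_of_mem_erase (mem_of_mem_erase hε)
      exact count_pair C a hC3 heven ha Γ hinc hα hδΓ hεΓ (fun h => hδα h.symm)
        (fun h => hεα h.symm) (fun h => hεδ h.symm)
    rw [mul_sum, sum_congr rfl hrest, sum_const, smul_eq_mul,
      card_erase_of_mem (mem_erase.mpr ⟨hδα, hδΓ⟩), card_erase_of_mem hα]
    have hg2 : 2 ≤ Γ.card := by
      have := card_le_card (show ({α, δ} : Finset Ω) ⊆ Γ by
        intro w hw; simp at hw; rcases hw with h|h; exacts [h ▸ hα, h ▸ hδΓ])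
      rw [card_insert_of_notMem (by simp; exact fun h => hδα h.symm), card_singleton] at this
      omega
    have : 2 * a + (Γ.card - 1 - 1) * a = Γ.card * a := by
      obtain ⟨k, hk⟩ := Nat.exists_eq_add_of_le hg2
      rw [hk]
      have h22 : 2 + k - 1 - 1 = k := by omega
      rw [h22]
      ring
    omega
  rw [mul_sum, ← Finset.add_sum_erase _ _ hα]
  have hz2 : 2 * ∑ ε ∈ Γ, ((univ \ Γ).filter fun γ => α ∈ Sset C γ α ∧ ε ∈ Sset C γ α).card
      = 0 := by
    rw [mul_eq_zero]
    right
    apply sum_eq_zero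
    intro ε _
    rw [card_eq_zero, filter_eq_empty_iff]
    exact fun γ _ h => not_self_mem_Sset C hC3 γ α h.1
  rw [hz2, zero_add, sum_congr rfl inner, sum_const, smul_eq_mul, card_erase_of_mem hα]

lemma part_swap {Ω : Type*} [Fintype Ω] [DecidableEq Ω] (C : Finset (Finset Ω))
    (hC3 : ∀ c ∈ C, c.card = 3)
    (heven : ∀ Q : Finset Ω, Q.card = 4 →
      Even (((Q.powersetCard 3).filter (· ∈ C)).card))
    (Γ : Finset Ω) (hinc : ∀ t ⊆ Γ, t.card = 3 → t ∉ C)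
    {γ α β : Ω} (hγ : γ ∉ Γ) (hα : α ∈ Γ) (hβ : β ∈ Γ) (hne : α ≠ β)
    (hβS : β ∈ Sset C γ α) :
    Γ ∩ Sset C γ β = Γ \ Sset C γ α := by
  ext w
  simp only [mem_inter, mem_sdiff]
  constructor
  · rintro ⟨hw, hwS⟩
    refine ⟨hw, ?_⟩
    by_cases hwα : w = α
    · exact hwα ▸ not_self_mem_Sset C hC3 γ α
    by_cases hwβ : w = β
    · exact absurd hwS (hwβ ▸ not_self_mem_Sset C hC3 γ β)
    have hx := Sset_xor C heven Γ hinc hγ hα hβ hw hne (fun h => hwα h.symm)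
      (fun h => hwβ h.symm)
    rw [hx] at hwS
    tauto
  · rintro ⟨hw, hwS⟩
    refine ⟨hw, ?_⟩
    by_cases hwα : w = α
    · subst hwα
      rw [Sset_symm]
      exact hβS
    by_cases hwβ : w = β
    · exact absurd hβS (hwβ ▸ hwS)
    have hx := Sset_xor C heven Γ hinc hγ hα hβ hw hne (fun h => hwα h.symm)
      (fun h => hwβ h.symm)
    rw [hx]
    tauto

lemma sum_E3 {Ω : Type*} [Fintype Ω] [DecidableEq Ω] (C : Finset (Finset Ω)) (a : ℕ)
    (hC3 : ∀ c ∈ C, c.card = 3)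
    (heven : ∀ Q : Finset Ω, Q.card = 4 →
      Even (((Q.powersetCard 3).filter (· ∈ C)).card))
    (ha : ∀ p : Finset Ω, p.card = 2 → (C.filter fun c => p ⊆ c).card = a)
    (Γ : Finset Ω) (hinc : ∀ t ⊆ Γ, t.card = 3 → t ∉ C)
    {α β : Ω} (hα : α ∈ Γ) (hβ : β ∈ Γ) (hne : α ≠ β) :
    2 * ∑ γ ∈ (univ \ Γ).filter (fun γ => β ∈ Sset C γ α), (Γ ∩ Sset C γ α).card
      = Γ.card * a := by
  have step1 : ∑ γ ∈ (univ \ Γ).filter (fun γ => β ∈ Sset C γ α), (Γ ∩ Sset C γ α).card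
      = ∑ δ ∈ Γ, ((univ \ Γ).filter fun γ => β ∈ Sset C γ α ∧ δ ∈ Sset C γ α).card := by
    simp_rw [card_inter_as_sum]
    rw [sum_comm]
    exact sum_congr rfl fun δ _ => by rw [← card_filter, filter_filter]
  rw [step1, ← Finset.add_sum_erase _ _ hα]
  have hz : ((univ \ Γ).filter fun γ => β ∈ Sset C γ α ∧ α ∈ Sset C γ α).card = 0 := by
    rw [card_eq_zero, filter_eq_empty_iff]
    exact fun γ _ h => not_self_mem_Sset C hC3 γ α h.2
  have hβe : β ∈ Γ.erase α := mem_erase.mpr ⟨fun h => hne h.symm, hβ⟩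
  rw [hz, zero_add, ← Finset.add_sum_erase _ _ hβe, mul_add]
  have hd : ((univ \ Γ).filter fun γ => β ∈ Sset C γ α ∧ β ∈ Sset C γ α).card = a := by
    rw [show ((univ \ Γ).filter fun γ => β ∈ Sset C γ α ∧ β ∈ Sset C γ α)
        = ((univ \ Γ).filter fun γ => β ∈ Sset C γ α) from filter_congr fun γ _ => by tauto]
    exact count_a C a hC3 ha Γ hinc hα hβ hne
  rw [hd]
  have hrest : ∀ ε ∈ (Γ.erase α).erase β,
      2 * ((univ \ Γ).filter fun γ => β ∈ Sset C γ α ∧ ε ∈ Sset C γ α).card = a := by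
    intro ε hε
    have hεβ : ε ≠ β := (mem_erase.mp hε).1
    have hεα : ε ≠ α := (mem_erase.mp (mem_of_mem_erase hε)).1
    have hεΓ : ε ∈ Γ := mem_of_mem_erase (mem_of_mem_erase hε)
    exact count_pair C a hC3 heven ha Γ hinc hα hβ hεΓ hne (fun h => hεα h.symm)
      (fun h => hεβ h.symm)
  rw [mul_sum, sum_congr rfl hrest, sum_const, smul_eq_mul,
    card_erase_of_mem hβe, card_erase_of_mem hα]
  have hg2 : 2 ≤ Γ.card := by
    have := card_le_card (show ({α, β} : Finset Ω) ⊆ Γ by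
      intro w hw; simp at hw; rcases hw with h|h; exacts [h ▸ hα, h ▸ hβ])
    rw [card_insert_of_notMem (by simp [hne]), card_singleton] at this
    omega
  obtain ⟨k, hk⟩ := Nat.exists_eq_add_of_le hg2
  rw [hk]
  have h22 : 2 + k - 1 - 1 = k := by omega
  rw [h22]
  ring


/-- **Theorem 4.9 (Gillespie).** If every element `γ ∉ Γ` induces a partition of the maximal
incoherent set `Γ` into parts of sizes `g₁` and `g - g₁`, then the parts form 2-designs on
`Γ` (with the stated replication counts). -/
theorem stmt_8 {Ω : Type*} [Fintype Ω] [DecidableEq Ω]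
    (C : Finset (Finset Ω)) (n a b : ℕ)
    (hC3 : ∀ c ∈ C, c.card = 3)
    (heven : ∀ Q : Finset Ω, Q.card = 4 →
      Even (((Q.powersetCard 3).filter (· ∈ C)).card))
    (hn : Fintype.card Ω = n)
    (ha : ∀ p : Finset Ω, p.card = 2 → (C.filter fun c => p ⊆ c).card = a)
    (hb : ∀ c ∈ C, (((univ : Finset Ω).powersetCard 4).filter
      (fun Q => c ⊆ Q ∧ ∀ t ∈ Q.powersetCard 3, t ∈ C)).card = b)
    (Γ : Finset Ω) (g : ℕ) (hg : Γ.card = g)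
    (hinc : ∀ t ⊆ Γ, t.card = 3 → t ∉ C)
    (hmax : ∀ γ : Ω, γ ∉ Γ → ∃ α ∈ Γ, ∃ β ∈ Γ, ({γ, α, β} : Finset Ω) ∈ C)
    (g₁ : ℕ)
    (hpart : ∀ γ : Ω, γ ∉ Γ → ∀ α ∈ Γ,
      (Γ ∩ Sset C γ α).card = g₁ ∨ (Γ ∩ Sset C γ α).card = g - g₁) :
    (2 * g₁ ≠ g →
      ∀ α ∈ Γ, ∀ β ∈ Γ, α ≠ β →
        2 * ((g : ℤ) - g₁) *
            (((univ \ Γ).filter fun γ =>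
              β ∉ Sset C γ α ∧ (Γ \ Sset C γ α).card = g₁).card : ℤ)
          = a * ((g₁ : ℤ) - 1) ∧
        2 * (g₁ : ℤ) *
            (((univ \ Γ).filter fun γ =>
              β ∉ Sset C γ α ∧ (Γ \ Sset C γ α).card = g - g₁).card : ℤ)
          = a * ((g : ℤ) - g₁ - 1)) ∧
    (2 * g₁ = g →
      ∀ α ∈ Γ, ∀ β ∈ Γ, α ≠ β →
        (((univ \ Γ).filter fun γ => β ∉ Sset C γ α).card : ℤ)
          = (n : ℤ) - g - a) := by
  constructor
  · -- main case
    intro h2g α hα β hβ hne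
    by_cases hg1 : g₁ ≤ g
    · -- the generic case
      have hg2 : 2 ≤ g := by
        rw [← hg]
        have := card_le_card (show ({α, β} : Finset Ω) ⊆ Γ by
          intro w hw; simp at hw; rcases hw with h|h; exacts [h ▸ hα, h ▸ hβ])
        rw [card_insert_of_notMem (by simp [hne]), card_singleton] at this
        omega
      -- dichotomy facts
      have hcards : ∀ γ : Ω, (Γ \ Sset C γ α).card + (Γ ∩ Sset C γ α).card = g := by
        intro γ
        rw [card_sdiff_add_card_inter, hg]
      have hdichot : ∀ γ ∈ univ \ Γ, (Γ \ Sset C γ α).card = g₁ ∨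
          (Γ \ Sset C γ α).card = g - g₁ := by
        intro γ hγ
        have hγΓ : γ ∉ Γ := (mem_sdiff.mp hγ).2
        have := hpart γ hγΓ α hα
        have h' := hcards γ
        omega
      have hP12 : ∀ γ : Ω, ¬((Γ \ Sset C γ α).card = g₁ ∧ (Γ \ Sset C γ α).card = g - g₁) := by
        intro γ ⟨h1', h2'⟩
        omega
      have hc1 : ∀ γ : Ω, (Γ \ Sset C γ α).card = g₁ → (Γ ∩ Sset C γ α).card = g - g₁ := by
        intro γ h
        have := hcards γ
        omega
      have hc2 : ∀ γ : Ω, (Γ \ Sset C γ α).card = g - g₁ → (Γ ∩ Sset C γ α).card = g₁ := by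
        intro γ h
        have := hcards γ
        omega
      -- sum splitting
      have key : ∀ E : Finset Ω, E ⊆ univ \ Γ → ∀ f : Ω → ℕ,
          ∑ γ ∈ E, f γ =
            (∑ γ ∈ E.filter (fun γ => (Γ \ Sset C γ α).card = g₁), f γ)
            + ∑ γ ∈ E.filter (fun γ => (Γ \ Sset C γ α).card = g - g₁), f γ := by
        intro E hE f
        rw [← sum_union (disjoint_filter.mpr fun γ _ h1' h2' => hP12 γ ⟨h1', h2'⟩)]
        congr 1
        rw [← filter_or, filter_true_of_mem fun γ hγ => hdichot γ (hE hγ)]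
      -- the counts
      set n₁ := ((univ \ Γ).filter (fun γ => (Γ \ Sset C γ α).card = g₁)).card with hn₁
      set n₂ := ((univ \ Γ).filter (fun γ => (Γ \ Sset C γ α).card = g - g₁)).card with hn₂
      set F := (univ \ Γ).filter (fun γ => β ∈ Sset C γ α) with hF
      set s := (F.filter (fun γ => (Γ \ Sset C γ α).card = g₁)).card with hs
      set t := (F.filter (fun γ => (Γ \ Sset C γ α).card = g - g₁)).card with ht
      set x := ((univ \ Γ).filter (fun γ =>
        β ∉ Sset C γ α ∧ (Γ \ Sset C γ α).card = g₁)).card with hx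
      set y := ((univ \ Γ).filter (fun γ =>
        β ∉ Sset C γ α ∧ (Γ \ Sset C γ α).card = g - g₁)).card with hy
      have hFsub : F ⊆ univ \ Γ := filter_subset _ _
      have constsum : ∀ (E : Finset Ω) (f : Ω → ℕ) (v : ℕ), (∀ γ ∈ E, f γ = v) →
          ∑ γ ∈ E, f γ = E.card * v := fun E f v hv => by
        rw [← smul_eq_mul, ← sum_const]
        exact sum_congr rfl hv
      -- (A)
      have hA : n₁ * (g - g₁) + n₂ * g₁ = (g - 1) * a := by
        have h1' := sum_E1 C a hC3 ha Γ hinc hα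
        rw [hg, key _ (Finset.Subset.refl _),
          constsum _ _ (g - g₁) (fun γ hγ => hc1 γ (mem_filter.mp hγ).2),
          constsum _ _ g₁ (fun γ hγ => hc2 γ (mem_filter.mp hγ).2)] at h1'
        exact h1'
      -- (B)
      have hB : 2 * (n₁ * ((g - g₁) * (g - g₁)) + n₂ * (g₁ * g₁)) = (g - 1) * (g * a) := by
        have h1' := sum_E2 C a hC3 heven ha Γ hinc hα
        rw [hg, key _ (Finset.Subset.refl _),
          constsum _ _ ((g - g₁) * (g - g₁)) (fun γ hγ => by
            rw [hc1 γ (mem_filter.mp hγ).2]),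
          constsum _ _ (g₁ * g₁) (fun γ hγ => by
            rw [hc2 γ (mem_filter.mp hγ).2])] at h1'
        exact h1'
      -- (C)
      have hC' : s + t = a := by
        have h1' : F.card = a := count_a C a hC3 ha Γ hinc hα hβ hne
        rw [← h1', ← card_union_of_disjoint
          (disjoint_filter.mpr fun γ _ h1'' h2'' => hP12 γ ⟨h1'', h2''⟩)]
        congr 1
        rw [← filter_or, filter_true_of_mem fun γ hγ => hdichot γ (hFsub hγ)]
      -- (D)
      have hD : 2 * (s * (g - g₁) + t * g₁) = g * a := by
        have h1' := sum_E3 C a hC3 heven ha Γ hinc hα hβ hne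
        rw [hg, key _ hFsub,
          constsum _ _ (g - g₁) (fun γ hγ => hc1 γ (mem_filter.mp hγ).2),
          constsum _ _ g₁ (fun γ hγ => hc2 γ (mem_filter.mp hγ).2)] at h1'
        exact h1'
      -- (D')
      have hD' : 2 * (s * g₁ + t * (g - g₁)) = g * a := by
        have h1' := sum_E3 C a hC3 heven ha Γ hinc hβ hα (Ne.symm hne)
        have hFF : (univ \ Γ).filter (fun γ => α ∈ Sset C γ β) = F := by
          rw [hF]
          exact filter_congr fun γ _ => by rw [Sset_symm]
        rw [hg, hFF] at h1'
        have hswap : ∀ γ ∈ F, (Γ ∩ Sset C γ β).card = (Γ \ Sset C γ α).card := by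
          intro γ hγ
          obtain ⟨hγD, hγS⟩ := mem_filter.mp hγ
          rw [part_swap C hC3 heven Γ hinc (mem_sdiff.mp hγD).2 hα hβ hne hγS]
        rw [sum_congr rfl hswap, key _ hFsub,
          constsum _ _ g₁ (fun γ hγ => (mem_filter.mp hγ).2),
          constsum _ _ (g - g₁) (fun γ hγ => (mem_filter.mp hγ).2)] at h1'
        exact h1'
      -- (E)
      have hE1 : x + s = n₁ := by
        have h1' := card_filter_add_card_filter_not
          (s := (univ \ Γ).filter (fun γ => (Γ \ Sset C γ α).card = g₁))
          (p := fun γ => β ∈ Sset C γ α)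
        rw [filter_filter, filter_filter] at h1'
        rw [hx, hs, hF, filter_filter, hn₁]
        rw [show ((univ \ Γ).filter fun γ => β ∉ Sset C γ α ∧ (Γ \ Sset C γ α).card = g₁)
            = ((univ \ Γ).filter fun γ => (Γ \ Sset C γ α).card = g₁ ∧ ¬ β ∈ Sset C γ α)
            from filter_congr fun γ _ => by tauto,
          show ((univ \ Γ).filter fun γ => β ∈ Sset C γ α ∧ (Γ \ Sset C γ α).card = g₁)
            = ((univ \ Γ).filter fun γ => (Γ \ Sset C γ α).card = g₁ ∧ β ∈ Sset C γ α)
            from filter_congr fun γ _ => by tauto]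
        omega
      have hE2 : y + t = n₂ := by
        have h1' := card_filter_add_card_filter_not
          (s := (univ \ Γ).filter (fun γ => (Γ \ Sset C γ α).card = g - g₁))
          (p := fun γ => β ∈ Sset C γ α)
        rw [filter_filter, filter_filter] at h1'
        rw [hy, ht, hF, filter_filter, hn₂]
        rw [show ((univ \ Γ).filter fun γ => β ∉ Sset C γ α ∧ (Γ \ Sset C γ α).card = g - g₁)
            = ((univ \ Γ).filter fun γ => (Γ \ Sset C γ α).card = g - g₁ ∧ ¬ β ∈ Sset C γ α)
            from filter_congr fun γ _ => by tauto,
          show ((univ \ Γ).filter fun γ => β ∈ Sset C γ α ∧ (Γ \ Sset C γ α).card = g - g₁)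
            = ((univ \ Γ).filter fun γ => (Γ \ Sset C γ α).card = g - g₁ ∧ β ∈ Sset C γ α)
            from filter_congr fun γ _ => by tauto]
        omega
      -- move to ℤ
      have hgz : ((g - g₁ : ℕ) : ℤ) = (g : ℤ) - g₁ := by omega
      have hg1z : ((g - 1 : ℕ) : ℤ) = (g : ℤ) - 1 := by omega
      have hAZ : (n₁ : ℤ) * ((g:ℤ) - g₁) + n₂ * g₁ = ((g:ℤ) - 1) * a := by
        have := congrArg (Nat.cast : ℕ → ℤ) hA
        push_cast at this
        rw [hgz, hg1z] at this
        exact this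
      have hBZ : 2 * ((n₁:ℤ) * (((g:ℤ) - g₁) * ((g:ℤ) - g₁)) + n₂ * ((g₁:ℤ) * g₁))
          = ((g:ℤ) - 1) * (g * a) := by
        have := congrArg (Nat.cast : ℕ → ℤ) hB
        push_cast at this
        rw [hgz, hg1z] at this
        exact this
      have hCZ : (s : ℤ) + t = a := by exact_mod_cast hC'
      have hDZ : 2 * ((s:ℤ) * ((g:ℤ) - g₁) + t * g₁) = (g:ℤ) * a := by
        have := congrArg (Nat.cast : ℕ → ℤ) hD
        push_cast at this
        rw [hgz] at this
        exact this
      have hD'Z : 2 * ((s:ℤ) * g₁ + t * ((g:ℤ) - g₁)) = (g:ℤ) * a := by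
        have := congrArg (Nat.cast : ℕ → ℤ) hD'
        push_cast at this
        rw [hgz] at this
        exact this
      have hE1Z : (x : ℤ) + s = n₁ := by exact_mod_cast hE1
      have hE2Z : (y : ℤ) + t = n₂ := by exact_mod_cast hE2
      have h2gZ : (g:ℤ) - 2 * g₁ ≠ 0 := by
        intro h
        apply h2g
        omega
      -- s = t
      have hst : (s : ℤ) = t := by
        have hfac : ((s:ℤ) - t) * (2 * ((g:ℤ) - 2 * g₁)) = 0 := by
          linear_combination hDZ - hD'Z
        rcases mul_eq_zero.mp hfac with h | h
        · linarith [h]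
        · exfalso; apply h2gZ; linarith [h]
      have h2sZ : 2 * (s:ℤ) = a := by linarith
      have h2tZ : 2 * (t:ℤ) = a := by linarith
      -- n₁, n₂ values
      have hN1 : 2 * (n₁:ℤ) * ((g:ℤ) - g₁) = ((g:ℤ) - 1) * a := by
        have hfac : (2 * (n₁:ℤ) * ((g:ℤ) - g₁) - ((g:ℤ) - 1) * a) * ((g:ℤ) - 2 * g₁) = 0 := by
          linear_combination hBZ - 2 * (g₁:ℤ) * hAZ
        rcases mul_eq_zero.mp hfac with h | h
        · linarith [h]
        · exact absurd h h2gZ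
      have hN2 : 2 * (n₂:ℤ) * (g₁:ℤ) = ((g:ℤ) - 1) * a := by
        have hfac : (2 * (n₂:ℤ) * (g₁:ℤ) - ((g:ℤ) - 1) * a) * ((g:ℤ) - 2 * g₁) = 0 := by
          linear_combination 2 * ((g:ℤ) - g₁) * hAZ - hBZ
        rcases mul_eq_zero.mp hfac with h | h
        · linarith [h]
        · exact absurd h h2gZ
      constructor
      · linear_combination hN1 + 2 * ((g:ℤ) - g₁) * hE1Z - ((g:ℤ) - g₁) * h2sZ
      · linear_combination hN2 + 2 * (g₁:ℤ) * hE2Z - (g₁:ℤ) * h2tZ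
    · -- degenerate case g₁ > g : Ω \ Γ is empty and a = 0
      have hDempty : (univ \ Γ : Finset Ω) = ∅ := by
        by_contra h
        obtain ⟨γ, hγ⟩ := nonempty_iff_ne_empty.mpr h
        have hγΓ : γ ∉ Γ := (mem_sdiff.mp hγ).2
        obtain ⟨α', hα', β', hβ', hc⟩ := hmax γ hγΓ
        rcases hpart γ hγΓ α' hα' with h' | h'
        · have : (Γ ∩ Sset C γ α').card ≤ g := by
            rw [← hg]
            exact card_le_card inter_subset_left
          omega
        · have hempty : Γ ∩ Sset C γ α' = ∅ := by
            rw [← card_eq_zero, h']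
            omega
          have : β' ∈ Γ ∩ Sset C γ α' :=
            mem_inter.mpr ⟨hβ', (mem_Sset_s8 C).mpr hc⟩
          rw [hempty] at this
          exact absurd this (notMem_empty β')
      have ha0 : a = 0 := by
        have := count_a C a hC3 ha Γ hinc hα hβ hne
        rw [hDempty, filter_empty, card_empty] at this
        omega
      rw [hDempty, filter_empty, filter_empty, card_empty, ha0]
      norm_num
  · -- the 2g₁ = g case
    intro h2g α hα β hβ hne
    have hfa := count_a C a hC3 ha Γ hinc hα hβ hne
    have hD : (univ \ Γ : Finset Ω).card = n - g := by
      rw [card_sdiff_of_subset (subset_univ Γ), card_univ, hn, hg]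
    have hgn : g ≤ n := by
      rw [← hn, ← hg]
      exact card_le_univ Γ
    have hcount : (((univ \ Γ).filter fun γ => β ∉ Sset C γ α)).card + a = n - g := by
      rw [← hfa, ← hD, add_comm]
      exact card_filter_add_card_filter_not (p := fun γ => β ∈ Sset C γ α)
    clear * - hcount hgn
    omega
end

section
/- Let d, k, s₁, s₂ be natural numbers with 0 ≤ s₂ < s₁ < k ≤ d, let P be a set of d points (identified with Fin d), and let 𝓑 be a finite set of k-element subsets of P such that any two distinct members of 𝓑 intersect in exactly s₁ or exactly s₂ points. Assume Δ₁ := k² − d(s₁+s₂)/2 ≥ 0 (as a real number), and for each B ∈ 𝓑 define v(B) ∈ EuclideanSpace ℝ (Fin d) by v(B)_j = (d − k) + √Δ₁ if j ∈ B and v(B)_j = −k + √Δ₁ if j ∉ B. Then ⟪v(B), v(B)⟫ = d²(2k − s₁ − s₂)/2 for every B ∈ 𝓑, and for distinct B₁, B₂ ∈ 𝓑, ⟪v(B₁), v(B₂)⟫ = d²(s₁−s₂)/2 if |B₁ ∩ B₂| = s₁ and ⟪v(B₁), v(B₂)⟫ = −d²(s₁−s₂)/2 if |B₁ ∩ B₂|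 = s₂. Consequently the vectors v(B) span |𝓑| distinct equiangular lines in ℝ^d with common angle κ = (s₁−s₂)/(2k − s₁ − s₂). -/
open scoped RealInnerProductSpace
open Finset

/-- **Theorem 6.2 (Gillespie).** From a `(d, k; s₁, s₂)` block set with
`Δ₁ = k² - d(s₁+s₂)/2 ≥ 0` one constructs vectors `v(B)` spanning `|𝓑|` distinct
equiangular lines in `ℝ^d` with common angle `κ = (s₁-s₂)/(2k-s₁-s₂)`. -/
theorem stmt_10 (d k s₁ s₂ : ℕ) (hs₂s₁ : s₂ < s₁) (hs₁k : s₁ < k) (hkd : k ≤ d)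
    (𝓑 : Finset (Finset (Fin d)))
    (hcard : ∀ B ∈ 𝓑, B.card = k)
    (hint : ∀ B₁ ∈ 𝓑, ∀ B₂ ∈ 𝓑, B₁ ≠ B₂ →
      (B₁ ∩ B₂).card = s₁ ∨ (B₁ ∩ B₂).card = s₂)
    (hΔ : 0 ≤ (k : ℝ) ^ 2 - d * (s₁ + s₂) / 2)
    (v : Finset (Fin d) → EuclideanSpace ℝ (Fin d))
    (hv : ∀ B ∈ 𝓑, ∀ j : Fin d,
      v B j = if j ∈ B then ((d : ℝ) - k) + Real.sqrt ((k : ℝ) ^ 2 - d * (s₁ + s₂) / 2)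
        else -(k : ℝ) + Real.sqrt ((k : ℝ) ^ 2 - d * (s₁ + s₂) / 2)) :
    (∀ B ∈ 𝓑, ⟪v B, v B⟫ = (d : ℝ) ^ 2 * (2 * k - s₁ - s₂) / 2) ∧
    (∀ B₁ ∈ 𝓑, ∀ B₂ ∈ 𝓑, B₁ ≠ B₂ →
      ((B₁ ∩ B₂).card = s₁ → ⟪v B₁, v B₂⟫ = (d : ℝ) ^ 2 * ((s₁ : ℝ) - s₂) / 2) ∧
      ((B₁ ∩ B₂).card = s₂ → ⟪v B₁, v B₂⟫ = -((d : ℝ) ^ 2 * ((s₁ : ℝ) - s₂) / 2))) ∧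
    (∀ B₁ ∈ 𝓑, ∀ B₂ ∈ 𝓑, B₁ ≠ B₂ →
      |⟪v B₁, v B₂⟫| =
        (((s₁ : ℝ) - s₂) / (2 * k - s₁ - s₂)) * ‖v B₁‖ * ‖v B₂‖) ∧
    (∀ B₁ ∈ 𝓑, ∀ B₂ ∈ 𝓑, B₁ ≠ B₂ → ∀ t : ℝ, v B₁ ≠ t • v B₂) := by
  set r : ℝ := Real.sqrt ((k : ℝ) ^ 2 - d * (s₁ + s₂) / 2) with hr_def
  have hr2 : r ^ 2 = (k : ℝ) ^ 2 - d * (s₁ + s₂) / 2 := Real.sq_sqrt hΔ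
  have hd0 : (0 : ℝ) < d := by
    have : 0 < k := lt_trans (Nat.lt_of_le_of_lt (Nat.zero_le _) hs₂s₁) hs₁k
    exact_mod_cast lt_of_lt_of_le this hkd
  have hden : (0 : ℝ) < 2 * k - s₁ - s₂ := by
    have h1 : (s₁ : ℝ) < k := by exact_mod_cast hs₁k
    have h2 : (s₂ : ℝ) < k := by exact_mod_cast lt_trans hs₂s₁ hs₁k
    linarith
  have hnum : (0 : ℝ) < (s₁ : ℝ) - s₂ := by
    have : (s₂ : ℝ) < s₁ := by exact_mod_cast hs₂s₁
    linarith
  -- the key inner product identity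
  have key : ∀ B₁ ∈ 𝓑, ∀ B₂ ∈ 𝓑,
      ⟪v B₁, v B₂⟫ = (d : ℝ) ^ 2 * (2 * ((B₁ ∩ B₂).card : ℝ) - s₁ - s₂) / 2 := by
    intro B₁ h₁ B₂ h₂
    have hB₁ := hcard B₁ h₁
    have hB₂ := hcard B₂ h₂
    rw [PiLp.inner_apply]
    simp only [RCLike.inner_apply, conj_trivial]
    have hterm : ∀ j : Fin d, v B₁ j * v B₂ j =
        (r - k) * (r - k)
          + ((if j ∈ B₁ then (d : ℝ) * (r - k) else 0)
          + ((if j ∈ B₂ then (d : ℝ) * (r - k) else 0)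
          + (if j ∈ B₁ ∩ B₂ then (d : ℝ) * d else 0))) := by
      intro j
      rw [hv B₁ h₁ j, hv B₂ h₂ j]
      by_cases h1 : j ∈ B₁ <;> by_cases h2 : j ∈ B₂ <;>
        simp [h1, h2, Finset.mem_inter, ← hr_def] <;> ring
    rw [Finset.sum_congr rfl fun j _ => (mul_comm (v B₂ j) (v B₁ j)).trans (hterm j)]
    rw [Finset.sum_add_distrib, Finset.sum_add_distrib, Finset.sum_add_distrib]
    simp only [Finset.sum_ite_mem, Finset.univ_inter, Finset.sum_const,
      Finset.card_univ, Fintype.card_fin, nsmul_eq_mul, hB₁, hB₂]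
    linear_combination (d : ℝ) * hr2
  have part1 : ∀ B ∈ 𝓑, ⟪v B, v B⟫ = (d : ℝ) ^ 2 * (2 * k - s₁ - s₂) / 2 := by
    intro B hB
    have := key B hB B hB
    rw [Finset.inter_self, hcard B hB] at this
    exact this
  have part2 : ∀ B₁ ∈ 𝓑, ∀ B₂ ∈ 𝓑, B₁ ≠ B₂ →
      ((B₁ ∩ B₂).card = s₁ → ⟪v B₁, v B₂⟫ = (d : ℝ) ^ 2 * ((s₁ : ℝ) - s₂) / 2) ∧
      ((B₁ ∩ B₂).card = s₂ → ⟪v B₁, v B₂⟫ = -((d : ℝ) ^ 2 * ((s₁ : ℝ) - s₂) / 2)) := by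
    intro B₁ h₁ B₂ h₂ _
    constructor <;> intro hm <;> rw [key B₁ h₁ B₂ h₂, hm] <;> ring
  -- norms
  have hN : (0 : ℝ) ≤ (d : ℝ) ^ 2 * (2 * k - s₁ - s₂) / 2 := by positivity
  have hnorm : ∀ B ∈ 𝓑, ‖v B‖ = Real.sqrt ((d : ℝ) ^ 2 * (2 * k - s₁ - s₂) / 2) := by
    intro B hB
    rw [← Real.sqrt_sq (norm_nonneg (v B))]
    congr 1
    rw [← real_inner_self_eq_norm_sq]
    exact part1 B hB
  have hnormmul : ∀ B₁ ∈ 𝓑, ∀ B₂ ∈ 𝓑,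
      ‖v B₁‖ * ‖v B₂‖ = (d : ℝ) ^ 2 * (2 * k - s₁ - s₂) / 2 := by
    intro B₁ h₁ B₂ h₂
    rw [hnorm B₁ h₁, hnorm B₂ h₂, Real.mul_self_sqrt hN]
  have habs : ∀ B₁ ∈ 𝓑, ∀ B₂ ∈ 𝓑, B₁ ≠ B₂ →
      |⟪v B₁, v B₂⟫| = (d : ℝ) ^ 2 * ((s₁ : ℝ) - s₂) / 2 := by
    intro B₁ h₁ B₂ h₂ hne
    rcases hint B₁ h₁ B₂ h₂ hne with hm | hm
    · rw [(part2 B₁ h₁ B₂ h₂ hne).1 hm]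
      rw [abs_of_nonneg (by positivity)]
    · rw [(part2 B₁ h₁ B₂ h₂ hne).2 hm, abs_neg]
      rw [abs_of_nonneg (by positivity)]
  have part3 : ∀ B₁ ∈ 𝓑, ∀ B₂ ∈ 𝓑, B₁ ≠ B₂ →
      |⟪v B₁, v B₂⟫| =
        (((s₁ : ℝ) - s₂) / (2 * k - s₁ - s₂)) * ‖v B₁‖ * ‖v B₂‖ := by
    intro B₁ h₁ B₂ h₂ hne
    rw [habs B₁ h₁ B₂ h₂ hne, mul_assoc, hnormmul B₁ h₁ B₂ h₂]
    field_simp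
  refine ⟨part1, part2, part3, ?_⟩
  intro B₁ h₁ B₂ h₂ hne t hEq
  have hinner : ⟪v B₁, v B₂⟫ = t * ((d : ℝ) ^ 2 * (2 * k - s₁ - s₂) / 2) := by
    rw [hEq, real_inner_smul_left, part1 B₂ h₂]
  have h1 : |⟪v B₁, v B₂⟫| = (d : ℝ) ^ 2 * ((s₁ : ℝ) - s₂) / 2 := habs B₁ h₁ B₂ h₂ hne
  have hnn : ‖v B₁‖ = |t| * ‖v B₂‖ := by rw [hEq, norm_smul, Real.norm_eq_abs]
  have ht1 : |t| = 1 := by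
    have hp : ‖v B₂‖ = Real.sqrt ((d : ℝ) ^ 2 * (2 * k - s₁ - s₂) / 2) := hnorm B₂ h₂
    have hpos : (0 : ℝ) < ‖v B₂‖ := by
      rw [hp]
      positivity
    have := hnorm B₁ h₁
    rw [hnn, hp] at this
    have h2 : |t| * Real.sqrt ((d : ℝ) ^ 2 * (2 * k - s₁ - s₂) / 2)
        = 1 * Real.sqrt ((d : ℝ) ^ 2 * (2 * k - s₁ - s₂) / 2) := by
      rw [one_mul, this]
    exact mul_right_cancel₀ (by positivity) h2
  have : |⟪v B₁, v B₂⟫| = (d : ℝ) ^ 2 * (2 * k - s₁ - s₂) / 2 := by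
    rw [hinner, abs_mul, ht1, one_mul, abs_of_nonneg hN]
  rw [h1] at this
  have hlt : (d : ℝ) ^ 2 * ((s₁ : ℝ) - s₂) / 2 < (d : ℝ) ^ 2 * (2 * k - s₁ - s₂) / 2 := by
    have hd2 : (0 : ℝ) < (d : ℝ) ^ 2 := by positivity
    have h1 : (s₁ : ℝ) < k := by exact_mod_cast hs₁k
    nlinarith
  linarith [hlt, this.symm.le, this.le]
end

section
/- Let m ≥ 1 and s₂ ≥ 0 be integers, set s₁ = s₂ + m and k = m² + s₁, and assume s₁ divides (m² + m + s₁)²; set d = (m² + m + s₁)²/s₁ − 2m. Let P be a set of d points (identified with Fin d) and 𝓑 a finite set of k-element subsets of P such that any two distinct members intersect in exactly s₁ or exactly s₂ points. Define Δ = √(m/(2s₁)) · (m² − s₂) and Δ₂ = m(2m + d)/2, and define vectors in EuclideanSpace ℝ (Fin d): for B ∈ 𝓑, v(B)_j = (d − k) + Δ if j ∈ B and v(B)_j = −k + Δ if j ∉ B; for i ∈ P, v(i)_j = m(d−1) − √Δ₂ if j = i and v(i)_j = −m − √Δ₂ if j ≠ i. Then every one of these |𝓑| + d vectors has squared norm d²m(2m+1)/2;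 for distinct B₁, B₂ ∈ 𝓑, ⟪v(B₁), v(B₂)⟫ = d²m/2 if |B₁∩B₂| = s₁ and −d²m/2 if |B₁∩B₂| = s₂; for distinct i, j ∈ P, ⟪v(i), v(j)⟫ = d²m/2; and for B ∈ 𝓑, i ∈ P, ⟪v(B), v(i)⟫ = d²m/2 if i ∈ B and −d²m/2 if i ∉ B. Consequently the normalized vectors form an equiangular family in ℝ^d with common angle 1/(2m+1), in which {v(i) : i ∈ P} is an incoherent subset of size d. -/
open scoped RealInnerProductSpace
open Finset

lemma inner_ite {n : ℕ} (x y : EuclideanSpace ℝ (Fin n)) (B C : Finset (Fin n)) (a b a' b' : ℝ)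
    (hx : ∀ j, x j = if j ∈ B then a else b) (hy : ∀ j, y j = if j ∈ C then a' else b') :
    ⟪x, y⟫ = (n : ℝ) * (b * b') + (a - b) * b' * B.card + (a' - b') * b * C.card
      + (a - b) * (a' - b') * ((B ∩ C).card) := by
  have hxy : ⟪x, y⟫ = ∑ j : Fin n, x j * y j := by
    simp [PiLp.inner_apply, RCLike.inner_apply, mul_comm]
  rw [hxy]
  have h : ∀ j : Fin n, x j * y j
      = b * b' + (a - b) * b' * (if j ∈ B then (1:ℝ) else 0)
        + (a' - b') * b * (if j ∈ C then (1:ℝ) else 0)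
        + (a - b) * (a' - b') * (if j ∈ B ∩ C then (1:ℝ) else 0) := by
    intro j
    rw [hx j, hy j]
    by_cases h1 : j ∈ B <;> by_cases h2 : j ∈ C <;>
      simp [h1, h2, Finset.mem_inter] <;> ring
  rw [Finset.sum_congr rfl fun j _ => h j]
  rw [Finset.sum_add_distrib, Finset.sum_add_distrib, Finset.sum_add_distrib]
  simp only [mul_ite, mul_one, mul_zero]
  rw [Finset.sum_ite_mem, Finset.sum_ite_mem, Finset.sum_ite_mem,
    Finset.univ_inter, Finset.univ_inter, Finset.univ_inter,
    Finset.sum_const, Finset.sum_const, Finset.sum_const, Finset.sum_const,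
    Finset.card_univ, Fintype.card_fin]
  simp only [nsmul_eq_mul]
  ring

set_option maxHeartbeats 1000000 in
/-- **Theorem 6.7 (Gillespie).** Given a `(d, k; s₁, s₂)` block set with `s₁ = s₂ + m`,
`k = m² + s₁` and `d = (m² + m + s₁)²/s₁ - 2m`, the vectors `v(B)` (for blocks `B`)
together with `d` further vectors `w(i)` (for points `i`) span equiangular lines in `ℝ^d`
with common angle `1/(2m+1)`, in which the `w(i)` form an incoherent subset of size `d`. -/
theorem stmt_11 (m s₂ : ℕ) (hm : 1 ≤ m) (s₁ k d : ℕ)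
    (hs₁ : s₁ = s₂ + m) (hk : k = m ^ 2 + s₁)
    (hdvd : s₁ ∣ (m ^ 2 + m + s₁) ^ 2)
    (hd : d = (m ^ 2 + m + s₁) ^ 2 / s₁ - 2 * m)
    (𝓑 : Finset (Finset (Fin d)))
    (hcard : ∀ B ∈ 𝓑, B.card = k)
    (hint : ∀ B₁ ∈ 𝓑, ∀ B₂ ∈ 𝓑, B₁ ≠ B₂ →
      (B₁ ∩ B₂).card = s₁ ∨ (B₁ ∩ B₂).card = s₂)
    (v : Finset (Fin d) → EuclideanSpace ℝ (Fin d))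
    (hv : ∀ B ∈ 𝓑, ∀ j : Fin d,
      v B j = if j ∈ B
        then ((d : ℝ) - k) + Real.sqrt ((m : ℝ) / (2 * s₁)) * ((m : ℝ) ^ 2 - s₂)
        else -(k : ℝ) + Real.sqrt ((m : ℝ) / (2 * s₁)) * ((m : ℝ) ^ 2 - s₂))
    (w : Fin d → EuclideanSpace ℝ (Fin d))
    (hw : ∀ i j : Fin d,
      w i j = if j = i
        then (m : ℝ) * ((d : ℝ) - 1) - Real.sqrt ((m : ℝ) * (2 * m + d) / 2)
        else -(m : ℝ) - Real.sqrt ((m : ℝ) * (2 * m + d) / 2)) :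
    (∀ B ∈ 𝓑, ⟪v B, v B⟫ = (d : ℝ) ^ 2 * m * (2 * m + 1) / 2) ∧
    (∀ i : Fin d, ⟪w i, w i⟫ = (d : ℝ) ^ 2 * m * (2 * m + 1) / 2) ∧
    (∀ B₁ ∈ 𝓑, ∀ B₂ ∈ 𝓑, B₁ ≠ B₂ →
      ((B₁ ∩ B₂).card = s₁ → ⟪v B₁, v B₂⟫ = (d : ℝ) ^ 2 * m / 2) ∧
      ((B₁ ∩ B₂).card = s₂ → ⟪v B₁, v B₂⟫ = -((d : ℝ) ^ 2 * m / 2))) ∧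
    (∀ i j : Fin d, i ≠ j → ⟪w i, w j⟫ = (d : ℝ) ^ 2 * m / 2) ∧
    (∀ B ∈ 𝓑, ∀ i : Fin d,
      (i ∈ B → ⟪v B, w i⟫ = (d : ℝ) ^ 2 * m / 2) ∧
      (i ∉ B → ⟪v B, w i⟫ = -((d : ℝ) ^ 2 * m / 2))) ∧
    (∀ B₁ ∈ 𝓑, ∀ B₂ ∈ 𝓑, B₁ ≠ B₂ →
      |⟪v B₁, v B₂⟫| = (1 / (2 * (m : ℝ) + 1)) * ‖v B₁‖ * ‖v B₂‖) ∧
    (∀ i j : Fin d, i ≠ j →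
      |⟪w i, w j⟫| = (1 / (2 * (m : ℝ) + 1)) * ‖w i‖ * ‖w j‖) ∧
    (∀ B ∈ 𝓑, ∀ i : Fin d,
      |⟪v B, w i⟫| = (1 / (2 * (m : ℝ) + 1)) * ‖v B‖ * ‖w i‖) ∧
    Function.Injective w ∧
    (∀ i j l : Fin d, i ≠ j → i ≠ l → j ≠ l →
      0 < ⟪w i, w j⟫ * ⟪w i, w l⟫ * ⟪w j, w l⟫) := by
  subst hs₁; subst hk
  push_cast at hv hw
  -- natural-number groundwork
  have hm2 : m ≤ m ^ 2 := Nat.le_self_pow two_ne_zero m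
  have hspos : 0 < s₂ + m := by omega
  have hq : (m^2+m+(s₂+m)) ≤ (m^2+m+(s₂+m))^2/(s₂+m) := by
    rw [Nat.le_div_iff_mul_le hspos]
    nlinarith [hm2]
  have hd2m : d + 2*m = (m^2+m+(s₂+m))^2/(s₂+m) := by
    generalize hQ : (m^2+m+(s₂+m))^2/(s₂+m) = Q at hd hq; omega
  have hds : (s₂+m) * (d + 2*m) = (m^2+m+(s₂+m))^2 := by
    rw [hd2m]; exact Nat.mul_div_cancel' hdvd
  have hd1 : 1 ≤ d := by
    generalize hQ : (m^2+m+(s₂+m))^2/(s₂+m) = Q at hd hq; omega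
  -- real groundwork
  have hmR : (1:ℝ) ≤ (m:ℝ) := by exact_mod_cast hm
  have hdR : (1:ℝ) ≤ (d:ℝ) := by exact_mod_cast hd1
  have hs2R : (0:ℝ) ≤ (s₂:ℝ) := Nat.cast_nonneg s₂
  have hsRpos : (0:ℝ) < (s₂:ℝ) + m := by linarith
  have h2s : ((2:ℝ)*((s₂:ℝ)+m)) ≠ 0 := by positivity
  have h2ne : (2:ℝ) ≠ 0 := by norm_num
  have hE1 : ((s₂:ℝ)+m) * ((d:ℝ) + 2*m) = ((m:ℝ)^2 + m + ((s₂:ℝ)+m))^2 := by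
    exact_mod_cast hds
  set S := Real.sqrt ((m:ℝ) / (2 * ((s₂:ℝ)+m))) with hSdef
  set T := Real.sqrt ((m:ℝ) * (2 * m + d) / 2) with hTdef
  have hE2 : S*S*(2*((s₂:ℝ)+m)) = (m:ℝ) := by
    rw [hSdef, Real.mul_self_sqrt (by positivity)]; field_simp
  have hE3 : T*T*2 = (m:ℝ)*(2*(m:ℝ)+d) := by
    rw [hTdef, Real.mul_self_sqrt (by positivity)]; ring
  have hin : ((m:ℝ)/(2*((s₂:ℝ)+m))) * ((m:ℝ)*(2*m+d)/2)
      = ((m:ℝ)*((m:ℝ)^2+m+((s₂:ℝ)+m))/(2*((s₂:ℝ)+m)))^2 := by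
    rw [div_mul_div_comm, div_pow, div_eq_div_iff (by positivity) (by positivity)]
    linear_combination (4*(m:ℝ)^2*((s₂:ℝ)+m)) * hE1
  have hST : S*T = (m:ℝ)*((m:ℝ)^2+m+((s₂:ℝ)+m))/(2*((s₂:ℝ)+m)) := by
    rw [hSdef, hTdef, ← Real.sqrt_mul (by positivity), hin,
      Real.sqrt_sq (by positivity)]
  have hE4 : S*T*(2*((s₂:ℝ)+m)) = (m:ℝ)*((m:ℝ)^2+m+((s₂:ℝ)+m)) := by
    rw [hST]; field_simp
  have hw' : ∀ i : Fin d, ∀ j, w i j = if j ∈ ({i} : Finset (Fin d))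
      then (m:ℝ) * ((d:ℝ) - 1) - T else -(m:ℝ) - T := by
    intro i j; rw [hw i j]; simp only [Finset.mem_singleton]
  -- the core inner-product values
  have P1 : ∀ B ∈ 𝓑, ⟪v B, v B⟫ = (d : ℝ) ^ 2 * m * (2 * m + 1) / 2 := by
    intro B hB
    rw [inner_ite _ _ _ _ _ _ _ _ (hv B hB) (hv B hB), Finset.inter_self, hcard B hB]
    refine mul_left_cancel₀ h2s ?_
    push_cast
    linear_combination ((2*((s₂:ℝ)+(m:ℝ)) - (m:ℝ))*(d:ℝ))*hE1
      + ((d:ℝ)*((m:ℝ)^2-(s₂:ℝ))^2)*hE2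
  have P2 : ∀ i : Fin d, ⟪w i, w i⟫ = (d : ℝ) ^ 2 * m * (2 * m + 1) / 2 := by
    intro i
    rw [inner_ite _ _ _ _ _ _ _ _ (hw' i) (hw' i), Finset.inter_self,
      Finset.card_singleton]
    refine mul_left_cancel₀ h2ne ?_
    push_cast
    linear_combination (d:ℝ) * hE3
  have P3a : ∀ B₁ ∈ 𝓑, ∀ B₂ ∈ 𝓑, (B₁ ∩ B₂).card = s₂ + m →
      ⟪v B₁, v B₂⟫ = (d : ℝ) ^ 2 * m / 2 := by
    intro B₁ hB₁ B₂ hB₂ h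
    rw [inner_ite _ _ _ _ _ _ _ _ (hv B₁ hB₁) (hv B₂ hB₂), hcard B₁ hB₁,
      hcard B₂ hB₂, h]
    refine mul_left_cancel₀ h2s ?_
    push_cast
    linear_combination ((2*((s₂:ℝ)+(m:ℝ)) - (m:ℝ))*(d:ℝ))*hE1
      + ((d:ℝ)*((m:ℝ)^2-(s₂:ℝ))^2)*hE2
  have P3b : ∀ B₁ ∈ 𝓑, ∀ B₂ ∈ 𝓑, (B₁ ∩ B₂).card = s₂ →
      ⟪v B₁, v B₂⟫ = -((d : ℝ) ^ 2 * m / 2) := by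
    intro B₁ hB₁ B₂ hB₂ h
    rw [inner_ite _ _ _ _ _ _ _ _ (hv B₁ hB₁) (hv B₂ hB₂), hcard B₁ hB₁,
      hcard B₂ hB₂, h]
    refine mul_left_cancel₀ h2s ?_
    push_cast
    linear_combination ((2*((s₂:ℝ)+(m:ℝ)) - (m:ℝ))*(d:ℝ))*hE1
      + ((d:ℝ)*((m:ℝ)^2-(s₂:ℝ))^2)*hE2
  have P4 : ∀ i j : Fin d, i ≠ j → ⟪w i, w j⟫ = (d : ℝ) ^ 2 * m / 2 := by
    intro i j hij
    rw [inner_ite _ _ _ _ _ _ _ _ (hw' i) (hw' j), Finset.card_singleton,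
      Finset.card_singleton,
      Finset.singleton_inter_of_notMem (by simp [hij]), Finset.card_empty]
    refine mul_left_cancel₀ h2ne ?_
    push_cast
    linear_combination (d:ℝ) * hE3
  have P5a : ∀ B ∈ 𝓑, ∀ i : Fin d, i ∈ B → ⟪v B, w i⟫ = (d : ℝ) ^ 2 * m / 2 := by
    intro B hB i hiB
    rw [inner_ite _ _ _ _ _ _ _ _ (hv B hB) (hw' i), hcard B hB,
      Finset.card_singleton, Finset.inter_singleton_of_mem hiB,
      Finset.card_singleton]
    refine mul_left_cancel₀ h2s ?_
    push_cast
    linear_combination ((m:ℝ)*(d:ℝ))*hE1 - ((d:ℝ)*((m:ℝ)^2-(s₂:ℝ)))*hE4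
  have P5b : ∀ B ∈ 𝓑, ∀ i : Fin d, i ∉ B →
      ⟪v B, w i⟫ = -((d : ℝ) ^ 2 * m / 2) := by
    intro B hB i hiB
    have hBi : B ∩ ({i} : Finset (Fin d)) = ∅ := by
      rw [Finset.inter_comm, Finset.singleton_inter_of_notMem hiB]
    rw [inner_ite _ _ _ _ _ _ _ _ (hv B hB) (hw' i), hcard B hB,
      Finset.card_singleton, hBi, Finset.card_empty]
    refine mul_left_cancel₀ h2s ?_
    push_cast
    linear_combination ((m:ℝ)*(d:ℝ))*hE1 - ((d:ℝ)*((m:ℝ)^2-(s₂:ℝ)))*hE4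
  -- norms
  have hnval : (0:ℝ) ≤ (d:ℝ)^2*(m:ℝ)*(2*(m:ℝ)+1)/2 := by positivity
  have hnv : ∀ B ∈ 𝓑, ‖v B‖ = Real.sqrt ((d:ℝ)^2*(m:ℝ)*(2*(m:ℝ)+1)/2) := by
    intro B hB
    rw [norm_eq_sqrt_real_inner, P1 B hB]
  have hnw : ∀ i : Fin d, ‖w i‖ = Real.sqrt ((d:ℝ)^2*(m:ℝ)*(2*(m:ℝ)+1)/2) := by
    intro i
    rw [norm_eq_sqrt_real_inner, P2 i]
  have hsq : Real.sqrt ((d:ℝ)^2*(m:ℝ)*(2*(m:ℝ)+1)/2)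
      * Real.sqrt ((d:ℝ)^2*(m:ℝ)*(2*(m:ℝ)+1)/2) = (d:ℝ)^2*(m:ℝ)*(2*(m:ℝ)+1)/2 :=
    Real.mul_self_sqrt hnval
  have habs : (d:ℝ)^2*(m:ℝ)/2
      = 1/(2*(m:ℝ)+1) * ((d:ℝ)^2*(m:ℝ)*(2*(m:ℝ)+1)/2) := by
    have h2m1 : (2*(m:ℝ)+1) ≠ 0 := by positivity
    field_simp
  have P6 : ∀ B₁ ∈ 𝓑, ∀ B₂ ∈ 𝓑, B₁ ≠ B₂ →
      |⟪v B₁, v B₂⟫| = (1 / (2 * (m : ℝ) + 1)) * ‖v B₁‖ * ‖v B₂‖ := by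
    intro B₁ hB₁ B₂ hB₂ hne
    rw [hnv B₁ hB₁, hnv B₂ hB₂, mul_assoc, hsq, ← habs]
    rcases hint B₁ hB₁ B₂ hB₂ hne with h | h
    · rw [P3a B₁ hB₁ B₂ hB₂ h, abs_of_nonneg (by positivity)]
    · rw [P3b B₁ hB₁ B₂ hB₂ h, abs_neg, abs_of_nonneg (by positivity)]
  have P7 : ∀ i j : Fin d, i ≠ j →
      |⟪w i, w j⟫| = (1 / (2 * (m : ℝ) + 1)) * ‖w i‖ * ‖w j‖ := by
    intro i j hij
    rw [hnw i, hnw j, mul_assoc, hsq, ← habs, P4 i j hij,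
      abs_of_nonneg (by positivity)]
  have P8 : ∀ B ∈ 𝓑, ∀ i : Fin d,
      |⟪v B, w i⟫| = (1 / (2 * (m : ℝ) + 1)) * ‖v B‖ * ‖w i‖ := by
    intro B hB i
    rw [hnv B hB, hnw i, mul_assoc, hsq, ← habs]
    by_cases hiB : i ∈ B
    · rw [P5a B hB i hiB, abs_of_nonneg (by positivity)]
    · rw [P5b B hB i hiB, abs_neg, abs_of_nonneg (by positivity)]
  have P9 : Function.Injective w := by
    intro i j hij
    by_contra hne
    have h1 : w i i = w j i := by rw [hij]
    rw [hw i i, hw j i, if_pos rfl, if_neg hne] at h1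
    have hmd : (1:ℝ) ≤ (m:ℝ)*(d:ℝ) := by nlinarith [hmR, hdR]
    linarith [h1, hmd]
  have P10 : ∀ i j l : Fin d, i ≠ j → i ≠ l → j ≠ l →
      0 < ⟪w i, w j⟫ * ⟪w i, w l⟫ * ⟪w j, w l⟫ := by
    intro i j l h1 h2 h3
    have hpos : (0:ℝ) < (d:ℝ)^2*(m:ℝ)/2 := by nlinarith [hmR, hdR]
    rw [P4 i j h1, P4 i l h2, P4 j l h3]
    exact mul_pos (mul_pos hpos hpos) hpos
  exact ⟨P1, P2,
    fun B₁ h₁ B₂ h₂ _ => ⟨P3a B₁ h₁ B₂ h₂, P3b B₁ h₁ B₂ h₂⟩,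
    P4,
    fun B hB i => ⟨P5a B hB i, P5b B hB i⟩,
    P6, P7, P8, P9, P10⟩
end
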